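/- arXiv:1312.3428 — 4 statements merged into one kernel-verified Lean document; each statement's English description precedes it below -/
import Mathlib

section
/- Let M be a matroid on E = {1,…,d}, let c ∈ E be an element that is not a coloop of M, and number the bases B_1,…,B_n of M so that c ∉ B_j for j ∈ [γ] and c ∈ B_j for j ∈ [n]∖[γ]. If F is a homogeneous generating set of binomials for the toric ideal J_M ⊆ K[x_1,…,x_n], then F̃ is a generating set for the toric ideal J_{D̃_M} ⊆ K[x¹_1,…,x¹_n,x²_1,…,x²_γ]. -/
open MvPolynomial


section Enumerated

/-- The toric map `π_M` of an enumerated family of bases `B_1, …, B_n` of a matroid on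
`{1, …, d}` : the variable `x_j` is sent to `∏_{l ∈ B_j} s_l`. -/
noncomputable def enumToricMap (K : Type) [Field K] {d n : ℕ} (B : Fin n → Finset (Fin d)) :
    MvPolynomial (Fin n) K →ₐ[K] MvPolynomial (Fin d) K :=
  aeval fun j => ∏ l ∈ B j, X l

/-- The toric ideal `J_M = ker π_M` of an enumerated family of bases. -/
noncomputable def enumToricIdeal (K : Type) [Field K] {d n : ℕ} (B : Fin n → Finset (Fin d)) :
    Ideal (MvPolynomial (Fin n) K) :=
  RingHom.ker (enumToricMap K B).toRingHom

/-- The map `π̃_M` associated to the matrix `D̃_M`: the variable `Sum.inl j` is `x¹_j`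
(sent to `S^{b_j}·w_1`) and `Sum.inr j` is `x²_j` (sent to `S^{b_j}·w_2`); the two extra
variables `w_1, w_2` of the target are `X (Sum.inr 0)` and `X (Sum.inr 1)`. -/
noncomputable def tildeToricMap (K : Type) [Field K] {d n γ : ℕ} (hγ : γ ≤ n)
    (B : Fin n → Finset (Fin d)) :
    MvPolynomial (Fin n ⊕ Fin γ) K →ₐ[K] MvPolynomial (Fin d ⊕ Fin 2) K :=
  aeval (Sum.elim
    (fun j => (∏ l ∈ B j, X (Sum.inl l)) * X (Sum.inr 0))
    (fun j => (∏ l ∈ B (Fin.castLE hγ j), X (Sum.inl l)) * X (Sum.inr 1)))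

/-- The variable `x^i_j` for a superscript `i ∈ {1,2}` (encoded as `Fin 2`, with `0 ↔ 1` and
`1 ↔ 2`) and `j ∈ [γ]`. -/
def xSup {n γ : ℕ} (hγ : γ ≤ n) (i : Fin 2) (a : Fin γ) : Fin n ⊕ Fin γ :=
  if i = 0 then Sum.inl (Fin.castLE hγ a) else Sum.inr a

/-- `f` is a binomial of the standard form
`∏_{l<u} x_{j_l} · ∏_{l<v} x_{k_l} - ∏_{l<u} x_{j'_l} · ∏_{l<v} x_{k'_l}`,
where the `j`'s are in `[γ]` and the `k`'s are in `[n] ∖ [γ]`. -/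
def IsStdBinomial {K : Type} [Field K] {n : ℕ} (γ : ℕ) (hγ : γ ≤ n)
    (f : MvPolynomial (Fin n) K) : Prop :=
  ∃ (u v : ℕ) (j j' : Fin u → Fin γ) (k k' : Fin v → Fin n),
    (∀ l, γ ≤ (k l : ℕ)) ∧ (∀ l, γ ≤ (k' l : ℕ)) ∧
    f = (∏ l, X (Fin.castLE hγ (j l))) * (∏ l, X (k l)) -
        (∏ l, X (Fin.castLE hγ (j' l))) * (∏ l, X (k' l))

/-- The lifted set `F̃ = {f^I : f ∈ F, I ∈ {1,2}^{u_f}} ∪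
{x¹_{j₂}x²_{j₁} - x¹_{j₁}x²_{j₂} : 1 ≤ j₁ < j₂ ≤ γ}`. -/
def liftedSet (K : Type) [Field K] {n : ℕ} {γ : ℕ} (hγ : γ ≤ n)
    (F : Set (MvPolynomial (Fin n) K)) : Set (MvPolynomial (Fin n ⊕ Fin γ) K) :=
  {g | ∃ (u v : ℕ) (j j' : Fin u → Fin γ) (k k' : Fin v → Fin n) (I : Fin u → Fin 2),
      (∀ l, γ ≤ (k l : ℕ)) ∧ (∀ l, γ ≤ (k' l : ℕ)) ∧
      ((∏ l, X (Fin.castLE hγ (j l))) * (∏ l, X (k l)) -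
        (∏ l, X (Fin.castLE hγ (j' l))) * (∏ l, X (k' l)) ∈ F) ∧
      g = (∏ l, X (xSup hγ (I l) (j l))) * (∏ l, X (Sum.inl (k l))) -
          (∏ l, X (xSup hγ (I l) (j' l))) * (∏ l, X (Sum.inl (k' l)))}
  ∪ {g | ∃ j₁ j₂ : Fin γ, j₁ < j₂ ∧
      g = X (Sum.inl (Fin.castLE hγ j₂)) * X (Sum.inr j₁) -
          X (Sum.inl (Fin.castLE hγ j₁)) * X (Sum.inr j₂)}

end Enumerated



open MvPolynomial

section Helpers

variable {K : Type} [Field K]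

lemma monomial_prod {σ ι : Type} (s : Finset ι) (m : ι → (σ →₀ ℕ)) :
    (∏ l ∈ s, monomial (m l) (1 : K)) = monomial (∑ l ∈ s, m l) 1 := by
  induction s using Finset.cons_induction with
  | empty => simp
  | cons a s ha ih => rw [Finset.prod_cons, ih, Finset.sum_cons, monomial_mul, one_mul]

lemma prod_X_eq {σ ι : Type} (s : Finset ι) (t : ι → σ) :
    (∏ l ∈ s, (X (t l) : MvPolynomial σ K)) =
      monomial (∑ l ∈ s, Finsupp.single (t l) 1) 1 := by
  rw [← monomial_prod]
  exact Finset.prod_congr rfl fun l _ => by rw [← X_pow_eq_monomial, pow_one]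

lemma X_mul_X_eq {σ : Type} (x y : σ) :
    (X x : MvPolynomial σ K) * X y =
      monomial (Finsupp.single x 1 + Finsupp.single y 1) 1 := by
  have hx : (X x : MvPolynomial σ K) = monomial (Finsupp.single x 1) 1 := by
    rw [← X_pow_eq_monomial, pow_one]
  have hy : (X y : MvPolynomial σ K) = monomial (Finsupp.single y 1) 1 := by
    rw [← X_pow_eq_monomial, pow_one]
  rw [hx, hy, monomial_mul, one_mul]

/-- The "engine": if all fiber sums of coefficients (along `q`) vanish, the polynomial lies
in the ideal generated by `q`-fiberwise binomials. -/
lemma engine {σ Γ : Type} [DecidableEq σ] [DecidableEq Γ] (q : (σ →₀ ℕ) → Γ) (S : Finset (σ →₀ ℕ)) :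
    ∀ (N : ℕ) (f : MvPolynomial σ K), f.support.card ≤ N → f.support ⊆ S →
    (∀ t : Γ, ∑ a ∈ S, (if q a = t then coeff a f else 0) = 0) →
    f ∈ Ideal.span {g | ∃ a b, q a = q b ∧ g = monomial a 1 - monomial b 1} := by
  intro N
  induction N with
  | zero =>
    intro f hcard _ _
    have : f.support = ∅ := Finset.card_eq_zero.mp (le_antisymm hcard (Nat.zero_le _))
    rw [MvPolynomial.support_eq_empty.mp this]
    exact zero_mem _
  | succ N ih =>
    intro f hcard hsub hfib
    by_cases hf0 : f = 0
    · rw [hf0]; exact zero_mem _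
    obtain ⟨a₀, ha₀⟩ := (MvPolynomial.support_nonempty.mpr hf0)
    have ha₀S : a₀ ∈ S := hsub ha₀
    have hsum := hfib (q a₀)
    have hex : ∃ a₁ ∈ S, a₁ ≠ a₀ ∧ q a₁ = q a₀ ∧ coeff a₁ f ≠ 0 := by
      by_contra hno
      push_neg at hno
      have heq : ∑ a ∈ S, (if q a = q a₀ then coeff a f else 0) = coeff a₀ f := by
        refine Finset.sum_eq_single_of_mem a₀ ha₀S (fun b hb hne => ?_) |>.trans (if_pos rfl)
        by_cases hqb : q b = q a₀
        · rw [if_pos hqb, hno b hb hne hqb]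
        · rw [if_neg hqb]
      rw [heq] at hsum
      exact (MvPolynomial.mem_support_iff.mp ha₀) hsum
    obtain ⟨a₁, ha₁S, hne, hq, hc₁⟩ := hex
    set c := coeff a₀ f with hcdef
    set g := f - c • (monomial a₀ 1 - monomial a₁ 1) with hg
    have hcoeff : ∀ a, coeff a g =
        coeff a f - (if a₀ = a then c else 0) + (if a₁ = a then c else 0) := by
      intro a
      rw [hg, coeff_sub, coeff_smul, coeff_sub, coeff_monomial, coeff_monomial]
      rw [smul_sub, smul_ite, smul_ite]
      simp only [smul_eq_mul, mul_one, mul_zero]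
      ring
    have hsuppg : g.support ⊆ f.support.erase a₀ := by
      intro a ha
      rw [MvPolynomial.mem_support_iff] at ha
      rw [Finset.mem_erase, MvPolynomial.mem_support_iff]
      have hna₀ : a ≠ a₀ := by
        rintro rfl
        rw [hcoeff a, if_pos rfl, if_neg (fun h => hne h)] at ha
        simp [hcdef] at ha
      refine ⟨hna₀, fun h0 => ?_⟩
      have hna₁ : a ≠ a₁ := fun h => hc₁ (h ▸ h0)
      rw [hcoeff a, h0, if_neg (fun h => hna₀ h.symm), if_neg (fun h => hna₁ h.symm)] at ha
      simp at ha
    have hcardg : g.support.card ≤ N := by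
      have h1 := Finset.card_le_card hsuppg
      have h2 := Finset.card_erase_of_mem ha₀
      omega
    have hsubg : g.support ⊆ S := hsuppg.trans ((Finset.erase_subset _ _).trans hsub)
    have hfibg : ∀ t : Γ, ∑ a ∈ S, (if q a = t then coeff a g else 0) = 0 := by
      intro t
      have hsplit : ∀ a, (if q a = t then coeff a g else 0) =
          (if q a = t then coeff a f else 0)
          - (if q a = t then (if a₀ = a then c else 0) else 0)
          + (if q a = t then (if a₁ = a then c else 0) else 0) := by
        intro a
        rw [hcoeff a]
        split_ifs <;> simp
      simp only [hsplit]
      rw [Finset.sum_add_distrib, Finset.sum_sub_distrib, hfib t]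
      have e₀ : ∑ a ∈ S, (if q a = t then (if a₀ = a then c else 0) else 0)
          = (if q a₀ = t then c else 0) := by
        refine (Finset.sum_eq_single_of_mem a₀ ha₀S (fun b hb hne' => ?_)).trans ?_
        · by_cases hqb : q b = t
          · rw [if_pos hqb, if_neg (fun h => hne' h.symm)]
          · rw [if_neg hqb]
        · simp
      have e₁ : ∑ a ∈ S, (if q a = t then (if a₁ = a then c else 0) else 0)
          = (if q a₁ = t then c else 0) := by
        refine (Finset.sum_eq_single_of_mem a₁ ha₁S (fun b hb hne' => ?_)).trans ?_
        · by_cases hqb : q b = t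
          · rw [if_pos hqb, if_neg (fun h => hne' h.symm)]
          · rw [if_neg hqb]
        · simp
      rw [e₀, e₁, hq]
      ring
    have hmemg := ih g hcardg hsubg hfibg
    have : f = g + c • (monomial a₀ 1 - monomial a₁ 1) := by rw [hg]; ring
    rw [this]
    refine Submodule.add_mem _ hmemg ?_
    rw [smul_eq_C_mul]
    exact Ideal.mul_mem_left _ _ (Ideal.subset_span ⟨a₀, a₁, hq.symm, rfl⟩)

end Helpers
section FlatTc

variable {n γ : ℕ}

/-- Forgetting superscripts on exponent vectors. -/
noncomputable def flatm (hγ : γ ≤ n) (a : (Fin n ⊕ Fin γ) →₀ ℕ) : Fin n →₀ ℕ :=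
  Finsupp.mapDomain (Sum.elim id (Fin.castLE hγ)) a

/-- Number of occurrences of superscript-2 variables. -/
def tcount (a : (Fin n ⊕ Fin γ) →₀ ℕ) : ℕ := ∑ j : Fin γ, a (Sum.inr j)

/-- Total degree in the first `γ` variables. -/
def gsum (hγ : γ ≤ n) (α : Fin n →₀ ℕ) : ℕ := ∑ j : Fin γ, α (Fin.castLE hγ j)

variable (hγ : γ ≤ n)

lemma flatm_add (a b : (Fin n ⊕ Fin γ) →₀ ℕ) :
    flatm hγ (a + b) = flatm hγ a + flatm hγ b := Finsupp.mapDomain_add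

lemma flatm_single_inl (j : Fin n) (c : ℕ) :
    flatm hγ (Finsupp.single (Sum.inl j) c) = Finsupp.single j c := by
  rw [flatm, Finsupp.mapDomain_single]; rfl

lemma flatm_single_inr (j : Fin γ) (c : ℕ) :
    flatm hγ (Finsupp.single (Sum.inr j) c) = Finsupp.single (Fin.castLE hγ j) c := by
  rw [flatm, Finsupp.mapDomain_single]; rfl

lemma flatm_finset_sum {ι : Type} (s : Finset ι) (v : ι → (Fin n ⊕ Fin γ) →₀ ℕ) :
    flatm hγ (∑ i ∈ s, v i) = ∑ i ∈ s, flatm hγ (v i) := Finsupp.mapDomain_finset_sum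

lemma flatm_apply (a : (Fin n ⊕ Fin γ) →₀ ℕ) (m : Fin n) :
    flatm hγ a m = a (Sum.inl m) + ∑ j : Fin γ,
      (if Fin.castLE hγ j = m then a (Sum.inr j) else 0) := by
  conv_lhs => rw [← Finsupp.univ_sum_single a]
  rw [flatm, Finsupp.mapDomain_finset_sum]
  rw [Finsupp.finset_sum_apply]
  simp only [Finsupp.mapDomain_single, Finsupp.single_apply]
  rw [Fintype.sum_sum_type]
  simp only [Sum.elim_inl, Sum.elim_inr, id_eq]
  congr 1
  exact (Finset.sum_eq_single m (fun b _ hb => if_neg hb) (by simp)).trans (if_pos rfl)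

lemma flatm_apply_cast (a : (Fin n ⊕ Fin γ) →₀ ℕ) (j : Fin γ) :
    flatm hγ a (Fin.castLE hγ j) = a (Sum.inl (Fin.castLE hγ j)) + a (Sum.inr j) := by
  rw [flatm_apply]
  congr 1
  have he : ∀ j' : Fin γ, (Fin.castLE hγ j' = Fin.castLE hγ j) = (j' = j) := fun j' =>
    propext ⟨fun h => Fin.castLE_injective hγ h, fun h => by rw [h]⟩
  simp only [he]
  rw [Finset.sum_ite_eq' Finset.univ j (fun s => a (Sum.inr s))]
  simp

lemma flatm_apply_high (a : (Fin n ⊕ Fin γ) →₀ ℕ) (m : Fin n) (hm : γ ≤ (m : ℕ)) :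
    flatm hγ a m = a (Sum.inl m) := by
  rw [flatm_apply]
  have : ∀ j : Fin γ, (if Fin.castLE hγ j = m then a (Sum.inr j) else 0) = 0 := by
    intro j
    rw [if_neg]
    intro h
    have : (j : ℕ) = (m : ℕ) := congrArg Fin.val h
    omega
  simp [this]

lemma tcount_add (a b : (Fin n ⊕ Fin γ) →₀ ℕ) : tcount (a + b) = tcount a + tcount b := by
  simp [tcount, Finsupp.add_apply, Finset.sum_add_distrib]

lemma tcount_single_inl (j : Fin n) (c : ℕ) :
    tcount (Finsupp.single (Sum.inl j : Fin n ⊕ Fin γ) c) = 0 := by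
  simp [tcount, Finsupp.single_apply]

lemma tcount_single_inr (j : Fin γ) (c : ℕ) :
    tcount (Finsupp.single (Sum.inr j : Fin n ⊕ Fin γ) c) = c := by
  simp [tcount, Finsupp.single_apply, Sum.inr.injEq, Finset.sum_ite_eq]

lemma tcount_finset_sum {ι : Type} (s : Finset ι) (v : ι → (Fin n ⊕ Fin γ) →₀ ℕ) :
    tcount (∑ i ∈ s, v i) = ∑ i ∈ s, tcount (v i) := by
  induction s using Finset.cons_induction with
  | empty => simp [tcount]
  | cons a s ha ih => rw [Finset.sum_cons, Finset.sum_cons, tcount_add, ih]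

lemma gsum_add (a b : Fin n →₀ ℕ) : gsum hγ (a + b) = gsum hγ a + gsum hγ b := by
  simp [gsum, Finsupp.add_apply, Finset.sum_add_distrib]

lemma gsum_single_cast (j : Fin γ) (c : ℕ) :
    gsum hγ (Finsupp.single (Fin.castLE hγ j) c) = c := by
  simp only [gsum, Finsupp.single_apply]
  have he : ∀ j' : Fin γ, (Fin.castLE hγ j = Fin.castLE hγ j') = (j = j') := fun j' =>
    propext ⟨fun h => Fin.castLE_injective hγ h, fun h => by rw [h]⟩
  simp [he, Finset.sum_ite_eq]

lemma gsum_single_high (k : Fin n) (hk : γ ≤ (k : ℕ)) (c : ℕ) :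
    gsum hγ (Finsupp.single k c) = 0 := by
  simp only [gsum, Finsupp.single_apply]
  refine Finset.sum_eq_zero fun j _ => ?_
  rw [if_neg]
  intro h
  have : (k : ℕ) = ((Fin.castLE hγ j : Fin n) : ℕ) := congrArg Fin.val h
  simp at this
  omega

lemma gsum_finset_sum {ι : Type} (s : Finset ι) (v : ι → Fin n →₀ ℕ) :
    gsum hγ (∑ i ∈ s, v i) = ∑ i ∈ s, gsum hγ (v i) := by
  induction s using Finset.cons_induction with
  | empty => simp [gsum]
  | cons a s ha ih => rw [Finset.sum_cons, Finset.sum_cons, gsum_add, ih]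

lemma gsum_flatm (a : (Fin n ⊕ Fin γ) →₀ ℕ) :
    gsum hγ (flatm hγ a) = (∑ j : Fin γ, a (Sum.inl (Fin.castLE hγ j))) + tcount a := by
  rw [gsum]
  simp only [flatm_apply_cast]
  rw [Finset.sum_add_distrib]
  rfl

lemma tcount_le_gsum_flatm (a : (Fin n ⊕ Fin γ) →₀ ℕ) :
    tcount a ≤ gsum hγ (flatm hγ a) := by
  rw [gsum_flatm]
  omega

/-- If `x ≤ a` and they have the same flattening, they are equal. -/
lemma flatm_le_eq (x a : (Fin n ⊕ Fin γ) →₀ ℕ) (hle : x ≤ a)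
    (hf : flatm hγ x = flatm hγ a) : x = a := by
  rw [Finsupp.le_def] at hle
  ext s
  cases s with
  | inl m =>
    by_cases hm : (m : ℕ) < γ
    · have hc : Fin.castLE hγ ⟨(m : ℕ), hm⟩ = m := by
        apply Fin.ext; rfl
      have h1 := flatm_apply_cast hγ x ⟨(m : ℕ), hm⟩
      have h2 := flatm_apply_cast hγ a ⟨(m : ℕ), hm⟩
      rw [hc] at h1 h2
      have := hle (Sum.inl m)
      have := hle (Sum.inr ⟨(m : ℕ), hm⟩)
      have hfm : flatm hγ x m = flatm hγ a m := by rw [hf]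
      omega
    · have h1 := flatm_apply_high hγ x m (le_of_not_gt hm)
      have h2 := flatm_apply_high hγ a m (le_of_not_gt hm)
      have hfm : flatm hγ x m = flatm hγ a m := by rw [hf]
      omega
  | inr j =>
    have h1 := flatm_apply_cast hγ x j
    have h2 := flatm_apply_cast hγ a j
    have := hle (Sum.inl (Fin.castLE hγ j))
    have := hle (Sum.inr j)
    have hfm : flatm hγ x (Fin.castLE hγ j) = flatm hγ a (Fin.castLE hγ j) := by rw [hf]
    omega

end FlatTc
section Sim

open MvPolynomial

variable {K : Type} [Field K] {n γ : ℕ} (hγ : γ ≤ n) (F : Set (MvPolynomial (Fin n) K))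

/-- Connectivity by moves from the lifted set: the corresponding binomial lies in its span. -/
def Sim (a b : (Fin n ⊕ Fin γ) →₀ ℕ) : Prop :=
  (monomial a 1 - monomial b 1 : MvPolynomial (Fin n ⊕ Fin γ) K) ∈
    Ideal.span (liftedSet K hγ F)

lemma Sim.refl' (a : (Fin n ⊕ Fin γ) →₀ ℕ) : Sim hγ F a a := by
  unfold Sim
  rw [sub_self]
  exact zero_mem _

lemma Sim.symm' {a b : (Fin n ⊕ Fin γ) →₀ ℕ} (h : Sim hγ F a b) : Sim hγ F b a := by
  unfold Sim at *
  rw [show (monomial b 1 - monomial a 1 : MvPolynomial (Fin n ⊕ Fin γ) K)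
    = -(monomial a 1 - monomial b 1) by ring]
  exact neg_mem h

lemma Sim.trans' {a b c : (Fin n ⊕ Fin γ) →₀ ℕ} (h1 : Sim hγ F a b) (h2 : Sim hγ F b c) :
    Sim hγ F a c := by
  unfold Sim at *
  rw [show (monomial a 1 - monomial c 1 : MvPolynomial (Fin n ⊕ Fin γ) K)
    = (monomial a 1 - monomial b 1) + (monomial b 1 - monomial c 1) by ring]
  exact add_mem h1 h2

lemma Sim.translate {a b : (Fin n ⊕ Fin γ) →₀ ℕ} (c : (Fin n ⊕ Fin γ) →₀ ℕ)
    (h : Sim hγ F a b) : Sim hγ F (c + a) (c + b) := by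
  unfold Sim at *
  rw [show (monomial (c + a) 1 - monomial (c + b) 1 : MvPolynomial (Fin n ⊕ Fin γ) K)
    = monomial c 1 * (monomial a 1 - monomial b 1) by
      rw [mul_sub, monomial_mul, monomial_mul, one_mul]]
  exact Ideal.mul_mem_left _ _ h

lemma Sim.translate_right {a b : (Fin n ⊕ Fin γ) →₀ ℕ} (c : (Fin n ⊕ Fin γ) →₀ ℕ)
    (h : Sim hγ F a b) : Sim hγ F (a + c) (b + c) := by
  rw [add_comm a c, add_comm b c]
  exact Sim.translate hγ F c h

lemma Sim_exchange {j₁ j₂ : Fin γ} (hne : j₁ ≠ j₂) :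
    Sim hγ F (Finsupp.single (Sum.inl (Fin.castLE hγ j₁)) 1 + Finsupp.single (Sum.inr j₂) 1)
      (Finsupp.single (Sum.inl (Fin.castLE hγ j₂)) 1 + Finsupp.single (Sum.inr j₁) 1) := by
  unfold Sim
  rcases lt_or_gt_of_ne hne with h | h
  · have hg : (X (Sum.inl (Fin.castLE hγ j₂)) * X (Sum.inr j₁)
        - X (Sum.inl (Fin.castLE hγ j₁)) * X (Sum.inr j₂) : MvPolynomial (Fin n ⊕ Fin γ) K)
        ∈ liftedSet K hγ F := Or.inr ⟨j₁, j₂, h, rfl⟩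
    rw [X_mul_X_eq, X_mul_X_eq] at hg
    have := neg_mem (Ideal.subset_span hg)
    rw [neg_sub] at this
    exact this
  · have hg : (X (Sum.inl (Fin.castLE hγ j₁)) * X (Sum.inr j₂)
        - X (Sum.inl (Fin.castLE hγ j₂)) * X (Sum.inr j₁) : MvPolynomial (Fin n ⊕ Fin γ) K)
        ∈ liftedSet K hγ F := Or.inr ⟨j₂, j₁, h, rfl⟩
    rw [X_mul_X_eq, X_mul_X_eq] at hg
    exact Ideal.subset_span hg

lemma eq_of_inr_eq {a b : (Fin n ⊕ Fin γ) →₀ ℕ}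
    (hab : ∀ j : Fin γ, a (Sum.inr j) = b (Sum.inr j))
    (hf : flatm hγ a = flatm hγ b) : a = b := by
  ext s
  cases s with
  | inl m =>
    by_cases hm : (m : ℕ) < γ
    · have hc : Fin.castLE hγ ⟨(m : ℕ), hm⟩ = m := by apply Fin.ext; rfl
      have h1 := flatm_apply_cast hγ a ⟨(m : ℕ), hm⟩
      have h2 := flatm_apply_cast hγ b ⟨(m : ℕ), hm⟩
      rw [hc] at h1 h2
      have hfm : flatm hγ a m = flatm hγ b m := by rw [hf]
      have := hab ⟨(m : ℕ), hm⟩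
      omega
    · have h1 := flatm_apply_high hγ a m (le_of_not_gt hm)
      have h2 := flatm_apply_high hγ b m (le_of_not_gt hm)
      have hfm : flatm hγ a m = flatm hγ b m := by rw [hf]
      omega
  | inr j => exact hab j

lemma swap_step {a b : (Fin n ⊕ Fin γ) →₀ ℕ} (hf : flatm hγ a = flatm hγ b)
    (ht : tcount a = tcount b) {j₂ : Fin γ} (hj₂ : b (Sum.inr j₂) < a (Sum.inr j₂)) :
    ∃ (a' : (Fin n ⊕ Fin γ) →₀ ℕ) (j₁ : Fin γ), j₁ ≠ j₂ ∧
      a (Sum.inr j₁) < b (Sum.inr j₁) ∧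
      a' (Sum.inr j₁) = a (Sum.inr j₁) + 1 ∧
      a' (Sum.inr j₂) + 1 = a (Sum.inr j₂) ∧
      (∀ j : Fin γ, j ≠ j₁ → j ≠ j₂ → a' (Sum.inr j) = a (Sum.inr j)) ∧
      Sim hγ F a a' ∧ flatm hγ a' = flatm hγ a ∧ tcount a' = tcount a := by
  -- find j₁ with a (inr j₁) < b (inr j₁)
  have hex : ∃ j₁ : Fin γ, a (Sum.inr j₁) < b (Sum.inr j₁) := by
    by_contra hno
    push_neg at hno
    have : tcount b < tcount a := by
      unfold tcount
      exact Finset.sum_lt_sum (fun i _ => hno i) ⟨j₂, Finset.mem_univ _, hj₂⟩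
    omega
  obtain ⟨j₁, hj₁⟩ := hex
  have hne : j₁ ≠ j₂ := fun h => by rw [h] at hj₁; omega
  have hinl : 1 ≤ a (Sum.inl (Fin.castLE hγ j₁)) := by
    have h1 := flatm_apply_cast hγ a j₁
    have h2 := flatm_apply_cast hγ b j₁
    have hfm : flatm hγ a (Fin.castLE hγ j₁) = flatm hγ b (Fin.castLE hγ j₁) := by rw [hf]
    omega
  set s : (Fin n ⊕ Fin γ) →₀ ℕ :=
    Finsupp.single (Sum.inl (Fin.castLE hγ j₁)) 1 + Finsupp.single (Sum.inr j₂) 1 with hs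
  set s' : (Fin n ⊕ Fin γ) →₀ ℕ :=
    Finsupp.single (Sum.inl (Fin.castLE hγ j₂)) 1 + Finsupp.single (Sum.inr j₁) 1 with hs'
  have hle : s ≤ a := by
    rw [Finsupp.le_def]
    intro x
    rw [hs, Finsupp.add_apply, Finsupp.single_apply, Finsupp.single_apply]
    by_cases h1 : (Sum.inl (Fin.castLE hγ j₁) : Fin n ⊕ Fin γ) = x
    · rw [if_pos h1, if_neg (by rw [← h1]; simp)]
      rw [← h1]
      omega
    · rw [if_neg h1]
      by_cases h2 : (Sum.inr j₂ : Fin n ⊕ Fin γ) = x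
      · rw [if_pos h2, ← h2]
        omega
      · rw [if_neg h2]
        omega
  obtain ⟨δ, hδ⟩ := exists_add_of_le hle
  have key : ∀ x, (s' + δ) x + s x = a x + s' x := by
    intro x
    rw [hδ]
    simp only [Finsupp.add_apply]
    omega
  have hs_inr : ∀ j : Fin γ, s (Sum.inr j) = if j₂ = j then 1 else 0 := by
    intro j
    simp [hs, Finsupp.add_apply, Finsupp.single_apply]
  have hs'_inr : ∀ j : Fin γ, s' (Sum.inr j) = if j₁ = j then 1 else 0 := by
    intro j
    simp [hs', Finsupp.add_apply, Finsupp.single_apply]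
  refine ⟨s' + δ, j₁, hne, hj₁, ?_, ?_, ?_, ?_, ?_, ?_⟩
  · have := key (Sum.inr j₁)
    rw [hs_inr, hs'_inr, if_neg (fun h => hne h.symm), if_pos rfl] at this
    omega
  · have := key (Sum.inr j₂)
    rw [hs_inr, hs'_inr, if_pos rfl, if_neg (fun h => hne h)] at this
    omega
  · intro j hj1 hj2
    have := key (Sum.inr j)
    rw [hs_inr, hs'_inr, if_neg (fun h => hj2 h.symm), if_neg (fun h => hj1 h.symm)] at this
    omega
  · rw [hδ]
    exact Sim.translate_right hγ F δ (Sim_exchange hγ F hne)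
  · rw [hδ]
    simp only [hs, hs', flatm_add, flatm_single_inl, flatm_single_inr]
    abel
  · rw [hδ]
    simp only [hs, hs', tcount_add, tcount_single_inl, tcount_single_inr]

/-- C1: two exponent vectors with the same flattening and the same number of
superscript-2 occurrences are connected. -/
lemma swap_connect {a b : (Fin n ⊕ Fin γ) →₀ ℕ} (hf : flatm hγ a = flatm hγ b)
    (ht : tcount a = tcount b) : Sim hγ F a b := by
  set D := ∑ j : Fin γ, ((a (Sum.inr j) : ℤ) - b (Sum.inr j)).natAbs with hD
  clear_value D
  have hD' : ∑ j : Fin γ, ((a (Sum.inr j) : ℤ) - b (Sum.inr j)).natAbs ≤ D := le_of_eq hD.symm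
  clear hD
  induction D generalizing a b with
  | zero =>
    have hab : ∀ j : Fin γ, a (Sum.inr j) = b (Sum.inr j) := by
      intro j
      have hz : ((a (Sum.inr j) : ℤ) - b (Sum.inr j)).natAbs = 0 := by
        have : ∀ i ∈ Finset.univ, (0:ℕ) ≤ ((a (Sum.inr i) : ℤ) - b (Sum.inr i)).natAbs :=
          fun i _ => Nat.zero_le _
        have hmem := Finset.single_le_sum this (Finset.mem_univ j)
        omega
      omega
    rw [eq_of_inr_eq hγ hab hf]
    exact Sim.refl' hγ F b
  | succ D ih =>
    by_cases hab : ∀ j : Fin γ, a (Sum.inr j) = b (Sum.inr j)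
    · rw [eq_of_inr_eq hγ hab hf]
      exact Sim.refl' hγ F b
    · push_neg at hab
      obtain ⟨j₀, hj₀⟩ := hab
      rcases Nat.lt_or_ge (b (Sum.inr j₀)) (a (Sum.inr j₀)) with hgt | hge
      · obtain ⟨a', j₁, hne, hlt, e1, e2, e3, hsim, hfa, hta⟩ :=
          swap_step hγ F hf ht hgt
        refine Sim.trans' hγ F hsim (ih (hfa.trans hf) (hta.trans ht) ?_)
        have hsum : ∑ j : Fin γ, ((a' (Sum.inr j) : ℤ) - b (Sum.inr j)).natAbs
            < ∑ j : Fin γ, ((a (Sum.inr j) : ℤ) - b (Sum.inr j)).natAbs := by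
          apply Finset.sum_lt_sum
          · intro j _
            by_cases h1 : j = j₁
            · subst h1; rw [e1]; omega
            · by_cases h2 : j = j₀
              · subst h2; omega
              · rw [e3 j h1 h2]
          · exact ⟨j₁, Finset.mem_univ _, by rw [e1]; omega⟩
        omega
      · have hgt : a (Sum.inr j₀) < b (Sum.inr j₀) := by omega
        obtain ⟨b', j₁, hne, hlt, e1, e2, e3, hsim, hfb, htb⟩ :=
          swap_step hγ F hf.symm ht.symm hgt
        refine Sim.trans' hγ F ?_ (Sim.symm' hγ F hsim)
        refine ih (hf.trans hfb.symm) (ht.trans htb.symm) ?_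
        have hsum : ∑ j : Fin γ, ((a (Sum.inr j) : ℤ) - b' (Sum.inr j)).natAbs
            < ∑ j : Fin γ, ((a (Sum.inr j) : ℤ) - b (Sum.inr j)).natAbs := by
          apply Finset.sum_lt_sum
          · intro j _
            by_cases h1 : j = j₁
            · subst h1; rw [e1]; omega
            · by_cases h2 : j = j₀
              · subst h2; omega
              · rw [e3 j h1 h2]
          · exact ⟨j₁, Finset.mem_univ _, by rw [e1]; omega⟩
        omega

/-- Any prescribed number of superscript-2 occurrences (up to the capacity) is realized
by some lift. -/
lemma exists_lift (α : Fin n →₀ ℕ) :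
    ∀ t, t ≤ gsum hγ α → ∃ a : (Fin n ⊕ Fin γ) →₀ ℕ, flatm hγ a = α ∧ tcount a = t := by
  intro t
  induction t with
  | zero =>
    intro _
    refine ⟨Finsupp.mapDomain Sum.inl α, ?_, ?_⟩
    · rw [flatm, ← Finsupp.mapDomain_comp]
      have : (Sum.elim id (Fin.castLE hγ) ∘ Sum.inl : Fin n → Fin n) = id := rfl
      rw [this, Finsupp.mapDomain_id]
    · unfold tcount
      refine Finset.sum_eq_zero fun j _ => ?_
      apply Finsupp.mapDomain_notin_range
      simp
  | succ t ih =>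
    intro hts
    obtain ⟨a, hfa, hta⟩ := ih (by omega)
    have hcap : tcount a < gsum hγ (flatm hγ a) := by rw [hfa, hta]; omega
    rw [gsum_flatm] at hcap
    have hex : ∃ j₀ : Fin γ, a (Sum.inl (Fin.castLE hγ j₀)) ≠ 0 := by
      by_contra hno
      push_neg at hno
      rw [Finset.sum_congr rfl fun j _ => hno j, Finset.sum_const, smul_zero] at hcap
      omega
    obtain ⟨j₀, hj₀⟩ := hex
    have hle : Finsupp.single (Sum.inl (Fin.castLE hγ j₀) : Fin n ⊕ Fin γ) 1 ≤ a := by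
      rw [Finsupp.single_le_iff]
      omega
    obtain ⟨δ, hδ⟩ := exists_add_of_le hle
    refine ⟨Finsupp.single (Sum.inr j₀) 1 + δ, ?_, ?_⟩
    · rw [flatm_add, flatm_single_inr, ← hfa, hδ, flatm_add, flatm_single_inl]
    · rw [tcount_add, tcount_single_inr, ← Nat.succ_eq_add_one, ← hta, hδ, tcount_add,
        tcount_single_inl]
      omega

/-- A lift of a sum can be split into lifts of the summands. -/
lemma exists_split (a : (Fin n ⊕ Fin γ) →₀ ℕ) (α α' : Fin n →₀ ℕ)
    (hf : flatm hγ a = α + α') :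
    ∃ a₁ a₂ : (Fin n ⊕ Fin γ) →₀ ℕ, a = a₁ + a₂ ∧ flatm hγ a₁ = α ∧ flatm hγ a₂ = α' := by
  classical
  set f : (Fin n ⊕ Fin γ) → ℕ := fun s =>
    match s with
    | Sum.inl m => min (a (Sum.inl m)) (α m)
    | Sum.inr j => α (Fin.castLE hγ j)
        - min (a (Sum.inl (Fin.castLE hγ j))) (α (Fin.castLE hγ j)) with hfdef
  have hfle : ∀ s, f s ≤ a s := by
    intro s
    cases s with
    | inl m => exact min_le_left _ _
    | inr j =>
      have h1 := flatm_apply_cast hγ a j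
      have h2 : flatm hγ a (Fin.castLE hγ j) = α (Fin.castLE hγ j) + α' (Fin.castLE hγ j) := by
        rw [hf]; rfl
      simp only [hfdef]
      rcases Nat.le_total (a (Sum.inl (Fin.castLE hγ j))) (α (Fin.castLE hγ j)) with h | h
      · rw [min_eq_left h]; omega
      · rw [min_eq_right h]; omega
  set a₁ : (Fin n ⊕ Fin γ) →₀ ℕ := Finsupp.equivFunOnFinite.symm f with ha₁
  set a₂ : (Fin n ⊕ Fin γ) →₀ ℕ := Finsupp.equivFunOnFinite.symm (fun s => a s - f s) with ha₂
  have happ₁ : ∀ s, a₁ s = f s := fun s => rfl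
  have happ₂ : ∀ s, a₂ s = a s - f s := fun s => rfl
  have hsum : a = a₁ + a₂ := by
    ext s
    rw [Finsupp.add_apply, happ₁, happ₂]
    have := hfle s
    omega
  have hflat₁ : flatm hγ a₁ = α := by
    ext m
    by_cases hm : (m : ℕ) < γ
    · have hc : Fin.castLE hγ ⟨(m : ℕ), hm⟩ = m := by apply Fin.ext; rfl
      have h1 := flatm_apply_cast hγ a₁ ⟨(m : ℕ), hm⟩
      rw [hc] at h1
      rw [h1]
      simp only [happ₁]
      simp only [hfdef, hc]
      rcases Nat.le_total (a (Sum.inl m)) (α m) with h | h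
      · rw [min_eq_left h]
        have h1a := flatm_apply_cast hγ a ⟨(m : ℕ), hm⟩
        rw [hc] at h1a
        have h2 : flatm hγ a m = α m + α' m := by rw [hf]; rfl
        omega
      · rw [min_eq_right h]
        omega
    · have h1 := flatm_apply_high hγ a₁ m (le_of_not_gt hm)
      have h2 := flatm_apply_high hγ a m (le_of_not_gt hm)
      have h3 : flatm hγ a m = α m + α' m := by rw [hf]; rfl
      rw [h1, happ₁]
      simp only [hfdef]
      omega
  refine ⟨a₁, a₂, hsum, hflat₁, ?_⟩
  have := flatm_add hγ a₁ a₂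
  rw [← hsum, hf, hflat₁] at this
  ext m
  have happm : (α + α') m = (α + flatm hγ a₂) m := by rw [this]
  rw [Finsupp.add_apply, Finsupp.add_apply] at happm
  omega

end Sim
section Lifting

open MvPolynomial

variable {K : Type} [Field K] {n γ : ℕ} (hγ : γ ≤ n) (F : Set (MvPolynomial (Fin n) K))

lemma sum_single_apply {ι σ : Type} [DecidableEq σ] (s : Finset ι) (t : ι → σ) (x : σ) :
    (∑ l ∈ s, Finsupp.single (t l) (1 : ℕ)) x = ∑ l ∈ s, (if t l = x then 1 else 0) := by
  rw [Finsupp.finset_sum_apply]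
  exact Finset.sum_congr rfl fun l _ => Finsupp.single_apply

lemma xSup_zero (j : Fin γ) : xSup hγ 0 j = Sum.inl (Fin.castLE hγ j) := rfl

lemma xSup_one (j : Fin γ) : xSup hγ 1 j = Sum.inr j := rfl

lemma flatm_single_xSup (i : Fin 2) (j : Fin γ) :
    flatm hγ (Finsupp.single (xSup hγ i j) 1) = Finsupp.single (Fin.castLE hγ j) 1 := by
  unfold xSup
  split
  · rw [flatm_single_inl]
  · rw [flatm_single_inr]

lemma tcount_single_xSup (i : Fin 2) (j : Fin γ) :
    tcount (Finsupp.single (xSup hγ i j) 1) = if i = 0 then 0 else 1 := by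
  unfold xSup
  split
  · rw [tcount_single_inl]
  · rw [tcount_single_inr]

/-- Choice of superscripts: any monomial divisor of the flattening lifts. -/
lemma exists_I : ∀ (u : ℕ) (jj : Fin u → Fin γ) (a : (Fin n ⊕ Fin γ) →₀ ℕ),
    (∑ l, Finsupp.single (Fin.castLE hγ (jj l)) 1) ≤ flatm hγ a →
    ∃ I : Fin u → Fin 2, (∑ l, Finsupp.single (xSup hγ (I l) (jj l)) 1) ≤ a := by
  intro u
  induction u with
  | zero =>
    intro jj a _
    exact ⟨fun l => 0, by simp⟩
  | succ u ih =>
    intro jj a h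
    rw [Fin.sum_univ_succ] at h
    have hge : 1 ≤ a (Sum.inl (Fin.castLE hγ (jj 0))) + a (Sum.inr (jj 0)) := by
      have h0 := Finsupp.le_def.mp h (Fin.castLE hγ (jj 0))
      rw [Finsupp.add_apply, Finsupp.single_apply, if_pos rfl] at h0
      rw [← flatm_apply_cast hγ]
      omega
    have key : ∀ (i₀ : Fin 2), Finsupp.single (xSup hγ i₀ (jj 0)) 1 ≤ a →
        ∃ I : Fin (u + 1) → Fin 2, (∑ l, Finsupp.single (xSup hγ (I l) (jj l)) 1) ≤ a := by
      intro i₀ hle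
      obtain ⟨δ, hδ⟩ := exists_add_of_le hle
      have hflatδ : flatm hγ a = Finsupp.single (Fin.castLE hγ (jj 0)) 1 + flatm hγ δ := by
        rw [hδ, flatm_add, flatm_single_xSup]
      have hrest : (∑ l : Fin u, Finsupp.single (Fin.castLE hγ (jj l.succ)) 1) ≤ flatm hγ δ := by
        rw [Finsupp.le_def]
        intro x
        have hx := Finsupp.le_def.mp h x
        rw [hflatδ, Finsupp.add_apply, Finsupp.add_apply] at hx
        omega
      obtain ⟨I', hI'⟩ := ih (fun l => jj l.succ) δ hrest
      refine ⟨Fin.cases i₀ I', ?_⟩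
      rw [Fin.sum_univ_succ]
      simp only [Fin.cases_zero, Fin.cases_succ]
      rw [hδ]
      exact add_le_add (le_refl _) hI'
    by_cases h2 : a (Sum.inr (jj 0)) ≠ 0
    · refine key 1 ?_
      rw [xSup_one, Finsupp.single_le_iff]
      omega
    · push_neg at h2
      refine key 0 ?_
      rw [xSup_zero, Finsupp.single_le_iff]
      omega

/-- If the flattening is exactly a standard-form monomial, the lift is exact. -/
lemma lift_exact (u v : ℕ) (jj : Fin u → Fin γ) (kk : Fin v → Fin n)
    (hk : ∀ l, γ ≤ ((kk l : Fin n) : ℕ)) (a : (Fin n ⊕ Fin γ) →₀ ℕ)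
    (hf : flatm hγ a = (∑ l, Finsupp.single (Fin.castLE hγ (jj l)) 1)
      + ∑ l, Finsupp.single (kk l) 1) :
    ∃ I : Fin u → Fin 2,
      a = (∑ l, Finsupp.single (xSup hγ (I l) (jj l)) 1)
        + ∑ l, Finsupp.single (Sum.inl (kk l) : Fin n ⊕ Fin γ) 1 := by
  obtain ⟨I, hI⟩ := exists_I hγ u jj a (by rw [hf]; exact le_self_add.trans (le_of_eq rfl))
  set Xv : (Fin n ⊕ Fin γ) →₀ ℕ := (∑ l, Finsupp.single (xSup hγ (I l) (jj l)) 1)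
    + ∑ l, Finsupp.single (Sum.inl (kk l) : Fin n ⊕ Fin γ) 1 with hXv
  have hjlow : ∀ (m : Fin n), γ ≤ (m : ℕ) →
      (∑ l, Finsupp.single (xSup hγ (I l) (jj l)) (1:ℕ)) (Sum.inl m) = 0 := by
    intro m hm
    rw [sum_single_apply]
    refine Finset.sum_eq_zero fun l _ => ?_
    rw [if_neg]
    unfold xSup
    split
    · intro hcon
      have := congrArg Fin.val (Sum.inl.inj hcon)
      simp at this
      omega
    · exact fun hcon => by simp at hcon
  have hklow : ∀ (m : Fin n), (m : ℕ) < γ →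
      (∑ l, Finsupp.single (Sum.inl (kk l) : Fin n ⊕ Fin γ) (1:ℕ)) (Sum.inl m) = 0 := by
    intro m hm
    rw [sum_single_apply]
    refine Finset.sum_eq_zero fun l _ => ?_
    rw [if_neg]
    intro hcon
    have := congrArg Fin.val (Sum.inl.inj hcon)
    have := hk l
    omega
  have hkinr : ∀ j : Fin γ,
      (∑ l, Finsupp.single (Sum.inl (kk l) : Fin n ⊕ Fin γ) (1:ℕ)) (Sum.inr j) = 0 := by
    intro j
    rw [sum_single_apply]
    exact Finset.sum_eq_zero fun l _ => by rw [if_neg (by simp)]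
  have hle : Xv ≤ a := by
    rw [Finsupp.le_def]
    intro x
    rw [hXv, Finsupp.add_apply]
    cases x with
    | inl m =>
      by_cases hm : (m : ℕ) < γ
      · rw [hklow m hm]
        have := Finsupp.le_def.mp hI (Sum.inl m)
        omega
      · rw [hjlow m (le_of_not_gt hm)]
        have h1 : a (Sum.inl m) = flatm hγ a m := (flatm_apply_high hγ a m (le_of_not_gt hm)).symm
        rw [hf, Finsupp.add_apply] at h1
        have h2 : (∑ l, Finsupp.single (Fin.castLE hγ (jj l)) (1:ℕ)) m = 0 := by
          rw [sum_single_apply]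
          refine Finset.sum_eq_zero fun l _ => ?_
          rw [if_neg]
          intro hcon
          have := congrArg Fin.val hcon
          simp at this
          omega
        have h3 : (∑ l, Finsupp.single (Sum.inl (kk l) : Fin n ⊕ Fin γ) (1:ℕ)) (Sum.inl m)
            = (∑ l, Finsupp.single (kk l) (1:ℕ)) m := by
          rw [sum_single_apply, sum_single_apply]
          exact Finset.sum_congr rfl fun l _ => by
            congr 1
            exact propext ⟨fun h => by rw [Sum.inl.inj h], fun h => by rw [h]⟩
        omega
    | inr j =>
      rw [hkinr j]
      have := Finsupp.le_def.mp hI (Sum.inr j)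
      omega
  have hflatXv : flatm hγ Xv = flatm hγ a := by
    rw [hXv, flatm_add, flatm_finset_sum, flatm_finset_sum, hf]
    congr 1
    · exact Finset.sum_congr rfl fun l _ => flatm_single_xSup hγ (I l) (jj l)
    · exact Finset.sum_congr rfl fun l _ => flatm_single_inl hγ (kk l) 1
  exact ⟨I, (flatm_le_eq hγ Xv a hle hflatXv).symm⟩

end Lifting
section Moves

open MvPolynomial

variable {K : Type} [Field K] {n γ : ℕ} (hγ : γ ≤ n) (F : Set (MvPolynomial (Fin n) K))

/-- The downstairs move relation induced by the standard-form binomials in `F`. -/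
def RMove (α β : Fin n →₀ ℕ) : Prop :=
  ∃ (u v : ℕ) (j j' : Fin u → Fin γ) (k k' : Fin v → Fin n),
    (∀ l, γ ≤ ((k l : Fin n) : ℕ)) ∧ (∀ l, γ ≤ ((k' l : Fin n) : ℕ)) ∧
    ((∏ l, X (Fin.castLE hγ (j l))) * (∏ l, X (k l)) -
        (∏ l, X (Fin.castLE hγ (j' l))) * (∏ l, X (k' l)) ∈ F) ∧
    α = (∑ l, Finsupp.single (Fin.castLE hγ (j l)) 1) + (∑ l, Finsupp.single (k l) 1) ∧
    β = (∑ l, Finsupp.single (Fin.castLE hγ (j' l)) 1) + (∑ l, Finsupp.single (k' l) 1)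

/-- The key invariant property transported along the congruence generated by moves. -/
def QProp (α β : Fin n →₀ ℕ) : Prop :=
  gsum hγ α = gsum hγ β ∧
    ∀ a b : (Fin n ⊕ Fin γ) →₀ ℕ, flatm hγ a = α → flatm hγ b = β →
      tcount a = tcount b → Sim hγ F a b

lemma QProp.refl' (α : Fin n →₀ ℕ) : QProp hγ F α α :=
  ⟨rfl, fun _ _ hfa hfb ht => swap_connect hγ F (hfa.trans hfb.symm) ht⟩

lemma QProp.symm' {α β : Fin n →₀ ℕ} (h : QProp hγ F α β) : QProp hγ F β α :=
  ⟨h.1.symm, fun a b hfa hfb ht => Sim.symm' hγ F (h.2 b a hfb hfa ht.symm)⟩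

lemma QProp.trans' {α β ξ : Fin n →₀ ℕ} (h1 : QProp hγ F α β) (h2 : QProp hγ F β ξ) :
    QProp hγ F α ξ := by
  refine ⟨h1.1.trans h2.1, fun a c hfa hfc ht => ?_⟩
  have hcap : tcount a ≤ gsum hγ β := by
    have := tcount_le_gsum_flatm hγ a
    rw [hfa, h1.1] at this
    omega
  obtain ⟨b, hfb, htb⟩ := exists_lift hγ β (tcount a) hcap
  exact Sim.trans' hγ F (h1.2 a b hfa hfb htb.symm) (h2.2 b c hfb hfc (htb.trans ht))

lemma QProp.add' {α β α' β' : Fin n →₀ ℕ} (h1 : QProp hγ F α β) (h2 : QProp hγ F α' β') :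
    QProp hγ F (α + α') (β + β') := by
  refine ⟨by rw [gsum_add, gsum_add, h1.1, h2.1], fun a b hfa hfb ht => ?_⟩
  obtain ⟨a₁, a₂, hsplit, hf1, hf2⟩ := exists_split hγ a α α' hfa
  have hcap₁ : tcount a₁ ≤ gsum hγ β := by
    have := tcount_le_gsum_flatm hγ a₁
    rw [hf1, h1.1] at this
    omega
  have hcap₂ : tcount a₂ ≤ gsum hγ β' := by
    have := tcount_le_gsum_flatm hγ a₂
    rw [hf2, h2.1] at this
    omega
  obtain ⟨b₁, hfb₁, htb₁⟩ := exists_lift hγ β (tcount a₁) hcap₁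
  obtain ⟨b₂, hfb₂, htb₂⟩ := exists_lift hγ β' (tcount a₂) hcap₂
  have s1 : Sim hγ F a (b₁ + a₂) := by
    rw [hsplit]
    exact Sim.translate_right hγ F a₂ (h1.2 a₁ b₁ hf1 hfb₁ htb₁.symm)
  have s2 : Sim hγ F (b₁ + a₂) (b₁ + b₂) :=
    Sim.translate hγ F b₁ (h2.2 a₂ b₂ hf2 hfb₂ htb₂.symm)
  have s3 : Sim hγ F (b₁ + b₂) b := by
    apply swap_connect hγ F
    · rw [flatm_add, hfb₁, hfb₂, hfb]
    · rw [tcount_add, htb₁, htb₂, ← tcount_add, ← hsplit, ht]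
  exact Sim.trans' hγ F (Sim.trans' hγ F s1 s2) s3

lemma QProp.of_move {α β : Fin n →₀ ℕ} (h : RMove hγ F α β) : QProp hγ F α β := by
  obtain ⟨u, v, j, j', k, k', hk, hk', hfF, hα, hβ⟩ := h
  have hgsum : ∀ (jv : Fin u → Fin γ) (kv : Fin v → Fin n), (∀ l, γ ≤ ((kv l : Fin n) : ℕ)) →
      gsum hγ ((∑ l, Finsupp.single (Fin.castLE hγ (jv l)) 1)
        + (∑ l, Finsupp.single (kv l) 1)) = u := by
    intro jv kv hkv
    rw [gsum_add, gsum_finset_sum, gsum_finset_sum]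
    rw [Finset.sum_congr rfl fun l _ => gsum_single_cast hγ (jv l) 1,
      Finset.sum_congr rfl fun l _ => gsum_single_high hγ (kv l) (hkv l) 1]
    simp
  refine ⟨by rw [hα, hβ, hgsum j k hk, hgsum j' k' hk'], fun a b hfa hfb ht => ?_⟩
  obtain ⟨I, hI⟩ := lift_exact hγ u v j k hk a (by rw [hfa, hα])
  set b' : (Fin n ⊕ Fin γ) →₀ ℕ := (∑ l, Finsupp.single (xSup hγ (I l) (j' l)) 1)
    + ∑ l, Finsupp.single (Sum.inl (k' l) : Fin n ⊕ Fin γ) 1 with hb'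
  have hmem : (monomial a 1 - monomial b' 1 : MvPolynomial (Fin n ⊕ Fin γ) K)
      ∈ liftedSet K hγ F := by
    refine Or.inl ⟨u, v, j, j', k, k', I, hk, hk', hfF, ?_⟩
    rw [prod_X_eq, prod_X_eq, prod_X_eq, prod_X_eq, monomial_mul, monomial_mul, one_mul,
      ← hI, ← hb']
  have s1 : Sim hγ F a b' := Ideal.subset_span hmem
  have hflatb' : flatm hγ b' = β := by
    rw [hb', flatm_add, flatm_finset_sum, flatm_finset_sum, hβ]
    congr 1
    · exact Finset.sum_congr rfl fun l _ => flatm_single_xSup hγ (I l) (j' l)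
    · exact Finset.sum_congr rfl fun l _ => flatm_single_inl hγ (k' l) 1
  have htcount : ∀ (jv : Fin u → Fin γ) (kv : Fin v → Fin n),
      tcount ((∑ l, Finsupp.single (xSup hγ (I l) (jv l)) 1)
        + ∑ l, Finsupp.single (Sum.inl (kv l) : Fin n ⊕ Fin γ) 1)
      = ∑ l : Fin u, (if I l = 0 then 0 else 1) := by
    intro jv kv
    rw [tcount_add, tcount_finset_sum, tcount_finset_sum]
    rw [Finset.sum_congr rfl fun l _ => tcount_single_xSup hγ (I l) (jv l),
      Finset.sum_congr rfl fun l _ => tcount_single_inl (kv l) 1]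
    simp
  have htb' : tcount b' = tcount b := by
    rw [hb', htcount j' k', ← htcount j k, ← hI, ht]
  have s2 : Sim hγ F b' b := swap_connect hγ F (by rw [hflatb', hfb]) htb'
  exact Sim.trans' hγ F s1 s2

/-- `QProp` as an additive congruence. -/
def QCon : AddCon (Fin n →₀ ℕ) :=
  ⟨⟨QProp hγ F, ⟨QProp.refl' hγ F, QProp.symm' hγ F, QProp.trans' hγ F⟩⟩, QProp.add' hγ F⟩

/-- Binomials in the span of `F` connect their exponent vectors by moves. -/
lemma qprop_of_binomial_mem (hrep : ∀ f ∈ F, IsStdBinomial γ hγ f) (α β : Fin n →₀ ℕ)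
    (h : (monomial α 1 - monomial β 1 : MvPolynomial (Fin n) K) ∈ Ideal.span F) :
    QProp hγ F α β := by
  classical
  set c : AddCon (Fin n →₀ ℕ) := addConGen (RMove hγ F) with hc
  set T : MvPolynomial (Fin n) K →+* AddMonoidAlgebra K c.Quotient :=
    AddMonoidAlgebra.mapDomainRingHom K c.mk' with hT
  have hTmono : ∀ m : Fin n →₀ ℕ, T (monomial m 1) = AddMonoidAlgebra.single (c.mk' m) (1 : K) := by
    intro m
    rw [← single_eq_monomial]
    simp [hT, AddMonoidAlgebra.mapDomainRingHom_apply, AddMonoidAlgebra.mapDomain_single]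
  have hT0 : ∀ p ∈ Ideal.span F, T p = 0 := by
    intro p hp
    refine Submodule.span_induction ?_ ?_ ?_ ?_ hp
    · intro f hf
      obtain ⟨u, v, j, j', k, k', hk, hk', hform⟩ := hrep f hf
      have hmove : c ((∑ l, Finsupp.single (Fin.castLE hγ (j l)) 1)
            + (∑ l, Finsupp.single (k l) 1))
          ((∑ l, Finsupp.single (Fin.castLE hγ (j' l)) 1)
            + (∑ l, Finsupp.single (k' l) 1)) := by
        apply AddConGen.Rel.of
        exact ⟨u, v, j, j', k, k', hk, hk', hform ▸ hf, rfl, rfl⟩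
      rw [hform, prod_X_eq, prod_X_eq, prod_X_eq, prod_X_eq, monomial_mul, monomial_mul,
        one_mul, map_sub, hTmono, hTmono]
      rw [show c.mk' _ = c.mk' _ from (AddCon.eq c).mpr hmove]
      exact sub_self _
    · exact map_zero T
    · intro x y _ _ hx hy
      rw [map_add, hx, hy, add_zero]
    · intro r x _ hx
      rw [smul_eq_mul, map_mul, hx, mul_zero]
  have h0 := hT0 _ h
  rw [map_sub, hTmono, hTmono, sub_eq_zero] at h0
  have := (AddMonoidAlgebra.single_left_inj (one_ne_zero (α := K))).mp h0
  have hcab : c α β := (AddCon.eq c).mp this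
  have hle : c ≤ QCon hγ F := AddCon.addConGen_le.mpr fun x y hxy => QProp.of_move hγ F hxy
  exact hle hcab

end Moves
section Toric

open MvPolynomial

variable {K : Type} [Field K] {d n γ : ℕ} (hγ : γ ≤ n) (B : Fin n → Finset (Fin d))

lemma key1 (i : Fin 2) (j : Fin γ) :
    tildeToricMap K hγ B (X (xSup hγ i j)) =
      (rename Sum.inl) (enumToricMap K B (X (Fin.castLE hγ j)))
        * X (Sum.inr i : Fin d ⊕ Fin 2) := by
  fin_cases i
  · show tildeToricMap K hγ B (X (xSup hγ 0 j)) =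
      (rename Sum.inl) (enumToricMap K B (X (Fin.castLE hγ j))) * X (Sum.inr 0)
    rw [xSup_zero]
    simp [tildeToricMap, enumToricMap, aeval_X, map_prod]
  · show tildeToricMap K hγ B (X (xSup hγ 1 j)) =
      (rename Sum.inl) (enumToricMap K B (X (Fin.castLE hγ j))) * X (Sum.inr 1)
    rw [xSup_one]
    simp [tildeToricMap, enumToricMap, aeval_X, map_prod]

lemma key2 (k : Fin n) :
    tildeToricMap K hγ B (X (Sum.inl k)) =
      (rename Sum.inl) (enumToricMap K B (X k)) * X (Sum.inr 0 : Fin d ⊕ Fin 2) := by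
  simp [tildeToricMap, enumToricMap, aeval_X, map_prod]

lemma pitilde_lift (u v : ℕ) (jv : Fin u → Fin γ) (kv : Fin v → Fin n) (I : Fin u → Fin 2) :
    tildeToricMap K hγ B ((∏ l, X (xSup hγ (I l) (jv l))) * ∏ l, X (Sum.inl (kv l))) =
      (rename Sum.inl) (enumToricMap K B ((∏ l, X (Fin.castLE hγ (jv l))) * ∏ l, X (kv l)))
        * ((∏ l, (X (Sum.inr (I l)) : MvPolynomial (Fin d ⊕ Fin 2) K))
            * X (Sum.inr 0 : Fin d ⊕ Fin 2) ^ v) := by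
  rw [map_mul, map_prod, map_prod, map_mul, map_prod, map_prod, map_mul, map_prod, map_prod]
  simp_rw [key1 hγ B, key2 hγ B]
  rw [Finset.prod_mul_distrib, Finset.prod_mul_distrib, Finset.prod_const, Finset.card_univ,
    Fintype.card_fin]
  ring

lemma pitilde_X_monic (s : Fin n ⊕ Fin γ) :
    ∃ ν, tildeToricMap K hγ B (X s) = monomial ν (1 : K) := by
  cases s with
  | inl j =>
    refine ⟨(∑ l ∈ B j, Finsupp.single (Sum.inl l : Fin d ⊕ Fin 2) 1)
      + Finsupp.single (Sum.inr 0) 1, ?_⟩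
    have : tildeToricMap K hγ B (X (Sum.inl j))
        = (∏ l ∈ B j, X (Sum.inl l : Fin d ⊕ Fin 2)) * X (Sum.inr 0) := by
      simp [tildeToricMap, aeval_X]
    rw [this, prod_X_eq]
    have hX : (X (Sum.inr 0) : MvPolynomial (Fin d ⊕ Fin 2) K)
        = monomial (Finsupp.single (Sum.inr 0) 1) 1 := by
      rw [← X_pow_eq_monomial, pow_one]
    rw [hX, monomial_mul, one_mul]
  | inr j =>
    refine ⟨(∑ l ∈ B (Fin.castLE hγ j), Finsupp.single (Sum.inl l : Fin d ⊕ Fin 2) 1)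
      + Finsupp.single (Sum.inr 1) 1, ?_⟩
    have : tildeToricMap K hγ B (X (Sum.inr j))
        = (∏ l ∈ B (Fin.castLE hγ j), X (Sum.inl l : Fin d ⊕ Fin 2)) * X (Sum.inr 1) := by
      simp [tildeToricMap, aeval_X]
    rw [this, prod_X_eq]
    have hX : (X (Sum.inr 1) : MvPolynomial (Fin d ⊕ Fin 2) K)
        = monomial (Finsupp.single (Sum.inr 1) 1) 1 := by
      rw [← X_pow_eq_monomial, pow_one]
    rw [hX, monomial_mul, one_mul]

lemma monomial_eq_prod_pow (a : (Fin n ⊕ Fin γ) →₀ ℕ) :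
    (monomial a 1 : MvPolynomial (Fin n ⊕ Fin γ) K) = ∏ s : Fin n ⊕ Fin γ, X s ^ a s := by
  rw [monomial_eq, C_1, one_mul, Finsupp.prod_fintype]
  intro s
  exact pow_zero _

lemma pitilde_monomial_monic (a : (Fin n ⊕ Fin γ) →₀ ℕ) :
    ∃ ν, tildeToricMap K hγ B (monomial a 1) = monomial ν (1 : K) := by
  classical
  choose ν hν using pitilde_X_monic (K := K) hγ B
  refine ⟨∑ s : Fin n ⊕ Fin γ, a s • ν s, ?_⟩
  rw [monomial_eq_prod_pow, map_prod]
  have : ∀ s : Fin n ⊕ Fin γ, tildeToricMap K hγ B (X s ^ a s)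
      = monomial (a s • ν s) 1 := by
    intro s
    rw [map_pow, hν s, monomial_pow, one_pow]
  rw [Finset.prod_congr rfl fun s _ => this s, monomial_prod]

end Toric
section Final

open MvPolynomial

variable {K : Type} [Field K] {d n γ : ℕ} (hγ : γ ≤ n) (B : Fin n → Finset (Fin d))

lemma comp_E1 :
    (aeval (Sum.elim X (fun _ => (1 : MvPolynomial (Fin d) K)))).comp (tildeToricMap K hγ B)
      = (enumToricMap K B).comp (rename (Sum.elim id (Fin.castLE hγ))) := by
  apply algHom_ext
  intro s
  cases s with
  | inl j =>
    simp [tildeToricMap, enumToricMap, aeval_X, map_prod, rename_X]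
  | inr j =>
    simp [tildeToricMap, enumToricMap, aeval_X, map_prod, rename_X]

lemma comp_E2 :
    (aeval (Sum.elim (fun _ => (1 : Polynomial K))
        (fun i : Fin 2 => if i = 0 then 1 else Polynomial.X))).comp (tildeToricMap K hγ B)
      = aeval (Sum.elim (fun _ => (1 : Polynomial K)) (fun _ => Polynomial.X)) := by
  apply algHom_ext
  intro s
  cases s with
  | inl j => simp [tildeToricMap, aeval_X, map_prod]
  | inr j => simp [tildeToricMap, aeval_X, map_prod]

lemma E2_monomial (a : (Fin n ⊕ Fin γ) →₀ ℕ) :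
    aeval (Sum.elim (fun _ => (1 : Polynomial K)) (fun _ => Polynomial.X))
        ((monomial a 1 : MvPolynomial (Fin n ⊕ Fin γ) K))
      = Polynomial.X ^ tcount a := by
  rw [aeval_monomial, map_one, one_mul, Finsupp.prod_fintype _ _ (fun s => pow_zero _)]
  rw [Fintype.prod_sum_type]
  simp only [Sum.elim_inl, Sum.elim_inr, one_pow, Finset.prod_const_one, one_mul]
  rw [Finset.prod_pow_eq_pow_sum]
  rfl

lemma flat_eq_of_pitilde_eq (hgen : Ideal.span F' = enumToricIdeal K B)
    {a b : (Fin n ⊕ Fin γ) →₀ ℕ}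
    (heq : tildeToricMap K hγ B (monomial a 1) = tildeToricMap K hγ B (monomial b 1)) :
    (monomial (flatm hγ a) 1 - monomial (flatm hγ b) 1 : MvPolynomial (Fin n) K)
      ∈ Ideal.span F' := by
  have h1 := congrArg (aeval (Sum.elim X (fun _ => (1 : MvPolynomial (Fin d) K)))) heq
  rw [← AlgHom.comp_apply, ← AlgHom.comp_apply, comp_E1 hγ B, AlgHom.comp_apply,
    AlgHom.comp_apply, rename_monomial, rename_monomial] at h1
  rw [hgen]
  have : enumToricMap K B (monomial (flatm hγ a) 1 - monomial (flatm hγ b) 1) = 0 := by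
    rw [map_sub]
    rw [show (flatm hγ a : Fin n →₀ ℕ) = Finsupp.mapDomain (Sum.elim id (Fin.castLE hγ)) a
      from rfl, show (flatm hγ b : Fin n →₀ ℕ)
        = Finsupp.mapDomain (Sum.elim id (Fin.castLE hγ)) b from rfl, h1, sub_self]
  exact RingHom.mem_ker.mpr this

lemma tcount_eq_of_pitilde_eq {a b : (Fin n ⊕ Fin γ) →₀ ℕ}
    (heq : tildeToricMap K hγ B (monomial a 1) = tildeToricMap K hγ B (monomial b 1)) :
    tcount a = tcount b := by
  have h2 := congrArg (aeval (Sum.elim (fun _ => (1 : Polynomial K))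
    (fun i : Fin 2 => if i = 0 then 1 else Polynomial.X))) heq
  rw [← AlgHom.comp_apply, ← AlgHom.comp_apply, comp_E2 hγ B, E2_monomial, E2_monomial] at h2
  have := congrArg Polynomial.natDegree h2
  rwa [Polynomial.natDegree_X_pow, Polynomial.natDegree_X_pow] at this

lemma key_binomial (F : Set (MvPolynomial (Fin n) K))
    (hrep : ∀ f ∈ F, IsStdBinomial γ hγ f)
    (hgen : Ideal.span F = enumToricIdeal K B)
    {a b : (Fin n ⊕ Fin γ) →₀ ℕ}
    (heq : tildeToricMap K hγ B (monomial a 1) = tildeToricMap K hγ B (monomial b 1)) :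
    (monomial a 1 - monomial b 1 : MvPolynomial (Fin n ⊕ Fin γ) K)
      ∈ Ideal.span (liftedSet K hγ F) := by
  have h3 := flat_eq_of_pitilde_eq hγ B hgen heq
  have h2 := tcount_eq_of_pitilde_eq hγ B heq
  exact (qprop_of_binomial_mem hγ F hrep _ _ h3).2 a b rfl rfl h2

end Final
/-- If `F` is a homogeneous generating set of binomials for `J_M`, then the lifted set `F̃`
generates `J_{D̃_M}`. -/
theorem statement1 (K : Type) [Field K] {d n γ : ℕ}
    (M : Matroid (Fin d)) (hE : M.E = Set.univ)
    (B : Fin n → Finset (Fin d)) (hBinj : Function.Injective B)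
    (hBall : ∀ S : Finset (Fin d), M.IsBase ↑S ↔ ∃ j, B j = S)
    (c : Fin d) (hc : ¬ ∀ S, M.IsBase S → c ∈ S)
    (hγ : γ ≤ n) (hsplit : ∀ j : Fin n, c ∉ B j ↔ (j : ℕ) < γ)
    (F : Set (MvPolynomial (Fin n) K))
    (hrep : ∀ f ∈ F, IsStdBinomial γ hγ f)
    (hgen : Ideal.span F = enumToricIdeal K B) :
    Ideal.span (liftedSet K hγ F) = RingHom.ker (tildeToricMap K hγ B).toRingHom := by
  classical
  apply le_antisymm
  · -- `span F̃ ⊆ ker π̃`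
    rw [Ideal.span_le]
    rintro g (⟨u, v, j, j', k, k', I, hk, hk', hfF, rfl⟩ | ⟨j₁, j₂, hlt, rfl⟩)
    · have hfmem : (∏ l, X (Fin.castLE hγ (j l))) * (∏ l, X (k l)) -
          (∏ l, X (Fin.castLE hγ (j' l))) * (∏ l, X (k' l)) ∈ enumToricIdeal K B := by
        rw [← hgen]
        exact Ideal.subset_span hfF
      have hpi : enumToricMap K B ((∏ l, X (Fin.castLE hγ (j l))) * ∏ l, X (k l))
          = enumToricMap K B ((∏ l, X (Fin.castLE hγ (j' l))) * ∏ l, X (k' l)) := by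
        have h0 : enumToricMap K B ((∏ l, X (Fin.castLE hγ (j l))) * (∏ l, X (k l)) -
            (∏ l, X (Fin.castLE hγ (j' l))) * (∏ l, X (k' l))) = 0 := RingHom.mem_ker.mp hfmem
        rw [map_sub, sub_eq_zero] at h0
        exact h0
      show _ ∈ RingHom.ker (tildeToricMap K hγ B).toRingHom
      rw [RingHom.mem_ker]
      show tildeToricMap K hγ B _ = 0
      rw [map_sub, pitilde_lift hγ B u v j k I, pitilde_lift hγ B u v j' k' I, hpi, sub_self]
    · show _ ∈ RingHom.ker (tildeToricMap K hγ B).toRingHom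
      rw [RingHom.mem_ker]
      show tildeToricMap K hγ B _ = 0
      rw [map_sub, map_mul, map_mul]
      simp only [tildeToricMap, aeval_X, Sum.elim_inl, Sum.elim_inr]
      ring
  · -- `ker π̃ ⊆ span F̃`
    intro p hp
    rw [RingHom.mem_ker] at hp
    have hp' : tildeToricMap K hγ B p = 0 := hp
    choose Em hEm using pitilde_monomial_monic (K := K) hγ B
    have hfib : ∀ t : (Fin d ⊕ Fin 2) →₀ ℕ,
        ∑ a ∈ p.support, (if Em a = t then coeff a p else 0) = 0 := by
      intro t
      have hrepr : tildeToricMap K hγ B p = ∑ a ∈ p.support, monomial (Em a) (coeff a p) := by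
        conv_lhs => rw [← support_sum_monomial_coeff p]
        rw [map_sum]
        refine Finset.sum_congr rfl fun a _ => ?_
        have h1 : (monomial a (coeff a p) : MvPolynomial (Fin n ⊕ Fin γ) K)
            = C (coeff a p) * monomial a 1 := by
          rw [C_mul_monomial, mul_one]
        have h2 : tildeToricMap K hγ B (C (coeff a p)) = C (coeff a p) := by
          have : (C (coeff a p) : MvPolynomial (Fin n ⊕ Fin γ) K)
              = algebraMap K _ (coeff a p) := rfl
          rw [this, AlgHom.commutes]
          rfl
        rw [h1, map_mul, hEm a, h2, C_mul_monomial, mul_one]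
      have hcoeff : coeff t (tildeToricMap K hγ B p) = 0 := by
        rw [hp', coeff_zero]
      rw [hrepr, coeff_sum] at hcoeff
      have hcongr : ∀ a ∈ p.support, (if Em a = t then coeff a p else 0)
          = coeff t (monomial (Em a) (coeff a p)) := fun a _ =>
        (coeff_monomial t (Em a) (coeff a p)).symm
      rw [Finset.sum_congr rfl hcongr]
      exact hcoeff
    have hmem := engine Em p.support p.support.card p (le_refl _) (subset_refl _) hfib
    refine (Ideal.span_le.mpr ?_) hmem
    rintro g ⟨a, b, hqab, rfl⟩
    have heq : tildeToricMap K hγ B (monomial a 1) = tildeToricMap K hγ B (monomial b 1) := by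
      rw [hEm a, hEm b, hqab]
    exact key_binomial hγ B F hrep hgen heq
end

section
/- Let M be a matroid on E = {1,…,d}, let c ∈ E be an element that is not a coloop of M, and number the bases B_1,…,B_n of M so that c ∉ B_j for j ∈ [γ] and c ∈ B_j for j ∈ [n]∖[γ]. If f = ∏_{l=1}^{u} x_{j_l}·∏_{l=1}^{v} x_{k_l} − ∏_{l=1}^{u} x_{j'_l}·∏_{l=1}^{v} x_{k'_l} is a homogeneous binomial in the toric ideal J_M with all j_l, j'_l ∈ [γ] and all k_l, k'_l ∈ [n]∖[γ], then for every tuple I = (i_1,…,i_u) ∈ {1,2}^u, the binomial f^I = ∏_{l=1}^{u} x^{i_l}_{j_l}·∏_{l=1}^{v} x¹_{k_l} − ∏_{l=1}^{u} x^{i_l}_{j'_l}·∏_{l=1}^{v} x¹_{k'_l} lies in the toric ideal J_{D̃_M}. -/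
open MvPolynomial


/-- If `f` is a standard-form binomial in `J_M`, then for every `I ∈ {1,2}^u`
the lifted binomial `f^I` lies in `J_{D̃_M}`. -/
theorem statement3 (K : Type) [Field K] {d n γ : ℕ}
    (M : Matroid (Fin d)) (hE : M.E = Set.univ)
    (B : Fin n → Finset (Fin d)) (hBinj : Function.Injective B)
    (hBall : ∀ S : Finset (Fin d), M.IsBase ↑S ↔ ∃ j, B j = S)
    (c : Fin d) (hc : ¬ ∀ S, M.IsBase S → c ∈ S)
    (hγ : γ ≤ n) (hsplit : ∀ j : Fin n, c ∉ B j ↔ (j : ℕ) < γ)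
    (u v : ℕ) (j j' : Fin u → Fin γ) (k k' : Fin v → Fin n)
    (hk : ∀ l, γ ≤ (k l : ℕ)) (hk' : ∀ l, γ ≤ (k' l : ℕ))
    (hf : (∏ l, X (Fin.castLE hγ (j l))) * (∏ l, X (k l)) -
          (∏ l, X (Fin.castLE hγ (j' l))) * (∏ l, X (k' l)) ∈ enumToricIdeal K B)
    (I : Fin u → Fin 2) :
    (∏ l, X (xSup hγ (I l) (j l))) * (∏ l, X (Sum.inl (k l))) -
      (∏ l, X (xSup hγ (I l) (j' l))) * (∏ l, X (Sum.inl (k' l)))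
      ∈ RingHom.ker (tildeToricMap K hγ B).toRingHom := by
  have key : ∀ (i : Fin 2) (a : Fin γ),
      (tildeToricMap K hγ B) (X (xSup hγ i a)) =
        (∏ x ∈ B (Fin.castLE hγ a), X (Sum.inl x)) * X (Sum.inr i) := by
    intro i a
    fin_cases i <;> simp [tildeToricMap, xSup]
  have hk1 : ∀ m : Fin n, (tildeToricMap K hγ B) (X (Sum.inl m)) =
      (∏ x ∈ B m, X (Sum.inl x)) * X (Sum.inr (0 : Fin 2)) := by
    intro m; simp [tildeToricMap]
  have hf' : (∏ l, ∏ x ∈ B (Fin.castLE hγ (j l)), (X x : MvPolynomial (Fin d) K)) *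
        (∏ l, ∏ x ∈ B (k l), X x) =
      (∏ l, ∏ x ∈ B (Fin.castLE hγ (j' l)), X x) * (∏ l, ∏ x ∈ B (k' l), X x) := by
    have h := hf
    simp only [enumToricIdeal, RingHom.mem_ker, AlgHom.toRingHom_eq_coe, RingHom.coe_coe,
      map_sub, map_mul, map_prod, sub_eq_zero, enumToricMap, aeval_X] at h
    exact h
  have hren := congrArg (rename (Sum.inl : Fin d → Fin d ⊕ Fin 2)) hf'
  simp only [map_mul, map_prod, rename_X] at hren
  simp only [RingHom.mem_ker, AlgHom.toRingHom_eq_coe, RingHom.coe_coe, map_sub, map_mul,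
    map_prod, sub_eq_zero, key, hk1]
  simp only [Finset.prod_mul_distrib]
  linear_combination ((∏ l : Fin u, (X (Sum.inr (I l)) : MvPolynomial (Fin d ⊕ Fin 2) K)) *
    (∏ _l : Fin v, (X (Sum.inr (0 : Fin 2)) : MvPolynomial (Fin d ⊕ Fin 2) K))) * hren
end

section
/- If M is a matroid on E = {1,…,d} whose toric ideal J_M is generated by quadratic binomials, then for every c ∈ E the toric ideal J_{M +_c (d+1)} of the series extension of M at c by d+1 is generated by quadratic binomials. -/
open MvPolynomial

namespace S6

open Relation

variable {σ ρ K : Type} [Field K]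

/-- weight of an exponent vector under a monomial map with exponents `u`. -/
noncomputable def Wt (u : σ → ρ →₀ ℕ) : (σ →₀ ℕ) →+ (ρ →₀ ℕ) where
  toFun a := a.sum fun t n => n • u t
  map_zero' := Finsupp.sum_zero_index
  map_add' a b := by
    exact Finsupp.sum_add_index' (fun t => zero_smul ℕ (u t)) (fun t m n => add_smul m n (u t))

theorem Wt_single (u : σ → ρ →₀ ℕ) (t : σ) (n : ℕ) :
    Wt u (Finsupp.single t n) = n • u t := by
  simp [Wt, Finsupp.sum_single_index]

theorem Wt_apply (u : σ → ρ →₀ ℕ) (a : σ →₀ ℕ) (x : ρ) :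
    Wt u a x = a.sum fun t n => n * u t x := by
  classical
  simp [Wt, Finsupp.sum_apply, Finsupp.smul_apply]

theorem prod_monomial (S : Finset σ) (g : σ → (ρ →₀ ℕ)) :
    (∏ t ∈ S, monomial (g t) (1 : K)) = monomial (∑ t ∈ S, g t) 1 := by
  classical
  induction S using Finset.induction with
  | empty => simp [monomial_zero']
  | insert _ _ hnot ih =>
      rw [Finset.prod_insert hnot, Finset.sum_insert hnot, ih, monomial_mul, one_mul]

theorem aeval_monomial_eq (u : σ → ρ →₀ ℕ) (a : σ →₀ ℕ) (r : K) :
    (aeval fun t => monomial (u t) (1 : K)) (monomial a r) = monomial (Wt u a) r := by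
  classical
  rw [aeval_monomial]
  have : (a.prod fun t k => (monomial (u t) (1:K)) ^ k) = monomial (Wt u a) 1 := by
    rw [Finsupp.prod]
    have : ∀ t ∈ a.support, (monomial (u t) (1:K)) ^ (a t) = monomial (a t • u t) 1 := by
      intro t _; rw [monomial_pow, one_pow]
    rw [Finset.prod_congr rfl this, prod_monomial]
    congr 1
  rw [this]
  simp [algebraMap_eq, C_mul_monomial, mul_one]


theorem mem_span_binoms (u : σ → ρ →₀ ℕ) (N : ℕ) :
    ∀ f : MvPolynomial σ K, f.support.card ≤ N →
      (aeval fun t => monomial (u t) (1 : K)) f = 0 →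
      f ∈ Submodule.span K {g : MvPolynomial σ K |
        ∃ a b : σ →₀ ℕ, a ≠ b ∧ Wt u a = Wt u b ∧ g = monomial a 1 - monomial b 1} := by
  classical
  induction N with
  | zero =>
      intro f hcard _
      have : f = 0 := by
        have h1 : f.support = ∅ := Finset.card_eq_zero.mp (Nat.le_zero.mp hcard)
        exact MvPolynomial.support_eq_empty.mp h1
      simp [this]
  | succ N ih =>
      intro f hcard hf
      by_cases h0 : f = 0
      · simp [h0]
      obtain ⟨a, ha⟩ := MvPolynomial.support_nonempty.mpr h0
      have hfib : ∀ m, (∑ x ∈ f.support.filter fun x => Wt u x = m, coeff x f) = 0 := by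
        intro m
        have h1 : (aeval fun t => monomial (u t) (1 : K)) f
            = ∑ x ∈ f.support, monomial (Wt u x) (coeff x f) := by
          conv_lhs => rw [f.as_sum, map_sum]
          exact Finset.sum_congr rfl fun x _ => aeval_monomial_eq u x _
        have h2 := congrArg (coeff m) (h1.symm.trans hf)
        rw [MvPolynomial.coeff_sum, coeff_zero] at h2
        rw [Finset.sum_filter]
        simpa [coeff_monomial] using h2
      have hb : ∃ b ∈ f.support, b ≠ a ∧ Wt u b = Wt u a := by
        by_contra hcon
        push_neg at hcon
        have h3 : (f.support.filter fun x => Wt u x = Wt u a) = {a} := by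
          apply Finset.eq_singleton_iff_unique_mem.mpr
          refine ⟨Finset.mem_filter.mpr ⟨ha, rfl⟩, ?_⟩
          intro x hx
          rw [Finset.mem_filter] at hx
          by_contra hxa
          exact (hcon x hx.1 hxa) hx.2
        have h4 := hfib (Wt u a)
        rw [h3, Finset.sum_singleton] at h4
        exact (MvPolynomial.mem_support_iff.mp ha) h4
      obtain ⟨b, hbs, hba, hWb⟩ := hb
      set g : MvPolynomial σ K := monomial a 1 - monomial b 1 with hg
      have hgmem : g ∈ {g : MvPolynomial σ K |
          ∃ a b : σ →₀ ℕ, a ≠ b ∧ Wt u a = Wt u b ∧ g = monomial a 1 - monomial b 1} :=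
        ⟨a, b, hba.symm, hWb.symm, rfl⟩
      set f' : MvPolynomial σ K := f - (coeff a f) • g with hf'
      have hco : ∀ x, coeff x f' =
          coeff x f - coeff a f * ((if a = x then (1:K) else 0) - if b = x then 1 else 0) := by
        intro x
        simp [hf', hg, coeff_monomial, mul_sub, smul_eq_mul]
      have hker' : (aeval fun t => monomial (u t) (1 : K)) f' = 0 := by
        rw [hf', map_sub, map_smul, hf, map_sub, aeval_monomial_eq, aeval_monomial_eq, hWb,
          sub_self, smul_zero, sub_zero]
      have hsupp : f'.support ⊆ f.support.erase a := by
        intro x hx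
        rw [MvPolynomial.mem_support_iff] at hx
        rw [Finset.mem_erase]
        have hxa : x ≠ a := by
          rintro rfl
          rw [hco x, if_pos rfl, if_neg (by simpa using hba)] at hx
          simp at hx
        refine ⟨hxa, ?_⟩
        by_contra hxs
        rw [MvPolynomial.notMem_support_iff] at hxs
        rw [hco x, hxs, if_neg (fun h => hxa h.symm)] at hx
        by_cases hxb : b = x
        · exact absurd hxb.symm (fun h => (h ▸ hxs : coeff b f = 0) |>
            (MvPolynomial.mem_support_iff.mp hbs))
        · rw [if_neg hxb] at hx; simp at hx
      have hcard' : f'.support.card ≤ N := by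
        have h5 : (f.support.erase a).card < f.support.card := Finset.card_erase_lt_of_mem ha
        have := Finset.card_le_card hsupp
        omega
      have hmem' := ih f' hcard' hker'
      have hfe : f = f' + (coeff a f) • g := by rw [hf']; ring
      rw [hfe]
      exact Submodule.add_mem _ hmem'
        (Submodule.smul_mem _ _ (Submodule.subset_span hgmem))


/-- One-step move relation on exponent vectors generated by a set of binomials. -/
def MoveRel (G : Set (MvPolynomial σ K)) (p q : σ →₀ ℕ) : Prop :=
  ∃ m a b : σ →₀ ℕ, (monomial a (1:K) - monomial b 1) ∈ G ∧ p = m + a ∧ q = m + b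

theorem binom_mem_span_of_eqvGen {G : Set (MvPolynomial σ K)} {p q : σ →₀ ℕ}
    (h : EqvGen (MoveRel G) p q) :
    (monomial p (1:K) - monomial q 1) ∈ Ideal.span G := by
  induction h with
  | rel x y hxy =>
      obtain ⟨m, a, b, hg, rfl, rfl⟩ := hxy
      have : (monomial (m + a) (1:K) - monomial (m + b) 1)
          = monomial m 1 * (monomial a 1 - monomial b 1) := by
        rw [mul_sub, monomial_mul, monomial_mul, one_mul]
      rw [this]
      exact Ideal.mul_mem_left _ _ (Ideal.subset_span hg)
  | refl x => simp
  | symm x y _ ih => simpa using Submodule.neg_mem _ ih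
  | trans x y z _ _ ih1 ih2 => simpa using Ideal.add_mem _ ih1 ih2

theorem moveRel_add_left {G : Set (MvPolynomial σ K)} {p q : σ →₀ ℕ} (m : σ →₀ ℕ)
    (h : MoveRel G p q) : MoveRel G (m + p) (m + q) := by
  obtain ⟨m', a, b, hg, rfl, rfl⟩ := h
  exact ⟨m + m', a, b, hg, by rw [add_assoc], by rw [add_assoc]⟩

theorem eqvGen_moveRel_add_left {G : Set (MvPolynomial σ K)} {p q : σ →₀ ℕ} (m : σ →₀ ℕ)
    (h : EqvGen (MoveRel G) p q) : EqvGen (MoveRel G) (m + p) (m + q) := by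
  induction h with
  | rel x y hxy => exact EqvGen.rel _ _ (moveRel_add_left m hxy)
  | refl x => exact EqvGen.refl _
  | symm x y _ ih => exact EqvGen.symm _ _ ih
  | trans x y z _ _ ih1 ih2 => exact EqvGen.trans _ _ _ ih1 ih2

/-- The class function into the quotient by the move equivalence. -/
noncomputable def classMap (G : Set (MvPolynomial σ K)) :
    MvPolynomial σ K →ₗ[K] (Quotient (EqvGen.setoid (MoveRel G)) →₀ K) :=
  Finsupp.lmapDomain K K (Quotient.mk (EqvGen.setoid (MoveRel G))) ∘ₗ
    (AddMonoidAlgebra.coeffLinearEquiv K).toLinearMap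

theorem classMap_monomial (G : Set (MvPolynomial σ K)) (a : σ →₀ ℕ) (r : K) :
    classMap G (monomial a r) =
      Finsupp.single (Quotient.mk (EqvGen.setoid (MoveRel G)) a) r := by
  rw [← single_eq_monomial]
  exact Finsupp.mapDomain_single

theorem classMap_span_eq_zero {G : Set (MvPolynomial σ K)}
    (hG : ∀ g ∈ G, ∃ a b : σ →₀ ℕ, g = monomial a 1 - monomial b 1)
    {f : MvPolynomial σ K} (hf : f ∈ Ideal.span G) : classMap G f = 0 := by
  classical
  have key : ∀ f ∈ Ideal.span G, ∀ m : σ →₀ ℕ, classMap G (monomial m 1 * f) = 0 := by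
    intro f hf
    refine Submodule.span_induction ?_ ?_ ?_ ?_ hf
    · intro g hg m
      obtain ⟨a, b, rfl⟩ := hG g hg
      rw [mul_sub, monomial_mul, monomial_mul, one_mul, map_sub, classMap_monomial,
        classMap_monomial]
      have : Quotient.mk (EqvGen.setoid (MoveRel G)) (m + a)
          = Quotient.mk (EqvGen.setoid (MoveRel G)) (m + b) := by
        exact Quotient.sound (EqvGen.rel _ _ ⟨m, a, b, hg, rfl, rfl⟩)
      rw [this, sub_self]
    · intro m; simp
    · intro x y _ _ ihx ihy m
      rw [mul_add, map_add, ihx, ihy, add_zero]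
    · intro r x _ ihx m
      have expand : monomial m 1 * (r * x)
          = ∑ n ∈ r.support, coeff n r • (monomial (m + n) 1 * x) := by
        conv_lhs => rw [r.as_sum]
        rw [Finset.sum_mul, Finset.mul_sum]
        refine Finset.sum_congr rfl fun n _ => ?_
        rw [← mul_assoc, monomial_mul, one_mul, ← smul_mul_assoc, smul_monomial,
          smul_eq_mul, mul_one]
      rw [smul_eq_mul, expand, map_sum]
      refine Finset.sum_eq_zero fun n _ => ?_
      rw [map_smul, ihx (m + n), smul_zero]
  have := key f hf 0
  rwa [monomial_zero', C_1, one_mul] at this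

theorem eqvGen_of_binom_mem_span {G : Set (MvPolynomial σ K)}
    (hG : ∀ g ∈ G, ∃ a b : σ →₀ ℕ, g = monomial a 1 - monomial b 1)
    {p q : σ →₀ ℕ} (hpq : (monomial p (1:K) - monomial q 1) ∈ Ideal.span G) :
    p = q ∨ EqvGen (MoveRel G) p q := by
  classical
  by_cases hpq' : p = q
  · exact Or.inl hpq'
  right
  have h0 := classMap_span_eq_zero hG hpq
  rw [map_sub, classMap_monomial, classMap_monomial, sub_eq_zero] at h0
  exact Quotient.exact (Finsupp.single_left_injective one_ne_zero h0)


section Concrete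

theorem X_mul_X {α : Type} (i j : α) :
    (X i : MvPolynomial α K) * X j
      = monomial (Finsupp.single i 1 + Finsupp.single j 1) 1 := by
  have h1 : (X i : MvPolynomial α K) = monomial (Finsupp.single i 1) 1 := by
    rw [← X_pow_eq_monomial, pow_one]
  have h2 : (X j : MvPolynomial α K) = monomial (Finsupp.single j 1) 1 := by
    rw [← X_pow_eq_monomial, pow_one]
  rw [h1, h2, monomial_mul, one_mul]

/-- indicator exponent vector of a finset -/
noncomputable def ind {n : ℕ} (B : Finset (Fin n)) : Fin n →₀ ℕ := ∑ l ∈ B, Finsupp.single l 1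

theorem ind_insert {n : ℕ} {x : Fin n} {s : Finset (Fin n)} (hx : x ∉ s) :
    ind (insert x s) = Finsupp.single x 1 + ind s := by
  rw [ind, Finset.sum_insert hx, ← ind]

theorem prod_X_eq {n : ℕ} (B : Finset (Fin n)) :
    (∏ l ∈ B, (X l : MvPolynomial (Fin n) K)) = monomial (ind B) 1 := by
  classical
  induction B using Finset.induction with
  | empty => simp [ind, monomial_zero']
  | insert _ _ hnot ih =>
      rw [Finset.prod_insert hnot, ih, ind_insert hnot,
        show (X _ : MvPolynomial (Fin n) K) = monomial (Finsupp.single _ 1) 1 by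
          rw [← X_pow_eq_monomial, pow_one],
        monomial_mul, one_mul]

theorem ind_apply {n : ℕ} (B : Finset (Fin n)) (x : Fin n) :
    ind B x = if x ∈ B then 1 else 0 := by
  classical
  rw [ind, Finset.sum_apply']
  simp only [Finsupp.single_apply]
  rw [Finset.sum_ite_eq' B x (fun _ => 1)]

theorem ind_image_castSucc {n : ℕ} (B : Finset (Fin n)) :
    ind (B.image Fin.castSucc) = Finsupp.mapDomain Fin.castSucc (ind B) := by
  classical
  induction B using Finset.induction with
  | empty => simp [ind]
  | insert _ _ hnot ih =>
      rename_i a s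
      have hnot' : Fin.castSucc a ∉ s.image Fin.castSucc := by
        simp only [Finset.mem_image, not_exists, not_and]
        intro y hy hxy
        exact hnot ((Fin.castSucc_injective n hxy) ▸ hy)
      rw [Finset.image_insert, ind_insert hnot', ind_insert hnot, Finsupp.mapDomain_add,
        Finsupp.mapDomain_single, ih]

variable {d : ℕ} {M : Matroid (Fin d)} {c : Fin d} {M' : Matroid (Fin (d + 1))}

/-- `M'` is the series extension of `M` at `c`. -/
def SerExt (M : Matroid (Fin d)) (c : Fin d) (M' : Matroid (Fin (d + 1))) : Prop :=
  ∀ S : Set (Fin (d + 1)), M'.IsBase S ↔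
      ((∃ B : Set (Fin d), M.IsBase B ∧ S = Fin.castSucc '' B ∪ {Fin.last d}) ∨
       (∃ B : Set (Fin d), M.IsBase B ∧ c ∉ B ∧ S = Fin.castSucc '' B ∪ {Fin.castSucc c}))

noncomputable def d1 (h' : SerExt M c M') (B : {B : Finset (Fin d) // M.IsBase ↑B}) :
    {T : Finset (Fin (d + 1)) // M'.IsBase ↑T} := by
  refine ⟨insert (Fin.last d) (B.1.image Fin.castSucc), ?_⟩
  rw [h']
  left
  refine ⟨↑B.1, B.2, ?_⟩
  rw [Finset.coe_insert, Finset.coe_image, Set.insert_eq, Set.union_comm]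

noncomputable def d2 (h' : SerExt M c M') (B : {B : Finset (Fin d) // M.IsBase ↑B})
    (hc : c ∉ B.1) : {T : Finset (Fin (d + 1)) // M'.IsBase ↑T} := by
  refine ⟨insert (Fin.castSucc c) (B.1.image Fin.castSucc), ?_⟩
  rw [h']
  right
  refine ⟨↑B.1, B.2, by simpa using hc, ?_⟩
  rw [Finset.coe_insert, Finset.coe_image, Set.insert_eq, Set.union_comm]

theorem last_mem_d1 (h' : SerExt M c M') (B) : Fin.last d ∈ (d1 h' B).1 :=
  Finset.mem_insert_self _ _

theorem last_not_mem_d2 (h' : SerExt M c M') (B) (hc : c ∉ B.1) :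
    Fin.last d ∉ (d2 h' B hc).1 := by
  simp only [d2, Finset.mem_insert, Finset.mem_image, not_or]
  constructor
  · exact (Fin.castSucc_lt_last c).ne'
  · rintro ⟨x, -, hx⟩
    exact (Fin.castSucc_lt_last x).ne hx

theorem d1_val (h' : SerExt M c M') (B) :
    (d1 h' B).1 = insert (Fin.last d) (B.1.image Fin.castSucc) := rfl

theorem d2_val (h' : SerExt M c M') (B) (hc : c ∉ B.1) :
    (d2 h' B hc).1 = insert (Fin.castSucc c) (B.1.image Fin.castSucc) := rfl

theorem d1_inj (h' : SerExt M c M') : Function.Injective (d1 h') := by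
  intro A B hAB
  have h1 := congrArg (fun T => T.1) hAB
  simp only [d1_val] at h1
  apply Subtype.ext
  apply Finset.ext
  intro x
  have h2 := Finset.ext_iff.mp h1 (Fin.castSucc x)
  simp only [Finset.mem_insert, Finset.mem_image] at h2
  constructor
  · intro hx
    rcases h2.mp (Or.inr ⟨x, hx, rfl⟩) with h | ⟨y, hy, hxy⟩
    · exact absurd h (Fin.castSucc_lt_last x).ne
    · rwa [← Fin.castSucc_injective d hxy]
  · intro hx
    rcases h2.mpr (Or.inr ⟨x, hx, rfl⟩) with h | ⟨y, hy, hxy⟩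
    · exact absurd h (Fin.castSucc_lt_last x).ne
    · rwa [← Fin.castSucc_injective d hxy]

theorem tau_cases (h' : SerExt M c M') (T : {T : Finset (Fin (d + 1)) // M'.IsBase ↑T}) :
    ∃ B : {B : Finset (Fin d) // M.IsBase ↑B},
      T = d1 h' B ∨ ∃ hc : c ∉ B.1, T = d2 h' B hc := by
  classical
  rcases (h' ↑T.1).mp T.2 with ⟨B, hB, hS⟩ | ⟨B, hB, hcB, hS⟩
  · refine ⟨⟨(Set.toFinite B).toFinset, by rwa [Set.Finite.coe_toFinset]⟩, Or.inl ?_⟩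
    apply Subtype.ext
    apply Finset.coe_injective
    rw [d1_val, Finset.coe_insert, Finset.coe_image, Set.Finite.coe_toFinset, hS,
      Set.insert_eq, Set.union_comm]
  · refine ⟨⟨(Set.toFinite B).toFinset, by rwa [Set.Finite.coe_toFinset]⟩,
      Or.inr ⟨by simpa using hcB, ?_⟩⟩
    apply Subtype.ext
    apply Finset.coe_injective
    rw [d2_val, Finset.coe_insert, Finset.coe_image, Set.Finite.coe_toFinset, hS,
      Set.insert_eq, Set.union_comm]

noncomputable def body (h' : SerExt M c M') (T : {T : Finset (Fin (d + 1)) // M'.IsBase ↑T}) :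
    {B : Finset (Fin d) // M.IsBase ↑B} :=
  (tau_cases h' T).choose

theorem body_spec (h' : SerExt M c M') (T) :
    T = d1 h' (body h' T) ∨ ∃ hc : c ∉ (body h' T).1, T = d2 h' (body h' T) hc :=
  (tau_cases h' T).choose_spec

theorem eq_d1_of_ty (h' : SerExt M c M') {T} (hty : Fin.last d ∈ T.1) :
    T = d1 h' (body h' T) := by
  rcases body_spec h' T with h | ⟨hc, h⟩
  · exact h
  · rw [h] at hty
    exact absurd hty (last_not_mem_d2 h' _ hc)

theorem exists_eq_d2_of_not_ty (h' : SerExt M c M') {T} (hty : Fin.last d ∉ T.1) :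
    ∃ hc : c ∉ (body h' T).1, T = d2 h' (body h' T) hc := by
  rcases body_spec h' T with h | h
  · rw [h] at hty
    exact absurd (last_mem_d1 h' _) hty
  · exact h

theorem body_d1 (h' : SerExt M c M') (B) : body h' (d1 h' B) = B := by
  have := eq_d1_of_ty h' (last_mem_d1 h' B)
  exact (d1_inj h' this.symm)

theorem d2_inj (h' : SerExt M c M') {A B} (hcA : c ∉ A.1) (hcB : c ∉ B.1)
    (h : d2 h' A hcA = d2 h' B hcB) : A = B := by
  have h1 := congrArg (fun T => T.1) h
  simp only [d2_val] at h1
  apply Subtype.ext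
  apply Finset.ext
  intro x
  have h2 := Finset.ext_iff.mp h1 (Fin.castSucc x)
  simp only [Finset.mem_insert, Finset.mem_image] at h2
  have hinj := Fin.castSucc_injective d
  constructor
  · intro hx
    rcases h2.mp (Or.inr ⟨x, hx, rfl⟩) with h3 | ⟨y, hy, hxy⟩
    · exact absurd (hinj h3 ▸ hx) hcA
    · rwa [← hinj hxy]
  · intro hx
    rcases h2.mpr (Or.inr ⟨x, hx, rfl⟩) with h3 | ⟨y, hy, hxy⟩
    · exact absurd (hinj h3 ▸ hx) hcB
    · rwa [← hinj hxy]

theorem body_d2 (h' : SerExt M c M') (B) (hc : c ∉ B.1) : body h' (d2 h' B hc) = B := by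
  obtain ⟨hc', heq⟩ := exists_eq_d2_of_not_ty h' (last_not_mem_d2 h' B hc)
  exact (d2_inj h' hc hc' heq).symm


/-! ### weighted sums -/

noncomputable def wsum {α : Type} (w : α → ℕ) : (α →₀ ℕ) →+ ℕ where
  toFun a := a.sum fun t n => n * w t
  map_zero' := Finsupp.sum_zero_index
  map_add' a b := by
    exact Finsupp.sum_add_index' (fun t => zero_mul (w t)) (fun t m n => add_mul m n (w t))

theorem wsum_single {α : Type} (w : α → ℕ) (t : α) (n : ℕ) :
    wsum w (Finsupp.single t n) = n * w t := by
  simp [wsum, Finsupp.sum_single_index]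

theorem wsum_mapDomain {α β : Type} (w : β → ℕ) (g : α → β) (a : α →₀ ℕ) :
    wsum w (Finsupp.mapDomain g a) = wsum (fun t => w (g t)) a := by
  have : (wsum w).comp (Finsupp.mapDomain.addMonoidHom g) = wsum (fun t => w (g t)) := by
    apply Finsupp.addHom_ext
    intro t n
    simp only [AddMonoidHom.coe_comp, Function.comp_apply]
    rw [show (Finsupp.mapDomain.addMonoidHom g) (Finsupp.single t n)
        = Finsupp.single (g t) n from Finsupp.mapDomain_single, wsum_single, wsum_single]
  exact DFunLike.congr_fun this a

theorem wsum_congr {α : Type} {w w' : α → ℕ} (h : ∀ t, w t = w' t) (a : α →₀ ℕ) :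
    wsum w a = wsum w' a := by
  simp only [wsum, AddMonoidHom.coe_mk, ZeroHom.coe_mk]
  exact Finsupp.sum_congr fun t _ => by rw [h t]

theorem wsum_le {α : Type} {w w' : α → ℕ} (h : ∀ t, w t ≤ w' t) (a : α →₀ ℕ) :
    wsum w a ≤ wsum w' a := by
  simp only [wsum, AddMonoidHom.coe_mk, ZeroHom.coe_mk]
  exact Finset.sum_le_sum fun t _ => Nat.mul_le_mul_left _ (h t)

theorem wsum_split {α : Type} (w w' : α → ℕ) (a : α →₀ ℕ) :
    wsum (fun t => w t + w' t) a = wsum w a + wsum w' a := by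
  simp only [wsum, AddMonoidHom.coe_mk, ZeroHom.coe_mk]
  rw [← Finsupp.sum_add]
  exact Finsupp.sum_congr fun t _ => by ring

theorem wsum_eq_sum_of_subset {α : Type} (w : α → ℕ) {a : α →₀ ℕ} {s : Finset α}
    (hs : a.support ⊆ s) : wsum w a = ∑ t ∈ s, a t * w t := by
  simp only [wsum, AddMonoidHom.coe_mk, ZeroHom.coe_mk]
  exact Finsupp.sum_of_support_subset a hs _ (fun t _ => zero_mul (w t))

theorem exists_of_wsum_ne_zero {α : Type} {w : α → ℕ} {a : α →₀ ℕ}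
    (h : wsum w a ≠ 0) : ∃ t, a t ≠ 0 ∧ w t ≠ 0 := by
  simp only [wsum, AddMonoidHom.coe_mk, ZeroHom.coe_mk, Finsupp.sum] at h
  obtain ⟨t, _, ht⟩ := Finset.exists_ne_zero_of_sum_ne_zero h
  exact ⟨t, fun h0 => ht (by rw [h0, zero_mul]), fun h0 => ht (by rw [h0, mul_zero])⟩

/-- total degree of an exponent vector -/
noncomputable def degF {α : Type} : (α →₀ ℕ) →+ ℕ := wsum fun _ => 1

theorem degF_single {α : Type} (t : α) (n : ℕ) : degF (Finsupp.single t n) = n := by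
  rw [degF, wsum_single, mul_one]

theorem degF_eq_zero {α : Type} {a : α →₀ ℕ} (h : degF a = 0) : a = 0 := by
  ext t
  by_contra ht
  have hts : t ∈ a.support := Finsupp.mem_support_iff.mpr ht
  have := wsum_eq_sum_of_subset (fun _ => 1) (le_refl a.support)
  rw [degF] at h
  rw [this] at h
  simp only [mul_one] at h
  exact ht (Finset.sum_eq_zero_iff.mp h t hts)

/-! ### the weight maps -/

variable {d : ℕ} {M : Matroid (Fin d)} {c : Fin d} {M' : Matroid (Fin (d + 1))}

noncomputable def WB {n : ℕ} (N : Matroid (Fin n)) :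
    ({B : Finset (Fin n) // N.IsBase ↑B} →₀ ℕ) →+ (Fin n →₀ ℕ) :=
  Wt fun B => ind B.1

theorem WB_single {n : ℕ} (N : Matroid (Fin n)) (B) (m : ℕ) :
    WB N (Finsupp.single B m) = m • ind B.1 := Wt_single _ _ _

noncomputable def Fm (h' : SerExt M c M') :
    ({T : Finset (Fin (d + 1)) // M'.IsBase ↑T} →₀ ℕ) →+
      ({B : Finset (Fin d) // M.IsBase ↑B} →₀ ℕ) :=
  Finsupp.mapDomain.addMonoidHom (body h')

theorem Fm_single (h' : SerExt M c M') (T) (n : ℕ) :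
    Fm h' (Finsupp.single T n) = Finsupp.single (body h' T) n := Finsupp.mapDomain_single

noncomputable def pdeg (M' : Matroid (Fin (d + 1))) :
    ({T : Finset (Fin (d + 1)) // M'.IsBase ↑T} →₀ ℕ) →+ ℕ :=
  wsum fun T => if Fin.last d ∈ T.1 then 1 else 0

noncomputable def qdeg (M' : Matroid (Fin (d + 1))) :
    ({T : Finset (Fin (d + 1)) // M'.IsBase ↑T} →₀ ℕ) →+ ℕ :=
  wsum fun T => if Fin.last d ∈ T.1 then 0 else 1

noncomputable def avoidc (M : Matroid (Fin d)) (c : Fin d) :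
    ({B : Finset (Fin d) // M.IsBase ↑B} →₀ ℕ) →+ ℕ :=
  wsum fun B => if c ∈ B.1 then 0 else 1

theorem ind_d1 (h' : SerExt M c M') (B) :
    ind (d1 h' B).1 = Finsupp.mapDomain Fin.castSucc (ind B.1)
      + Finsupp.single (Fin.last d) 1 := by
  have hnot : Fin.last d ∉ B.1.image Fin.castSucc := by
    simp only [Finset.mem_image, not_exists, not_and]
    exact fun x _ => (Fin.castSucc_lt_last x).ne
  rw [d1_val, ind_insert hnot, ind_image_castSucc]
  exact add_comm _ _

theorem ind_d2 (h' : SerExt M c M') (B) (hc : c ∉ B.1) :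
    ind (d2 h' B hc).1 = Finsupp.mapDomain Fin.castSucc (ind B.1)
      + Finsupp.single (Fin.castSucc c) 1 := by
  have hnot : Fin.castSucc c ∉ B.1.image Fin.castSucc := by
    simp only [Finset.mem_image, not_exists, not_and]
    exact fun x hx h => hc ((Fin.castSucc_injective d h) ▸ hx)
  rw [d2_val, ind_insert hnot, ind_image_castSucc]
  exact add_comm _ _

/-- The key structural formula for the weight of an exponent vector for `M'`. -/
theorem WB'_eq (h' : SerExt M c M') (a) :
    WB M' a = Finsupp.mapDomain Fin.castSucc (WB M (Fm h' a))
      + pdeg M' a • Finsupp.single (Fin.last d) 1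
      + qdeg M' a • Finsupp.single (Fin.castSucc c) 1 := by
  induction a using Finsupp.induction with
  | zero => simp
  | single_add T n f hT hn ih =>
      rw [map_add, map_add, map_add, map_add, map_add, Finsupp.mapDomain_add, add_smul, add_smul, ih]
      have hsingle : WB M' (Finsupp.single T n)
          = Finsupp.mapDomain Fin.castSucc (WB M (Fm h' (Finsupp.single T n)))
            + pdeg M' (Finsupp.single T n) • Finsupp.single (Fin.last d) 1
            + qdeg M' (Finsupp.single T n) • Finsupp.single (Fin.castSucc c) 1 := by
        rw [Fm_single, WB_single, WB_single, pdeg, qdeg, wsum_single, wsum_single]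
        by_cases hty : Fin.last d ∈ T.1
        · rw [if_pos hty, if_pos hty, mul_one, mul_zero, zero_smul, add_zero]
          conv_lhs => rw [eq_d1_of_ty h' hty]
          rw [ind_d1, smul_add, Finsupp.mapDomain_smul]
        · obtain ⟨hc, heq⟩ := exists_eq_d2_of_not_ty h' hty
          rw [if_neg hty, if_neg hty, mul_one, mul_zero, zero_smul]
          conv_lhs => rw [heq]
          rw [ind_d2, smul_add, Finsupp.mapDomain_smul]
          abel
      rw [hsingle]
      abel


theorem WB'_apply_last (a) : WB M' a (Fin.last d) = pdeg M' a := by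
  show Wt (fun (B : {B : Finset (Fin (d+1)) // M'.IsBase ↑B}) => ind B.1) a (Fin.last d) = _
  rw [Wt_apply]
  show _ = wsum (fun (T : {B : Finset (Fin (d+1)) // M'.IsBase ↑B}) =>
    if Fin.last d ∈ T.1 then 1 else 0) a
  simp only [wsum, AddMonoidHom.coe_mk, ZeroHom.coe_mk]
  exact Finsupp.sum_congr fun T _ => by rw [ind_apply]

theorem card_eq' (T T' : {T : Finset (Fin (d + 1)) // M'.IsBase ↑T}) : T.1.card = T'.1.card := by
  have h := T.2.encard_eq_encard_of_isBase T'.2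
  rw [Set.encard_coe_eq_coe_finsetCard, Set.encard_coe_eq_coe_finsetCard] at h
  exact_mod_cast h

theorem degF_Wt {α β : Type} (u : α → β →₀ ℕ) (a : α →₀ ℕ) :
    degF (Wt u a) = wsum (fun t => degF (u t)) a := by
  induction a using Finsupp.induction with
  | zero => simp
  | single_add t n f ht hn ih =>
      rw [map_add, map_add, map_add, ih, Wt_single, wsum_single]
      congr 1
      rw [map_nsmul, smul_eq_mul]

theorem wsum_zero {α : Type} (a : α →₀ ℕ) : wsum (fun _ => (0:ℕ)) a = 0 := by
  simp [wsum, Finsupp.sum]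

theorem wsum_const {α : Type} (k : ℕ) (a : α →₀ ℕ) : wsum (fun _ => k) a = degF a * k := by
  simp only [wsum, degF, AddMonoidHom.coe_mk, ZeroHom.coe_mk, Finsupp.sum]
  rw [← Finset.sum_mul]
  congr 1
  exact Finset.sum_congr rfl fun t _ => (mul_one _).symm

theorem degF_ind {n : ℕ} (B : Finset (Fin n)) : degF (ind B) = B.card := by
  rw [ind, map_sum]
  rw [Finset.sum_congr rfl fun l _ => degF_single l 1]
  simp

theorem deg_eq' (h' : SerExt M c M') {a b} (hW : WB M' a = WB M' b) : degF a = degF b := by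
  rcases isEmpty_or_nonempty {T : Finset (Fin (d + 1)) // M'.IsBase ↑T} with he | hne
  · have : a = b := Finsupp.ext fun T => isEmptyElim T
    rw [this]
  · obtain ⟨T₀⟩ := hne
    have h1 : degF (WB M' a) = degF (WB M' b) := by rw [hW]
    have h2 : ∀ x, degF (WB M' x) = degF x * T₀.1.card := by
      intro x
      show degF (Wt (fun (B : {B : Finset (Fin (d+1)) // M'.IsBase ↑B}) => ind B.1) x) = _
      rw [degF_Wt]
      rw [wsum_congr (fun T => by rw [degF_ind, card_eq' T T₀]) x, wsum_const]
    rw [h2, h2] at h1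
    have hpos : 0 < T₀.1.card := by
      have : T₀.1.Nonempty := by
        rcases body_spec h' T₀ with hT | ⟨hc, hT⟩
        · rw [hT, d1_val]; exact Finset.insert_nonempty _ _
        · rw [hT, d2_val]; exact Finset.insert_nonempty _ _
      exact Finset.card_pos.mpr this
    exact Nat.eq_of_mul_eq_mul_right hpos h1


theorem pdeg_add_qdeg (a) : pdeg M' a + qdeg M' a = degF a := by
  show wsum _ a + wsum _ a = wsum _ a
  rw [← wsum_split]
  exact wsum_congr (fun T => by split_ifs <;> rfl) a

theorem qdeg_eq' (h' : SerExt M c M') {a b} (hW : WB M' a = WB M' b) :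
    qdeg M' a = qdeg M' b := by
  have h1 : pdeg M' a = pdeg M' b := by
    rw [← WB'_apply_last, ← WB'_apply_last, hW]
  have h2 := deg_eq' h' hW
  have h3 := pdeg_add_qdeg (M' := M') a
  have h4 := pdeg_add_qdeg (M' := M') b
  omega

theorem pdeg_eq' {a b} (hW : WB M' a = WB M' b) : pdeg M' a = pdeg M' b := by
  rw [← WB'_apply_last, ← WB'_apply_last, hW]

theorem WBF_eq (h' : SerExt M c M') {a b} (hW : WB M' a = WB M' b) :
    WB M (Fm h' a) = WB M (Fm h' b) := by
  have hp := pdeg_eq' hW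
  have hq := qdeg_eq' h' hW
  have h1 := hW
  rw [WB'_eq h' a, WB'_eq h' b, hp, hq] at h1
  exact Finsupp.mapDomain_injective (Fin.castSucc_injective d)
    (add_right_cancel (add_right_cancel h1))

theorem qdeg_le_avoid (h' : SerExt M c M') (a) : qdeg M' a ≤ avoidc M c (Fm h' a) := by
  have h1 : avoidc M c (Fm h' a)
      = wsum (fun T => if c ∈ (body h' T).1 then 0 else 1) a := wsum_mapDomain _ _ a
  rw [h1]
  refine wsum_le (fun T => ?_) a
  by_cases hty : Fin.last d ∈ T.1
  · rw [if_pos hty]; exact Nat.zero_le _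
  · obtain ⟨hc, -⟩ := exists_eq_d2_of_not_ty h' hty
    rw [if_neg hty, if_neg hc]

theorem avoid_pair {i j k l : {B : Finset (Fin d) // M.IsBase ↑B}}
    (hW : WB M (Finsupp.single i 1 + Finsupp.single j 1)
      = WB M (Finsupp.single k 1 + Finsupp.single l 1)) :
    avoidc M c (Finsupp.single i 1 + Finsupp.single j 1)
      = avoidc M c (Finsupp.single k 1 + Finsupp.single l 1) := by
  have h1 := congrArg (fun v : Fin d →₀ ℕ => v c) hW
  simp only [map_add, WB_single, one_smul, Finsupp.add_apply] at h1
  rw [ind_apply, ind_apply, ind_apply, ind_apply] at h1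
  show avoidc M c _ = avoidc M c _
  rw [map_add, map_add]
  show wsum _ _ + wsum _ _ = wsum _ _ + wsum _ _
  rw [wsum_single, wsum_single, wsum_single, wsum_single]
  simp only [one_mul]
  split_ifs at h1 ⊢ <;> omega

theorem exists_lift (h' : SerExt M c M') (γ) (q : ℕ) (hq : q ≤ avoidc M c γ) :
    ∃ a, Fm h' a = γ ∧ qdeg M' a = q := by
  induction q with
  | zero =>
      refine ⟨Finsupp.mapDomain (d1 h') γ, ?_, ?_⟩
      · show Finsupp.mapDomain (body h') _ = γ
        rw [← Finsupp.mapDomain_comp]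
        have : (body h') ∘ (d1 h') = id := funext fun B => body_d1 h' B
        rw [this, Finsupp.mapDomain_id]
      · have h1 : qdeg M' (Finsupp.mapDomain (d1 h') γ)
            = wsum (fun B => if Fin.last d ∈ (d1 h' B).1 then 0 else 1) γ :=
          wsum_mapDomain _ _ γ
        rw [h1]
        rw [wsum_congr (fun B => by rw [if_pos (last_mem_d1 h' B)]) γ]
        exact wsum_zero _
  | succ q ih =>
      obtain ⟨a, hFa, hqa⟩ := ih (Nat.le_of_succ_le hq)
      have hsplit : avoidc M c γ
          = wsum (fun T => if Fin.last d ∈ T.1 ∧ c ∉ (body h' T).1 then 1 else 0) a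
            + qdeg M' a := by
        rw [← hFa]
        have h1 : avoidc M c (Fm h' a)
            = wsum (fun T => if c ∈ (body h' T).1 then 0 else 1) a := wsum_mapDomain _ _ a
        rw [h1, show (qdeg M') a = wsum (fun (T : {T : Finset (Fin (d+1)) // M'.IsBase ↑T}) =>
          if Fin.last d ∈ T.1 then 0 else 1) a from rfl, ← wsum_split]
        refine wsum_congr (fun T => ?_) a
        by_cases hty : Fin.last d ∈ T.1
        · by_cases hcb : c ∈ (body h' T).1 <;> simp [hty, hcb]
        · obtain ⟨hc, -⟩ := exists_eq_d2_of_not_ty h' hty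
          simp [hty, hc]
      have hpos : wsum (fun T => if Fin.last d ∈ T.1 ∧ c ∉ (body h' T).1 then 1 else 0) a
          ≠ 0 := by omega
      obtain ⟨T, hT0, hTw⟩ := exists_of_wsum_ne_zero hpos
      have hTcond : Fin.last d ∈ T.1 ∧ c ∉ (body h' T).1 := by
        by_contra hcon
        rw [if_neg hcon] at hTw
        exact hTw rfl
      obtain ⟨hty, hcb⟩ := hTcond
      have hTe : T = d1 h' (body h' T) := eq_d1_of_ty h' hty
      set T2 := d2 h' (body h' T) hcb with hT2
      set rest := a - Finsupp.single T 1 with hrest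
      have ha : a = Finsupp.single T 1 + rest := by
        ext x
        rw [hrest, Finsupp.add_apply, Finsupp.tsub_apply, Finsupp.single_apply]
        have := hT0
        split_ifs with hx
        · subst hx; omega
        · omega
      refine ⟨Finsupp.single T2 1 + rest, ?_, ?_⟩
      · rw [map_add, Fm_single, body_d2]
        rw [← hFa, ha, map_add, Fm_single]
      · have e1 : qdeg M' (Finsupp.single T2 1) = 1 := by
          show wsum _ _ = 1
          rw [wsum_single, if_neg (last_not_mem_d2 h' _ hcb), mul_one]
        have e2 : qdeg M' (Finsupp.single T 1) = 0 := by
          show wsum _ _ = 0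
          rw [wsum_single, if_pos hty, mul_zero]
        rw [ha, map_add, e2, zero_add] at hqa
        rw [map_add, e1]
        omega


/-! ### quadratic binomials of the extension and swap moves -/

def QB (M' : Matroid (Fin (d + 1))) (K : Type) [Field K] :
    Set (MvPolynomial {T : Finset (Fin (d + 1)) // M'.IsBase ↑T} K) :=
  {f | (∃ i j k l, f = X i * X j - X k * X l) ∧
    (aeval fun T : {T : Finset (Fin (d + 1)) // M'.IsBase ↑T} =>
      monomial (ind T.1) (1 : K)) f = 0}

theorem moveRel_QB {m : {T : Finset (Fin (d + 1)) // M'.IsBase ↑T} →₀ ℕ}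
    {i j k l : {T : Finset (Fin (d + 1)) // M'.IsBase ↑T}}
    (hW : WB M' (Finsupp.single i 1 + Finsupp.single j 1)
        = WB M' (Finsupp.single k 1 + Finsupp.single l 1)) :
    MoveRel (QB M' K) (m + (Finsupp.single i 1 + Finsupp.single j 1))
      (m + (Finsupp.single k 1 + Finsupp.single l 1)) := by
  refine ⟨m, _, _, ⟨⟨i, j, k, l, by rw [X_mul_X, X_mul_X]⟩, ?_⟩, rfl, rfl⟩
  rw [map_sub, aeval_monomial_eq, aeval_monomial_eq]
  rw [show Wt (fun T : {T : Finset (Fin (d + 1)) // M'.IsBase ↑T} => ind T.1)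
      (Finsupp.single i 1 + Finsupp.single j 1) = WB M' _ from rfl,
    show Wt (fun T : {T : Finset (Fin (d + 1)) // M'.IsBase ↑T} => ind T.1)
      (Finsupp.single k 1 + Finsupp.single l 1) = WB M' _ from rfl, hW, sub_self]

/-! ### fiber formulas -/

theorem sum_ite_coord {α : Type} [DecidableEq α] (a : α →₀ ℕ) (T₀ : α) :
    (a.sum fun T n => if T = T₀ then n else 0) = a T₀ := by
  rw [Finsupp.sum, Finset.sum_ite_eq' a.support T₀ (fun T => a T)]
  split_ifs with h
  · rfl
  · exact (Finsupp.notMem_support_iff.mp h).symm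

theorem Fm_apply (h' : SerExt M c M') (a) (B) :
    Fm h' a B = a.sum fun T n => if body h' T = B then n else 0 := by
  classical
  show Finsupp.mapDomain (body h') a B = _
  rw [Finsupp.mapDomain, Finsupp.sum_apply]
  exact Finsupp.sum_congr fun T _ => Finsupp.single_apply

theorem d2_proof_irrel (h' : SerExt M c M') {A B} (hA : c ∉ A.1) (hB : c ∉ B.1)
    (hAB : A = B) : d2 h' A hA = d2 h' B hB := by subst hAB; rfl

theorem ty_ne (h' : SerExt M c M') (A A') (hcA' : c ∉ A'.1) : d1 h' A ≠ d2 h' A' hcA' :=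
  fun h => last_not_mem_d2 h' A' hcA' (h ▸ last_mem_d1 h' A)

theorem Fm_apply_d2 (h' : SerExt M c M') (a) (B) (hc : c ∉ B.1) :
    Fm h' a B = a (d1 h' B) + a (d2 h' B hc) := by
  classical
  have key : (a.sum fun T n => if body h' T = B then n else 0)
      = a.sum fun T n =>
          (if T = d1 h' B then n else 0) + (if T = d2 h' B hc then n else 0) := by
    refine Finsupp.sum_congr fun T _ => ?_
    by_cases h1 : T = d1 h' B
    · subst h1
      rw [if_pos (body_d1 h' B), if_pos rfl, if_neg (ty_ne h' B B hc), add_zero]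
    · by_cases h2 : T = d2 h' B hc
      · subst h2
        rw [if_pos (body_d2 h' B hc), if_neg h1, if_pos rfl, zero_add]
      · rw [if_neg h1, if_neg h2, add_zero]
        rcases body_spec h' T with hT | ⟨hc', hT⟩
        · rw [if_neg]
          intro hb
          exact h1 (by rw [hT, hb])
        · rw [if_neg]
          intro hb
          exact h2 (by rw [hT]; exact d2_proof_irrel h' hc' hc hb)
  rw [Fm_apply, key, Finsupp.sum_add, sum_ite_coord, sum_ite_coord]

theorem Fm_apply_d1 (h' : SerExt M c M') (a) (B) (hc : c ∈ B.1) :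
    Fm h' a B = a (d1 h' B) := by
  classical
  have key : (a.sum fun T n => if body h' T = B then n else 0)
      = a.sum fun T n => if T = d1 h' B then n else 0 := by
    refine Finsupp.sum_congr fun T _ => ?_
    by_cases h1 : T = d1 h' B
    · subst h1
      rw [if_pos (body_d1 h' B), if_pos rfl]
    · rw [if_neg h1]
      rcases body_spec h' T with hT | ⟨hc', hT⟩
      · rw [if_neg]
        intro hb
        exact h1 (by rw [hT, hb])
      · rw [if_neg]
        intro hb
        rw [hb] at hc'
        exact hc' hc
  rw [Fm_apply, key, sum_ite_coord]

/-! ### distance -/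

noncomputable def dist {α : Type} (a b : α →₀ ℕ) : ℕ := degF (a - b) + degF (b - a)

theorem dist_comm {α : Type} (a b : α →₀ ℕ) : dist a b = dist b a := by
  rw [dist, dist, add_comm]

theorem eq_of_dist_eq_zero {α : Type} {a b : α →₀ ℕ} (h : dist a b = 0) : a = b := by
  rw [dist] at h
  have h1 : a - b = 0 := degF_eq_zero (by omega)
  have h2 : b - a = 0 := degF_eq_zero (by omega)
  exact le_antisymm (tsub_eq_zero_iff_le.mp h1) (tsub_eq_zero_iff_le.mp h2)

theorem dist_eq_sum {α : Type} [DecidableEq α] {a b : α →₀ ℕ} {s : Finset α}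
    (ha : a.support ⊆ s) (hb : b.support ⊆ s) :
    dist a b = ∑ t ∈ s, ((a t - b t) + (b t - a t)) := by
  rw [dist, degF, wsum_eq_sum_of_subset _ (Finsupp.support_tsub.trans ha),
    wsum_eq_sum_of_subset _ (Finsupp.support_tsub.trans hb), ← Finset.sum_add_distrib]
  exact Finset.sum_congr rfl fun t _ => by
    rw [Finsupp.tsub_apply, Finsupp.tsub_apply, mul_one, mul_one]

/-! ### the swap step -/

theorem step_toward (h' : SerExt M c M')
    {a b : {T : Finset (Fin (d + 1)) // M'.IsBase ↑T} →₀ ℕ}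
    (hF : Fm h' a = Fm h' b) (hq : qdeg M' a = qdeg M' b)
    {B} (hgt : b (d1 h' B) < a (d1 h' B)) :
    ∃ a', MoveRel (QB M' K) a a' ∧ Fm h' a' = Fm h' a ∧ qdeg M' a' = qdeg M' a ∧
      dist a' b < dist a b := by
  classical
  have hFB := DFunLike.congr_fun hF B
  have hcB : c ∉ B.1 := by
    intro hc
    have h1 := Fm_apply_d1 h' a B hc
    have h2 := Fm_apply_d1 h' b B hc
    rw [h1, h2] at hFB
    omega
  have hfibB : a (d1 h' B) + a (d2 h' B hcB) = b (d1 h' B) + b (d2 h' B hcB) := by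
    have h1 := Fm_apply_d2 h' a B hcB
    have h2 := Fm_apply_d2 h' b B hcB
    rw [h1, h2] at hFB
    exact hFB
  have ha2 : a (d2 h' B hcB) < b (d2 h' B hcB) := by omega
  have hex2 : ∃ T', (Fin.last d ∉ T'.1) ∧ b T' < a T' := by
    by_contra hcon
    push_neg at hcon
    have hq1 : qdeg M' a = ∑ T ∈ a.support ∪ b.support,
        a T * (if Fin.last d ∈ T.1 then 0 else 1) :=
      wsum_eq_sum_of_subset _ Finset.subset_union_left
    have hq2 : qdeg M' b = ∑ T ∈ a.support ∪ b.support,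
        b T * (if Fin.last d ∈ T.1 then 0 else 1) :=
      wsum_eq_sum_of_subset _ Finset.subset_union_right
    have hlt : (∑ T ∈ a.support ∪ b.support, a T * (if Fin.last d ∈ T.1 then 0 else 1))
        < ∑ T ∈ a.support ∪ b.support, b T * (if Fin.last d ∈ T.1 then 0 else 1) := by
      apply Finset.sum_lt_sum
      · intro T hT
        by_cases hty : Fin.last d ∈ T.1
        · rw [if_pos hty, mul_zero, mul_zero]
        · rw [if_neg hty, mul_one, mul_one]
          exact hcon T hty
      · refine ⟨d2 h' B hcB, ?_, ?_⟩
        · exact Finset.mem_union.mpr (Or.inr (Finsupp.mem_support_iff.mpr (by omega)))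
        · rw [if_neg (last_not_mem_d2 h' B hcB), mul_one, mul_one]
          exact ha2
    omega
  obtain ⟨T', hty', hT'lt⟩ := hex2
  obtain ⟨hcB', hT'e⟩ := exists_eq_d2_of_not_ty h' hty'
  have hBB' : body h' T' ≠ B := by
    intro hEq
    rw [hT'e, d2_proof_irrel h' hcB' hcB hEq] at hT'lt
    omega
  have hfibB' : a (d1 h' (body h' T')) + a (d2 h' (body h' T') hcB')
      = b (d1 h' (body h' T')) + b (d2 h' (body h' T') hcB') := by
    have h1 := Fm_apply_d2 h' a (body h' T') hcB'
    have h2 := Fm_apply_d2 h' b (body h' T') hcB'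
    have h3 := DFunLike.congr_fun hF (body h' T')
    rw [h1, h2] at h3
    exact h3
  have ha1' : a (d1 h' (body h' T')) < b (d1 h' (body h' T')) := by
    rw [hT'e] at hT'lt
    omega
  -- distinctness
  have hTT : d1 h' B ≠ T' := by rw [hT'e]; exact ty_ne h' _ _ _
  have h13 : d1 h' B ≠ d1 h' (body h' T') := fun h => hBB' ((d1_inj h' h).symm)
  have h14 : d1 h' B ≠ d2 h' B hcB := ty_ne h' _ _ _
  have h23 : T' ≠ d1 h' (body h' T') := by rw [hT'e]; exact fun h => (ty_ne h' _ _ _) h.symm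
  have h24 : T' ≠ d2 h' B hcB := by
    rw [hT'e]
    intro h
    exact hBB' (d2_inj h' hcB' hcB h)
  have h34 : d1 h' (body h' T') ≠ d2 h' B hcB := ty_ne h' _ _ _
  set rest := a - Finsupp.single (d1 h' B) 1 - Finsupp.single T' 1 with hrest
  have hadecomp : a = rest + (Finsupp.single (d1 h' B) 1 + Finsupp.single T' 1) := by
    ext x
    simp only [Finsupp.add_apply, hrest, Finsupp.tsub_apply, Finsupp.single_apply]
    by_cases h1 : d1 h' B = x
    · subst h1
      rw [if_pos rfl, if_neg (fun h => hTT h.symm)]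
      omega
    · by_cases h2 : T' = x
      · subst h2
        rw [if_neg h1, if_pos rfl]
        omega
      · rw [if_neg h1, if_neg h2]
        omega
  set a' := rest + (Finsupp.single (d1 h' (body h' T')) 1 + Finsupp.single (d2 h' B hcB) 1) with ha'
  have hco : ∀ x, a' x = a x - (if d1 h' B = x then 1 else 0) - (if T' = x then 1 else 0)
      + ((if d1 h' (body h' T') = x then 1 else 0) + (if d2 h' B hcB = x then 1 else 0)) := by
    intro x
    rw [ha', hrest]
    simp only [Finsupp.add_apply, Finsupp.tsub_apply, Finsupp.single_apply]
  have hc1 : a' (d1 h' B) = a (d1 h' B) - 1 := by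
    rw [hco]
    rw [if_pos rfl, if_neg (fun h => hTT h.symm), if_neg (fun h => h13 h.symm),
      if_neg (fun h => h14 h.symm)]
    omega
  have hc2 : a' T' = a T' - 1 := by
    rw [hco]
    rw [if_neg hTT, if_pos rfl, if_neg (fun h => h23 h.symm), if_neg (fun h => h24 h.symm)]
    omega
  have hc3 : a' (d1 h' (body h' T')) = a (d1 h' (body h' T')) + 1 := by
    rw [hco]
    rw [if_neg h13, if_neg h23, if_pos rfl, if_neg (fun h => h34 h.symm)]
    omega
  have hc4 : a' (d2 h' B hcB) = a (d2 h' B hcB) + 1 := by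
    rw [hco]
    rw [if_neg h14, if_neg h24, if_neg h34, if_pos rfl]
    omega
  have hc5 : ∀ x, d1 h' B ≠ x → T' ≠ x → d1 h' (body h' T') ≠ x → d2 h' B hcB ≠ x →
      a' x = a x := by
    intro x hx1 hx2 hx3 hx4
    rw [hco, if_neg hx1, if_neg hx2, if_neg hx3, if_neg hx4]
    omega
  -- the four q/F computations on singles
  have e1 : qdeg M' (Finsupp.single (d1 h' B) 1) = 0 := by
    show wsum _ _ = 0
    rw [wsum_single, if_pos (last_mem_d1 h' B), mul_zero]
  have e2 : qdeg M' (Finsupp.single T' 1) = 1 := by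
    show wsum _ _ = 1
    rw [wsum_single, if_neg hty', mul_one]
  have e3 : qdeg M' (Finsupp.single (d1 h' (body h' T')) 1) = 0 := by
    show wsum _ _ = 0
    rw [wsum_single, if_pos (last_mem_d1 h' (body h' T')), mul_zero]
  have e4 : qdeg M' (Finsupp.single (d2 h' B hcB) 1) = 1 := by
    show wsum _ _ = 1
    rw [wsum_single, if_neg (last_not_mem_d2 h' B hcB), mul_one]
  have f1 : Fm h' (Finsupp.single (d1 h' B) 1) = Finsupp.single B 1 := by
    rw [Fm_single, body_d1]
  have f2 : Fm h' (Finsupp.single T' 1) = Finsupp.single (body h' T') 1 := by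
    rw [Fm_single]
  have f3 : Fm h' (Finsupp.single (d1 h' (body h' T')) 1)
      = Finsupp.single (body h' T') 1 := by
    rw [Fm_single, body_d1]
  have f4 : Fm h' (Finsupp.single (d2 h' B hcB) 1) = Finsupp.single B 1 := by
    rw [Fm_single, body_d2]
  refine ⟨a', ?_, ?_, ?_, ?_⟩
  · conv_lhs => rw [hadecomp]
    rw [ha', hT'e]
    apply moveRel_QB
    rw [map_add, map_add, WB_single, WB_single, WB_single, WB_single, one_smul, one_smul,
      one_smul, one_smul, ind_d1, ind_d1, ind_d2, ind_d2, body_d2 h' (body h' T') hcB']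
    abel
  · rw [ha', map_add, map_add, f3, f4]
    conv_rhs => rw [hadecomp, map_add, map_add, f1, f2]
    abel
  · rw [ha', map_add, map_add, e3, e4]
    conv_rhs => rw [hadecomp, map_add, map_add, e1, e2]
  · have hsub1 : a.support ⊆ (a.support ∪ b.support) ∪ a'.support :=
      Finset.subset_union_left.trans Finset.subset_union_left
    have hsub2 : b.support ⊆ (a.support ∪ b.support) ∪ a'.support :=
      Finset.subset_union_right.trans Finset.subset_union_left
    have hsub3 : a'.support ⊆ (a.support ∪ b.support) ∪ a'.support :=
      Finset.subset_union_right
    rw [dist_eq_sum hsub3 hsub2, dist_eq_sum hsub1 hsub2]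
    apply Finset.sum_lt_sum
    · intro x hx
      by_cases hx1 : d1 h' B = x
      · subst hx1; rw [hc1]; omega
      · by_cases hx2 : T' = x
        · subst hx2; rw [hc2]; omega
        · by_cases hx3 : d1 h' (body h' T') = x
          · subst hx3; rw [hc3]; omega
          · by_cases hx4 : d2 h' B hcB = x
            · subst hx4; rw [hc4]; omega
            · rw [hc5 x hx1 hx2 hx3 hx4]
    · refine ⟨d1 h' B, hsub1 (Finsupp.mem_support_iff.mpr (by omega)), ?_⟩
      rw [hc1]
      omega

theorem connect_same (h' : SerExt M c M') (N : ℕ) :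
    ∀ a b, dist a b ≤ N → Fm h' a = Fm h' b → qdeg M' a = qdeg M' b →
      EqvGen (MoveRel (QB M' K)) a b := by
  induction N with
  | zero =>
      intro a b h0 _ _
      rw [eq_of_dist_eq_zero (Nat.le_zero.mp h0)]
      exact EqvGen.refl _
  | succ N ih =>
      intro a b hN hF hq
      by_cases hab : a = b
      · exact hab ▸ EqvGen.refl a
      have hex : ∃ B, a (d1 h' B) ≠ b (d1 h' B) := by
        by_contra hcon
        push_neg at hcon
        apply hab
        ext T
        by_cases hty : Fin.last d ∈ T.1
        · rw [eq_d1_of_ty h' hty]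
          exact hcon _
        · obtain ⟨hc, hTe⟩ := exists_eq_d2_of_not_ty h' hty
          have h1 := Fm_apply_d2 h' a (body h' T) hc
          have h2 := Fm_apply_d2 h' b (body h' T) hc
          have h3 := DFunLike.congr_fun hF (body h' T)
          rw [h1, h2] at h3
          have h4 := hcon (body h' T)
          rw [hTe]
          omega
      rcases hex with ⟨B, hBne⟩
      rcases Nat.lt_or_ge (b (d1 h' B)) (a (d1 h' B)) with hgt | hge
      · obtain ⟨a', hmove, hFa', hqa', hdist⟩ := step_toward (K := K) h' hF hq hgt
        have h5 : EqvGen (MoveRel (QB M' K)) a' b :=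
          ih a' b (by omega) (hFa'.trans hF) (hqa'.trans hq)
        exact EqvGen.trans _ _ _ (EqvGen.rel _ _ hmove) h5
      · have hgt' : a (d1 h' B) < b (d1 h' B) := lt_of_le_of_ne hge hBne
        obtain ⟨b', hmove, hFb', hqb', hdist⟩ := step_toward (K := K) h' hF.symm hq.symm hgt'
        have hd : dist a b' ≤ N := by
          have h6 : dist a b' = dist b' a := dist_comm _ _
          have h7 : dist a b = dist b a := dist_comm _ _
          omega
        have h5 : EqvGen (MoveRel (QB M' K)) a b' :=
          ih a b' hd (hF.trans hFb'.symm) (hq.trans hqb'.symm)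
        exact EqvGen.trans _ _ _ h5 (EqvGen.symm _ _ (EqvGen.rel _ _ hmove))


/-! ### matching quadratic binomials -/

theorem binom_match {α : Type} {a b : α →₀ ℕ} {i j k l : α}
    (h : monomial a (1 : K) - monomial b 1 = X i * X j - X k * X l) :
    a = b ∨
      ((a = Finsupp.single i 1 + Finsupp.single j 1
          ∧ b = Finsupp.single k 1 + Finsupp.single l 1) ∨
       (a = Finsupp.single k 1 + Finsupp.single l 1
          ∧ b = Finsupp.single i 1 + Finsupp.single j 1)) := by
  classical
  by_cases hab : a = b
  · exact Or.inl hab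
  right
  rw [X_mul_X, X_mul_X] at h
  set A := Finsupp.single i 1 + Finsupp.single j 1 with hAdef
  set Bv := Finsupp.single k 1 + Finsupp.single l 1 with hBdef
  by_cases hAa : A = a
  · left
    rw [← hAa] at h hab ⊢
    refine ⟨rfl, ?_⟩
    have h2 : (monomial b 1 : MvPolynomial α K) = monomial Bv 1 := sub_right_inj.mp h
    exact (monomial_left_injective one_ne_zero h2).symm ▸ rfl
  · by_cases hBa : Bv = a
    · right
      rw [← hBa] at h hab ⊢
      rw [sub_eq_sub_iff_add_eq_add] at h
      by_cases hBA : Bv = A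
      · rw [← hBA] at h
        exact absurd (monomial_left_injective one_ne_zero (add_left_cancel h)) hab
      · have hAb : A = b := by
          by_contra hAb
          have h4 := congrArg (coeff A) h
          simp only [coeff_add, coeff_monomial, if_neg hBA, if_pos rfl,
            if_neg (fun hh : b = A => hAb hh.symm)] at h4
          simp at h4
        exact ⟨rfl, hAb.symm⟩
    · exfalso
      have h4 := congrArg (coeff a) h
      rw [coeff_sub, coeff_sub, coeff_monomial, coeff_monomial, coeff_monomial,
        coeff_monomial, if_pos rfl, if_neg (fun hh : b = a => hab hh.symm),
        if_neg hAa, if_neg hBa] at h4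
      simp at h4

/-! ### small helpers -/

theorem avoidc_single (x : {B : Finset (Fin d) // M.IsBase ↑B}) :
    avoidc M c (Finsupp.single x 1) = if c ∈ x.1 then 0 else 1 := by
  show wsum _ _ = _
  rw [wsum_single, one_mul]

theorem qdeg_d1 (h' : SerExt M c M') (A) :
    qdeg M' (Finsupp.single (d1 h' A) 1) = 0 := by
  show wsum _ _ = 0
  rw [wsum_single, if_pos (last_mem_d1 h' A), mul_zero]

theorem qdeg_d2 (h' : SerExt M c M') (A) (hcA : c ∉ A.1) :
    qdeg M' (Finsupp.single (d2 h' A hcA) 1) = 1 := by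
  show wsum _ _ = 1
  rw [wsum_single, if_neg (last_not_mem_d2 h' A hcA), mul_one]

theorem WB_pair {n : ℕ} (N : Matroid (Fin n)) (x y : {B : Finset (Fin n) // N.IsBase ↑B}) :
    WB N (Finsupp.single x 1 + Finsupp.single y 1) = ind x.1 + ind y.1 := by
  rw [map_add, WB_single, WB_single, one_smul, one_smul]

/-! ### the lifted move -/

theorem step_lift (h' : SerExt M c M') {i j k l : {B : Finset (Fin d) // M.IsBase ↑B}}
    (hW : WB M (Finsupp.single i 1 + Finsupp.single j 1)
        = WB M (Finsupp.single k 1 + Finsupp.single l 1))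
    (m : {B : Finset (Fin d) // M.IsBase ↑B} →₀ ℕ) (q : ℕ)
    (hq : q ≤ avoidc M c (m + (Finsupp.single i 1 + Finsupp.single j 1))) :
    ∃ a b, Fm h' a = m + (Finsupp.single i 1 + Finsupp.single j 1)
      ∧ Fm h' b = m + (Finsupp.single k 1 + Finsupp.single l 1)
      ∧ qdeg M' a = q ∧ qdeg M' b = q ∧ MoveRel (QB M' K) a b := by
  classical
  have hpair : ∀ x y : {B : Finset (Fin d) // M.IsBase ↑B},
      1 ≤ (if c ∈ x.1 then 0 else 1) + (if c ∈ y.1 then 0 else 1) →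
      ∃ x' y' : {B : Finset (Fin d) // M.IsBase ↑B}, ∃ _ : c ∉ y'.1,
        Finsupp.single x' 1 + Finsupp.single y' 1
          = Finsupp.single x 1 + Finsupp.single y 1 := by
    intro x y he
    by_cases hcy : c ∈ y.1
    · by_cases hcx : c ∈ x.1
      · rw [if_pos hcx, if_pos hcy] at he; omega
      · exact ⟨y, x, hcx, add_comm _ _⟩
    · exact ⟨x, y, hcy, rfl⟩
  have he : (if c ∈ i.1 then 0 else 1) + (if c ∈ j.1 then 0 else 1)
      = (if c ∈ k.1 then 0 else 1) + (if c ∈ l.1 then 0 else 1) := by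
    have h1 := avoid_pair (c := c) hW
    rw [map_add, map_add, avoidc_single, avoidc_single, avoidc_single, avoidc_single] at h1
    exact h1
  have havm : avoidc M c (m + (Finsupp.single i 1 + Finsupp.single j 1))
      = avoidc M c m + ((if c ∈ i.1 then 0 else 1) + (if c ∈ j.1 then 0 else 1)) := by
    rw [map_add, map_add, avoidc_single, avoidc_single]
  have hqe : q ≤ avoidc M c m
      + ((if c ∈ i.1 then 0 else 1) + (if c ∈ j.1 then 0 else 1)) := by
    rw [← havm]; exact hq
  set t := q - min q (avoidc M c m) with htdef
  have htq : t ≤ q := by omega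
  have hqt : q - t ≤ avoidc M c m := by omega
  have hte : t ≤ (if c ∈ i.1 then 0 else 1) + (if c ∈ j.1 then 0 else 1) := by omega
  obtain ⟨μ, hμF, hμq⟩ := exists_lift h' m (q - t) hqt
  have he2 : (if c ∈ i.1 then 0 else 1) + (if c ∈ j.1 then 0 else 1) ≤ 2 := by
    split_ifs <;> omega
  have ht3 : t = 0 ∨ t = 1 ∨ t = 2 := by omega
  rcases ht3 with ht | ht | ht
  · refine ⟨μ + (Finsupp.single (d1 h' i) 1 + Finsupp.single (d1 h' j) 1),
      μ + (Finsupp.single (d1 h' k) 1 + Finsupp.single (d1 h' l) 1), ?_, ?_, ?_, ?_, ?_⟩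
    · rw [map_add, map_add, Fm_single, Fm_single, body_d1, body_d1, hμF]
    · rw [map_add, map_add, Fm_single, Fm_single, body_d1, body_d1, hμF]
    · rw [map_add, map_add, qdeg_d1, qdeg_d1, hμq]; omega
    · rw [map_add, map_add, qdeg_d1, qdeg_d1, hμq]; omega
    · apply moveRel_QB
      rw [WB_pair, WB_pair, ind_d1, ind_d1, ind_d1, ind_d1]
      have h5 : Finsupp.mapDomain Fin.castSucc (ind i.1)
            + Finsupp.mapDomain Fin.castSucc (ind j.1)
          = Finsupp.mapDomain Fin.castSucc (ind k.1)
            + Finsupp.mapDomain Fin.castSucc (ind l.1) := by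
        rw [← Finsupp.mapDomain_add, ← Finsupp.mapDomain_add, ← WB_pair M, ← WB_pair M, hW]
      rw [add_add_add_comm, add_add_add_comm
        (Finsupp.mapDomain Fin.castSucc (ind k.1)), h5]
  · obtain ⟨i', j', hcj', hsij⟩ := hpair i j (by omega)
    obtain ⟨k', l', hcl', hskl⟩ := hpair k l (by omega)
    have hWij : (ind i'.1 : Fin d →₀ ℕ) + ind j'.1 = ind i.1 + ind j.1 := by
      rw [← WB_pair M, ← WB_pair M, hsij]
    have hWkl : (ind k'.1 : Fin d →₀ ℕ) + ind l'.1 = ind k.1 + ind l.1 := by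
      rw [← WB_pair M, ← WB_pair M, hskl]
    have hWc : (ind i.1 : Fin d →₀ ℕ) + ind j.1 = ind k.1 + ind l.1 := by
      rw [← WB_pair M, ← WB_pair M, hW]
    refine ⟨μ + (Finsupp.single (d1 h' i') 1 + Finsupp.single (d2 h' j' hcj') 1),
      μ + (Finsupp.single (d1 h' k') 1 + Finsupp.single (d2 h' l' hcl') 1), ?_, ?_, ?_, ?_, ?_⟩
    · rw [map_add, map_add, Fm_single, Fm_single, body_d1, body_d2, hμF, hsij]
    · rw [map_add, map_add, Fm_single, Fm_single, body_d1, body_d2, hμF, hskl]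
    · rw [map_add, map_add, qdeg_d1, qdeg_d2, hμq]; omega
    · rw [map_add, map_add, qdeg_d1, qdeg_d2, hμq]; omega
    · apply moveRel_QB
      rw [WB_pair, WB_pair, ind_d1, ind_d1, ind_d2, ind_d2]
      have h5 : Finsupp.mapDomain Fin.castSucc (ind i'.1)
            + Finsupp.mapDomain Fin.castSucc (ind j'.1)
          = Finsupp.mapDomain Fin.castSucc (ind k'.1)
            + Finsupp.mapDomain Fin.castSucc (ind l'.1) := by
        rw [← Finsupp.mapDomain_add, ← Finsupp.mapDomain_add, hWij, hWkl, hWc]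
      rw [add_add_add_comm, add_add_add_comm
        (Finsupp.mapDomain Fin.castSucc (ind k'.1)), h5]
  · have hei : c ∉ i.1 := by
      by_contra hci
      rw [if_pos hci] at hte
      split_ifs at hte <;> omega
    have hej : c ∉ j.1 := by
      by_contra hcj
      rw [if_pos hcj] at hte
      split_ifs at hte <;> omega
    have hek : c ∉ k.1 := by
      rw [if_neg hei, if_neg hej] at he
      by_contra hck
      rw [if_pos hck] at he
      split_ifs at he <;> omega
    have hel : c ∉ l.1 := by
      rw [if_neg hei, if_neg hej] at he
      by_contra hcl
      rw [if_pos hcl] at he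
      split_ifs at he <;> omega
    refine ⟨μ + (Finsupp.single (d2 h' i hei) 1 + Finsupp.single (d2 h' j hej) 1),
      μ + (Finsupp.single (d2 h' k hek) 1 + Finsupp.single (d2 h' l hel) 1), ?_, ?_, ?_, ?_, ?_⟩
    · rw [map_add, map_add, Fm_single, Fm_single, body_d2, body_d2, hμF]
    · rw [map_add, map_add, Fm_single, Fm_single, body_d2, body_d2, hμF]
    · rw [map_add, map_add, qdeg_d2, qdeg_d2, hμq]; omega
    · rw [map_add, map_add, qdeg_d2, qdeg_d2, hμq]; omega
    · apply moveRel_QB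
      rw [WB_pair, WB_pair, ind_d2, ind_d2, ind_d2, ind_d2]
      have hWc : (ind i.1 : Fin d →₀ ℕ) + ind j.1 = ind k.1 + ind l.1 := by
        rw [← WB_pair M, ← WB_pair M, hW]
      have h5 : Finsupp.mapDomain Fin.castSucc (ind i.1)
            + Finsupp.mapDomain Fin.castSucc (ind j.1)
          = Finsupp.mapDomain Fin.castSucc (ind k.1)
            + Finsupp.mapDomain Fin.castSucc (ind l.1) := by
        rw [← Finsupp.mapDomain_add, ← Finsupp.mapDomain_add, hWc]
      rw [add_add_add_comm, add_add_add_comm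
        (Finsupp.mapDomain Fin.castSucc (ind k.1)), h5]

/-! ### avoid invariance along moves -/

theorem avoid_inv {G : Set (MvPolynomial {B : Finset (Fin d) // M.IsBase ↑B} K)}
    (hGq : ∀ g ∈ G, ∃ i j k l, g = X i * X j - X k * X l)
    (hGker : ∀ g ∈ G, (aeval fun B : {B : Finset (Fin d) // M.IsBase ↑B} =>
      monomial (ind B.1) (1 : K)) g = 0)
    {γ γ'} (h : EqvGen (MoveRel G) γ γ') : avoidc M c γ = avoidc M c γ' := by
  induction h with
  | rel x y hxy =>
      obtain ⟨m, A, Bv, hg, rfl, rfl⟩ := hxy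
      rw [map_add, map_add]
      congr 1
      obtain ⟨i, j, k, l, hgf⟩ := hGq _ hg
      have hker := hGker _ hg
      rw [map_sub, aeval_monomial_eq, aeval_monomial_eq, sub_eq_zero] at hker
      have hWAB : WB M A = WB M Bv := monomial_left_injective one_ne_zero hker
      rcases binom_match hgf with hAB | ⟨hA, hB⟩ | ⟨hA, hB⟩
      · rw [hAB]
      · rw [hA, hB] at hWAB ⊢
        exact avoid_pair hWAB
      · rw [hA, hB] at hWAB ⊢
        exact avoid_pair hWAB
  | refl x => rfl
  | symm x y _ ih => exact ih.symm
  | trans x y z _ _ ih1 ih2 => exact ih1.trans ih2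

/-! ### lifting a chain of moves -/

theorem lift_eqvGen (h' : SerExt M c M')
    {G : Set (MvPolynomial {B : Finset (Fin d) // M.IsBase ↑B} K)}
    (hGq : ∀ g ∈ G, ∃ i j k l, g = X i * X j - X k * X l)
    (hGker : ∀ g ∈ G, (aeval fun B : {B : Finset (Fin d) // M.IsBase ↑B} =>
      monomial (ind B.1) (1 : K)) g = 0)
    {γ γ'} (h : EqvGen (MoveRel G) γ γ') :
    ∀ a b, Fm h' a = γ → Fm h' b = γ' → qdeg M' a = qdeg M' b →
      EqvGen (MoveRel (QB M' K)) a b := by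
  induction h with
  | rel x y hxy =>
      intro a b hFa hFb hq
      obtain ⟨m, A, Bv, hg, rfl, rfl⟩ := hxy
      obtain ⟨i, j, k, l, hgf⟩ := hGq _ hg
      have hker := hGker _ hg
      rw [map_sub, aeval_monomial_eq, aeval_monomial_eq, sub_eq_zero] at hker
      have hWAB : WB M A = WB M Bv := monomial_left_injective one_ne_zero hker
      rcases binom_match hgf with hAB | ⟨hA, hB⟩ | ⟨hA, hB⟩
      · rw [hAB] at hFa
        exact connect_same h' (dist a b) a b le_rfl (hFa.trans hFb.symm) hq
      all_goals {
        subst hA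
        subst hB
        have hqa : qdeg M' a ≤ avoidc M c (Fm h' a) := qdeg_le_avoid h' a
        rw [hFa] at hqa
        obtain ⟨a₀, b₀, hF0, hF0', hq0, hq0', hmv⟩ :=
          step_lift (K := K) h' hWAB m (qdeg M' a) hqa
        have c1 : EqvGen (MoveRel (QB M' K)) a a₀ :=
          connect_same h' (dist a a₀) a a₀ le_rfl (hFa.trans hF0.symm) (hq0.symm)
        have c2 : EqvGen (MoveRel (QB M' K)) b₀ b :=
          connect_same h' (dist b₀ b) b₀ b le_rfl (hF0'.trans hFb.symm) (by rw [hq0', hq])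
        exact EqvGen.trans _ _ _ c1 (EqvGen.trans _ _ _ (EqvGen.rel _ _ hmv) c2)
      }
  | refl x =>
      intro a b hFa hFb hq
      exact connect_same h' (dist a b) a b le_rfl (hFa.trans hFb.symm) hq
  | symm x y _ ih =>
      intro a b hFa hFb hq
      exact EqvGen.symm _ _ (ih b a hFb hFa hq.symm)
  | trans x y z hxy _ ih1 ih2 =>
      intro a b hFa hFb hq
      have hy : qdeg M' a ≤ avoidc M c y := by
        rw [← avoid_inv hGq hGker hxy, ← hFa]
        exact qdeg_le_avoid h' a
      obtain ⟨x0, hx0F, hx0q⟩ := exists_lift h' y (qdeg M' a) hy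
      exact EqvGen.trans _ _ _ (ih1 a x0 hFa hx0F hx0q.symm)
        (ih2 x0 b hx0F hFb (by rw [hx0q, hq]))

end Concrete

end S6


open MvPolynomial


section Toric

/-- The toric (bases monomial) map of a matroid: the variables are indexed by the bases of `M`,
and the variable of a basis `B` is sent to `∏_{l ∈ B} s_l`. -/
noncomputable def matroidToricMap (K : Type) [Field K] {α : Type} [Fintype α] [DecidableEq α]
    (M : Matroid α) :
    MvPolynomial {B : Finset α // M.IsBase ↑B} K →ₐ[K] MvPolynomial α K :=
  aeval fun b => ∏ l ∈ b.1, X l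

/-- The toric ideal `J_M` of a matroid `M`. -/
noncomputable def matroidToricIdeal (K : Type) [Field K] {α : Type} [Fintype α] [DecidableEq α]
    (M : Matroid α) : Ideal (MvPolynomial {B : Finset α // M.IsBase ↑B} K) :=
  RingHom.ker (matroidToricMap K M).toRingHom

/-- `G` consists of quadratic binomials `x_i x_j - x_k x_l`. -/
def IsQuadBinomialSet {σ K : Type} [Field K] (G : Set (MvPolynomial σ K)) : Prop :=
  ∀ f ∈ G, ∃ i j k l : σ, f = X i * X j - X k * X l

/-- The ideal `I` is generated by quadratic binomials. -/
def GeneratedByQuadBinomials {σ K : Type} [Field K] (I : Ideal (MvPolynomial σ K)) : Prop :=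
  ∃ G : Set (MvPolynomial σ K), IsQuadBinomialSet G ∧ Ideal.span G = I

end Toric

theorem matroidToricMap_eq (K : Type) [Field K] {n : ℕ} (N : Matroid (Fin n)) :
    matroidToricMap K N
      = aeval fun B : {B : Finset (Fin n) // N.IsBase ↑B} => monomial (S6.ind B.1) (1 : K) := by
  unfold matroidToricMap
  congr 1
  funext B
  exact S6.prod_X_eq B.1

theorem mem_matroidToricIdeal (K : Type) [Field K] {n : ℕ} (N : Matroid (Fin n))
    (f : MvPolynomial {B : Finset (Fin n) // N.IsBase ↑B} K) :
    f ∈ matroidToricIdeal K N ↔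
      (aeval fun B : {B : Finset (Fin n) // N.IsBase ↑B} =>
        monomial (S6.ind B.1) (1 : K)) f = 0 := by
  rw [matroidToricIdeal, RingHom.mem_ker]
  constructor
  · intro hf
    rw [← matroidToricMap_eq]
    exact hf
  · intro hf
    show matroidToricMap K N f = 0
    rw [matroidToricMap_eq]
    exact hf

/-- If the toric ideal of `M` is generated by quadratic binomials, then so is the toric
ideal of the series extension `M +_c (d+1)`, the matroid on `{1, …, d+1}` whose bases are
`{B ∪ {d+1} : B ∈ B(M)} ∪ {B ∪ {c} : c ∉ B ∈ B(M)}`. -/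
theorem statement6 (K : Type) [Field K] {d : ℕ}
    (M : Matroid (Fin d)) (hE : M.E = Set.univ) (c : Fin d)
    (M' : Matroid (Fin (d + 1))) (hE' : M'.E = Set.univ)
    (hM' : ∀ S : Set (Fin (d + 1)), M'.IsBase S ↔
      ((∃ B : Set (Fin d), M.IsBase B ∧ S = Fin.castSucc '' B ∪ {Fin.last d}) ∨
       (∃ B : Set (Fin d), M.IsBase B ∧ c ∉ B ∧
          S = Fin.castSucc '' B ∪ {Fin.castSucc c})))
    (h : GeneratedByQuadBinomials (matroidToricIdeal K M)) :
    GeneratedByQuadBinomials (matroidToricIdeal K M') := by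
  classical
  obtain ⟨G, hGq, hGspan⟩ := h
  have h'ser : S6.SerExt M c M' := hM'
  have hGker : ∀ g ∈ G, (aeval fun B : {B : Finset (Fin d) // M.IsBase ↑B} =>
      monomial (S6.ind B.1) (1 : K)) g = 0 := by
    intro g hg
    have hmem : g ∈ matroidToricIdeal K M := hGspan ▸ Ideal.subset_span hg
    exact (mem_matroidToricIdeal K M g).mp hmem
  refine ⟨S6.QB M' K, fun f hf => hf.1, ?_⟩
  apply le_antisymm
  · rw [Ideal.span_le]
    intro f hf
    rw [SetLike.mem_coe, mem_matroidToricIdeal]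
    exact hf.2
  · intro f hf
    have hf0 : (aeval fun T : {T : Finset (Fin (d + 1)) // M'.IsBase ↑T} =>
        monomial (S6.ind T.1) (1 : K)) f = 0 := (mem_matroidToricIdeal K M' f).mp hf
    have hspan := S6.mem_span_binoms (fun T : {T : Finset (Fin (d + 1)) // M'.IsBase ↑T} =>
      S6.ind T.1) f.support.card f le_rfl hf0
    have hsub : {g : MvPolynomial {T : Finset (Fin (d + 1)) // M'.IsBase ↑T} K |
        ∃ a b, a ≠ b ∧ S6.Wt (fun T : {T : Finset (Fin (d + 1)) // M'.IsBase ↑T} =>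
          S6.ind T.1) a = S6.Wt (fun T : {T : Finset (Fin (d + 1)) // M'.IsBase ↑T} =>
          S6.ind T.1) b ∧ g = monomial a 1 - monomial b 1}
        ⊆ ((Ideal.span (S6.QB M' K)).restrictScalars K : Set _) := by
      rintro g ⟨a, b, hne, hWab, rfl⟩
      have hWab' : S6.WB M' a = S6.WB M' b := hWab
      have hq : S6.qdeg M' a = S6.qdeg M' b := S6.qdeg_eq' h'ser hWab'
      have hWF : S6.WB M (S6.Fm h'ser a) = S6.WB M (S6.Fm h'ser b) := S6.WBF_eq h'ser hWab'
      have hGq' : ∀ g ∈ G, ∃ a b : {B : Finset (Fin d) // M.IsBase ↑B} →₀ ℕ,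
          g = monomial a (1 : K) - monomial b 1 := by
        intro g hg
        obtain ⟨i, j, k, l, hgf⟩ := hGq g hg
        exact ⟨_, _, by rw [hgf, S6.X_mul_X, S6.X_mul_X]⟩
      have hbinM : (monomial (S6.Fm h'ser a) (1 : K) - monomial (S6.Fm h'ser b) 1)
          ∈ Ideal.span G := by
        rw [hGspan, mem_matroidToricIdeal, map_sub, S6.aeval_monomial_eq,
          S6.aeval_monomial_eq]
        rw [show S6.Wt (fun B : {B : Finset (Fin d) // M.IsBase ↑B} => S6.ind B.1)
            (S6.Fm h'ser a) = S6.WB M (S6.Fm h'ser a) from rfl,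
          show S6.Wt (fun B : {B : Finset (Fin d) // M.IsBase ↑B} => S6.ind B.1)
            (S6.Fm h'ser b) = S6.WB M (S6.Fm h'ser b) from rfl, hWF, sub_self]
      rcases S6.eqvGen_of_binom_mem_span hGq' hbinM with hFeq | hEqv
      · exact S6.binom_mem_span_of_eqvGen
          (S6.connect_same (K := K) h'ser (S6.dist a b) a b le_rfl hFeq hq)
      · exact S6.binom_mem_span_of_eqvGen
          (S6.lift_eqvGen h'ser hGq hGker hEqv a b rfl rfl hq)
    exact (Submodule.span_le.mpr hsub) hspan
end

section
/- If M is a matroid on E = {1,…,d} whose toric ideal J_M is generated by quadratic binomials, then for every c ∈ E the toric ideal of the parallel extension of M at c by d+1, i.e. of the matroid (M* +_c (d+1))*, is generated by quadratic binomials. -/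
open MvPolynomial


namespace S7

variable {K : Type} [Field K] {σ τ : Type}

noncomputable def expHom (mm : σ → (τ →₀ ℕ)) : (σ →₀ ℕ) →+ (τ →₀ ℕ) :=
  Finsupp.liftAddHom fun i =>
    { toFun := fun n => n • mm i
      map_zero' := by simp
      map_add' := fun a b => add_smul a b (mm i) }

@[simp] lemma expHom_single (mm : σ → τ →₀ ℕ) (i : σ) (n : ℕ) :
    expHom mm (Finsupp.single i n) = n • mm i := by
  simp [expHom]

noncomputable def kHom (mark : σ → ℕ) : (σ →₀ ℕ) →+ ℕ :=
  Finsupp.liftAddHom fun i =>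
    { toFun := fun n => n * mark i
      map_zero' := by simp
      map_add' := fun a b => add_mul a b (mark i) }

@[simp] lemma kHom_single (mark : σ → ℕ) (i : σ) (n : ℕ) :
    kHom mark (Finsupp.single i n) = n * mark i := by
  simp [kHom]

lemma expHom_apply (mm : σ → τ →₀ ℕ) (u : σ →₀ ℕ) :
    expHom mm u = u.sum fun i n => n • mm i := by
  rw [expHom, Finsupp.liftAddHom_apply, Finsupp.sum]; rfl

lemma prod_monomial {ι : Type*} (s : Finset ι) (g : ι → (τ →₀ ℕ)) :
    (∏ i ∈ s, (monomial (g i) (1:K))) = monomial (∑ i ∈ s, g i) 1 := by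
  classical
  induction s using Finset.induction with
  | empty => simp [monomial_zero']
  | insert _ _ h ih => rw [Finset.prod_insert h, ih, monomial_mul, Finset.sum_insert h, one_mul]

noncomputable def monMap (mm : σ → τ →₀ ℕ) : MvPolynomial σ K →ₐ[K] MvPolynomial τ K :=
  aeval fun i => monomial (mm i) 1

lemma monMap_monomial (mm : σ → τ →₀ ℕ) (u : σ →₀ ℕ) (a : K) :
    monMap mm (monomial u a) = monomial (expHom mm u) a := by
  rw [monMap, aeval_monomial]
  have h1 : (u.prod fun i n => (monomial (mm i) (1:K)) ^ n) = monomial (expHom mm u) 1 := by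
    rw [Finsupp.prod]
    have : ∀ i ∈ u.support, (monomial (mm i) (1:K)) ^ (u i) = monomial (u i • mm i) 1 := by
      intro i _; rw [monomial_pow, one_pow]
    rw [Finset.prod_congr rfl this, prod_monomial]
    rw [expHom_apply, Finsupp.sum]
  rw [h1]
  rw [show (algebraMap K (MvPolynomial τ K)) a = C a from rfl, C_mul_monomial, mul_one]


variable {σ' : Type}

lemma monomial_one_injective {u v : σ →₀ ℕ} (h : monomial u (1:K) = monomial v 1) : u = v := by
  classical
  by_contra hne
  have := congrArg (coeff u) h
  rw [coeff_monomial, coeff_monomial, if_pos rfl, if_neg (fun hh => hne hh.symm)] at this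
  exact one_ne_zero this

lemma mem_span_fiber (mm : σ → τ →₀ ℕ) (f : MvPolynomial σ K)
    (hf : monMap mm f = 0) :
    f ∈ Submodule.span K {p : MvPolynomial σ K | ∃ u v : σ →₀ ℕ,
      expHom mm u = expHom mm v ∧ p = monomial u 1 - monomial v 1} := by
  classical
  set M : (σ →₀ ℕ) → (τ →₀ ℕ) := fun u => expHom mm u with hM
  let rep : (τ →₀ ℕ) → (σ →₀ ℕ) := fun e =>
    if h : ∃ u ∈ f.support, M u = e then h.choose else 0
  have hrep : ∀ u ∈ f.support, M (rep (M u)) = M u := by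
    intro u hu
    have h : ∃ w ∈ f.support, M w = M u := ⟨u, hu, rfl⟩
    simp only [rep, dif_pos h]
    exact h.choose_spec.2
  have hexp : monMap mm f = ∑ u ∈ f.support, monomial (M u) (coeff u f) := by
    conv_lhs => rw [← support_sum_monomial_coeff f]
    rw [map_sum]
    exact Finset.sum_congr rfl fun u _ => monMap_monomial mm u (coeff u f)
  have hclass : ∀ e, ∑ u ∈ f.support.filter (fun u => M u = e), coeff u f = 0 := by
    intro e
    have h0 : coeff e (monMap mm f) = 0 := by rw [hf]; simp
    rw [hexp, coeff_sum] at h0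
    rw [Finset.sum_filter]
    have hcg : ∀ u ∈ f.support, (if M u = e then coeff u f else 0)
        = coeff e (monomial (M u) (coeff u f)) := by
      intro u _
      rw [coeff_monomial]
    rw [Finset.sum_congr rfl hcg]
    exact h0
  have hS : ∑ u ∈ f.support, monomial (rep (M u)) (coeff u f) = 0 := by
    rw [← Finset.sum_fiberwise_of_maps_to (g := M) (t := f.support.image M)
      (fun x hx => Finset.mem_image_of_mem _ hx)]
    apply Finset.sum_eq_zero
    intro e _
    have h1 : ∀ u ∈ f.support.filter (fun u => M u = e),
        monomial (rep (M u)) (coeff u f) = monomial (rep e) (coeff u f) := by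
      intro u hu
      rw [(Finset.mem_filter.1 hu).2]
    rw [Finset.sum_congr rfl h1, ← map_sum, hclass e, map_zero]
  have hrepr : f = ∑ u ∈ f.support,
      (coeff u f) • (monomial u (1:K) - monomial (rep (M u)) 1) := by
    have : ∀ u ∈ f.support, (coeff u f) • (monomial u (1:K) - monomial (rep (M u)) 1)
        = monomial u (coeff u f) - monomial (rep (M u)) (coeff u f) := by
      intro u _
      rw [smul_sub, smul_monomial, smul_monomial, smul_eq_mul, mul_one]
    rw [Finset.sum_congr rfl this, Finset.sum_sub_distrib, hS, sub_zero,
      support_sum_monomial_coeff]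
  rw [hrepr]
  apply Submodule.sum_mem
  intro u hu
  apply Submodule.smul_mem
  apply Submodule.subset_span
  exact ⟨u, rep (M u), (hrep u hu).symm, rfl⟩

def relOf (K : Type) [Field K] (G : Set (MvPolynomial σ K)) : (σ →₀ ℕ) → (σ →₀ ℕ) → Prop :=
  fun a b => (monomial a (1:K) - monomial b 1) ∈ G

lemma conn {G : Set (MvPolynomial σ K)}
    (hGbin : ∀ g ∈ G, ∃ a b : σ →₀ ℕ, g = monomial a 1 - monomial b 1)
    {n n' : σ →₀ ℕ} (h : (monomial n (1:K) - monomial n' 1) ∈ Ideal.span G) :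
    addConGen (relOf K G) n n' := by
  classical
  set con := addConGen (relOf K G) with hcon
  let θ : MvPolynomial σ K →+* AddMonoidAlgebra K con.Quotient :=
    AddMonoidAlgebra.mapDomainRingHom K con.mk'
  have hsingle : ∀ (u : σ →₀ ℕ) (a : K), θ (monomial u a) = AddMonoidAlgebra.single (con.mk' u) a := by
    intro u a
    show AddMonoidAlgebra.mapDomain con.mk' (AddMonoidAlgebra.single u a) = _
    rw [AddMonoidAlgebra.mapDomain_single]
  have hker : ∀ g ∈ G, θ g = 0 := by
    intro g hg
    obtain ⟨a, b, rfl⟩ := hGbin g hg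
    rw [map_sub, hsingle, hsingle]
    have : con.mk' a = con.mk' b := by
      have : con a b := AddConGen.Rel.of a b hg
      exact (AddCon.eq con).2 this
    rw [this, sub_self]
  have hspan : Ideal.span G ≤ RingHom.ker θ := by
    rw [Ideal.span_le]
    intro g hg
    exact hker g hg
  have h0 : θ (monomial n (1:K) - monomial n' 1) = 0 := hspan h
  rw [map_sub, hsingle, hsingle, sub_eq_zero] at h0
  have := AddMonoidAlgebra.single_inj.1 h0
  rcases this with ⟨he, _⟩ | ⟨h1, _⟩
  · exact (AddCon.eq con).1 he
  · exact absurd h1 one_ne_zero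


lemma kHom_eq_sum (mark : σ → ℕ) (u : σ →₀ ℕ) (s : Finset σ) (hs : u.support ⊆ s) :
    kHom mark u = ∑ T ∈ s, u T * mark T := by
  rw [kHom, Finsupp.liftAddHom_apply]
  exact Finsupp.sum_of_support_subset u hs _ (fun i _ => by simp)

lemma X_mul_X (i j : σ) : (X i : MvPolynomial σ K) * X j
    = monomial (Finsupp.single i 1 + Finsupp.single j 1) 1 := by
  rw [X, X, monomial_mul, one_mul]

noncomputable def dd [DecidableEq σ'] (u v : σ' →₀ ℕ) : ℕ :=
  ∑ T ∈ u.support ∪ v.support, ((u T - v T) + (v T - u T))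

lemma dd_superset [DecidableEq σ'] (u v : σ' →₀ ℕ) (s : Finset σ')
    (hs : u.support ∪ v.support ⊆ s) :
    dd u v = ∑ T ∈ s, ((u T - v T) + (v T - u T)) := by
  apply Finset.sum_subset hs
  intro T _ hT
  have hu : u T = 0 := Finsupp.notMem_support_iff.1 fun h =>
    hT (Finset.mem_union_left _ h)
  have hv : v T = 0 := Finsupp.notMem_support_iff.1 fun h =>
    hT (Finset.mem_union_right _ h)
  omega

lemma mapDomain_apply_eq_sum_filter [DecidableEq σ] [DecidableEq σ'] (base : σ' → σ)
    (u : σ' →₀ ℕ) (b : σ) :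
    Finsupp.mapDomain base u b = ∑ T ∈ u.support.filter (fun T => base T = b), u T := by
  rw [Finsupp.mapDomain, Finsupp.sum_apply, Finsupp.sum, Finset.sum_filter]
  apply Finset.sum_congr rfl
  intro T _
  rw [Finsupp.single_apply]

lemma fibsum [DecidableEq σ] [DecidableEq σ'] (base : σ' → σ) (mark : σ' → ℕ)
    (H2 : ∀ T, mark T ≤ 1) (H4 : ∀ S T, base S = base T → mark S = mark T → S = T)
    (u : σ' →₀ ℕ) (T1 S1 : σ') (hmT1 : mark T1 = 1)
    (hS1 : base S1 = base T1) (hmS1 : mark S1 = 0) :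
    Finsupp.mapDomain base u (base T1) = u T1 + u S1 := by
  rw [mapDomain_apply_eq_sum_filter]
  have hne : T1 ≠ S1 := fun h => by rw [h, hmS1] at hmT1; exact one_ne_zero hmT1.symm
  have hsub : u.support.filter (fun T => base T = base T1) ⊆ {T1, S1} := by
    intro T hT
    obtain ⟨-, hbT⟩ := Finset.mem_filter.1 hT
    have := H2 T
    interval_cases h : mark T
    · exact Finset.mem_insert.2 (Or.inr (Finset.mem_singleton.2
        (H4 T S1 (by rw [hbT, hS1]) (by rw [h, hmS1]))))
    · exact Finset.mem_insert.2 (Or.inl (H4 T T1 hbT (by rw [h, hmT1])))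
  rw [Finset.sum_subset hsub]
  · rw [Finset.sum_pair hne]
  · intro T hTmem hT
    have hbT : base T = base T1 := by
      rcases Finset.mem_insert.1 hTmem with h | h
      · rw [h]
      · rw [Finset.mem_singleton.1 h, hS1]
    by_cases hTs : T ∈ u.support
    · exact absurd (Finset.mem_filter.2 ⟨hTs, hbT⟩) hT
    · exact Finsupp.notMem_support_iff.1 hTs

lemma fibsum0 [DecidableEq σ] [DecidableEq σ'] (base : σ' → σ) (mark : σ' → ℕ)
    (H4 : ∀ S T, base S = base T → mark S = mark T → S = T)
    (u : σ' →₀ ℕ) (S1 : σ') (hmS1 : mark S1 = 0)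
    (hall : ∀ T, base T = base S1 → mark T = 0) :
    Finsupp.mapDomain base u (base S1) = u S1 := by
  rw [mapDomain_apply_eq_sum_filter]
  have hsub : u.support.filter (fun T => base T = base S1) ⊆ {S1} := by
    intro T hT
    obtain ⟨-, hbT⟩ := Finset.mem_filter.1 hT
    exact Finset.mem_singleton.2 (H4 T S1 hbT (by rw [hall T hbT, hmS1]))
  rw [Finset.sum_subset hsub]
  · rw [Finset.sum_singleton]
  · intro T hTmem hT
    have hbT : base T = base S1 := by rw [Finset.mem_singleton.1 hTmem]
    by_cases hTs : T ∈ u.support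
    · exact absurd (Finset.mem_filter.2 ⟨hTs, hbT⟩) hT
    · exact Finsupp.notMem_support_iff.1 hTs

lemma stepA [DecidableEq σ] [DecidableEq σ']
    (base : σ' → σ) (mark : σ' → ℕ) (mmc : σ → ℕ)
    (H2 : ∀ T, mark T ≤ 1)
    (H4 : ∀ S T, base S = base T → mark S = mark T → S = T)
    (H3 : ∀ T, mark T = 1 → ∃ S, base S = base T ∧ mark S = 0)
    (H5c : ∀ b, mmc b = 1 → ∃ T, base T = b ∧ mark T = 1)
    (H6 : ∀ T, mark T ≤ mmc (base T))
    (H7 : ∀ b, mmc b ≤ 1)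
    (I : Ideal (MvPolynomial σ' K))
    (hq : ∀ A B C D : σ', base A = base C → base B = base D →
      mark A + mark B = mark C + mark D → (X A * X B - X C * X D : MvPolynomial σ' K) ∈ I) :
    ∀ (N : ℕ) (u v : σ' →₀ ℕ), dd u v ≤ N →
      Finsupp.mapDomain base u = Finsupp.mapDomain base v →
      kHom mark u = kHom mark v → (monomial u (1:K) - monomial v 1) ∈ I := by
  intro N
  induction N with
  | zero =>
    intro u v hd hφ hk
    have huv : u = v := by
      ext T
      by_cases hT : T ∈ u.support ∪ v.support
      · have h0 := Finset.sum_eq_zero_iff.1 (Nat.le_zero.1 hd) T hT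
        omega
      · have hu : u T = 0 := Finsupp.notMem_support_iff.1 fun h =>
          hT (Finset.mem_union_left _ h)
        have hv : v T = 0 := Finsupp.notMem_support_iff.1 fun h =>
          hT (Finset.mem_union_right _ h)
        omega
    rw [huv, sub_self]
    exact zero_mem I
  | succ N ih =>
    intro u v hd hφ hk
    by_cases huv : u = v
    · rw [huv, sub_self]; exact zero_mem I
    -- existence of a marked discrepancy
    have hexmark : ∃ T, mark T = 1 ∧ u T ≠ v T := by
      by_contra hcon
      push_neg at hcon
      apply huv
      ext S
      have hmS := H2 S
      interval_cases hms : mark S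
      · -- mark S = 0
        have hc := H7 (base S)
        interval_cases hcc : mmc (base S)
        · -- no marked element in the fiber
          have hall : ∀ T, base T = base S → mark T = 0 := by
            intro T hT
            have := H6 T
            rw [hT, hcc] at this
            omega
          have h1 := fibsum0 base mark H4 u S hms hall
          have h2 := fibsum0 base mark H4 v S hms hall
          rw [← h1, ← h2, hφ]
        · obtain ⟨T1, hbT1, hmT1⟩ := H5c (base S) hcc
          have h1 := fibsum base mark H2 H4 u T1 S hmT1 (by rw [hbT1]) hms
          have h2 := fibsum base mark H2 H4 v T1 S hmT1 (by rw [hbT1]) hms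
          have h3 := hcon T1 hmT1
          rw [hφ] at h1
          omega
      · exact hcon S hms
    -- extract a marked T with u T > v T and a marked T with u T < v T
    have key : ∀ u' v' : σ' →₀ ℕ, kHom mark u' = kHom mark v' →
        (∃ T, mark T = 1 ∧ u' T ≠ v' T) → ∃ T, mark T = 1 ∧ v' T < u' T := by
      intro u' v' hk' hex
      by_contra h0
      push_neg at h0
      obtain ⟨Tw, hmw, hnew⟩ := hex
      set s := u'.support ∪ v'.support with hs
      have hswmem : Tw ∈ s := by
        by_contra hsn
        have hu : u' Tw = 0 := Finsupp.notMem_support_iff.1 fun h =>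
          hsn (Finset.mem_union_left _ h)
        have hv : v' Tw = 0 := Finsupp.notMem_support_iff.1 fun h =>
          hsn (Finset.mem_union_right _ h)
        omega
      have hlt : ∑ T ∈ s, u' T * mark T < ∑ T ∈ s, v' T * mark T := by
        apply Finset.sum_lt_sum
        · intro i _
          have := H2 i
          interval_cases hmi : mark i
          · omega
          · have := h0 i hmi; omega
        · refine ⟨Tw, hswmem, ?_⟩
          have h1 := h0 Tw hmw
          rw [hmw]
          omega
      rw [← kHom_eq_sum mark u' s Finset.subset_union_left,
        ← kHom_eq_sum mark v' s Finset.subset_union_right] at hlt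
      omega
    obtain ⟨T0, hmT0, hltT0⟩ := key u v hk hexmark
    obtain ⟨T1, hmT1, hltT1⟩ := key v u hk.symm (by
      obtain ⟨T, h1, h2⟩ := hexmark; exact ⟨T, h1, fun h => h2 h.symm⟩)
    obtain ⟨S0, hbS0, hmS0⟩ := H3 T0 hmT0
    obtain ⟨S1, hbS1, hmS1⟩ := H3 T1 hmT1
    have hT0T1 : T0 ≠ T1 := fun h => by rw [h] at hltT0; omega
    have hb01 : base T0 ≠ base T1 := fun h =>
      hT0T1 (H4 T0 T1 h (by rw [hmT0, hmT1]))
    have hT0S0 : T0 ≠ S0 := fun h => by rw [← h] at hmS0; rw [hmS0] at hmT0; omega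
    have hT0S1 : T0 ≠ S1 := fun h => by rw [← h] at hmS1; rw [hmS1] at hmT0; omega
    have hT1S0 : T1 ≠ S0 := fun h => by rw [← h] at hmS0; rw [hmS0] at hmT1; omega
    have hT1S1 : T1 ≠ S1 := fun h => by rw [← h] at hmS1; rw [hmS1] at hmT1; omega
    have hS0S1 : S0 ≠ S1 := fun h => by
      apply hb01; rw [← hbS0, h, hbS1]
    -- fiber equations
    have heq0 : u T0 + u S0 = v T0 + v S0 := by
      have h1 := fibsum base mark H2 H4 u T0 S0 hmT0 hbS0 hmS0
      have h2 := fibsum base mark H2 H4 v T0 S0 hmT0 hbS0 hmS0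
      rw [hφ] at h1; omega
    have heq1 : u T1 + u S1 = v T1 + v S1 := by
      have h1 := fibsum base mark H2 H4 u T1 S1 hmT1 hbS1 hmS1
      have h2 := fibsum base mark H2 H4 v T1 S1 hmT1 hbS1 hmS1
      rw [hφ] at h1; omega
    have hS0lt : u S0 < v S0 := by omega
    have hS1gt : v S1 < u S1 := by omega
    -- the swap move
    set u' := u - Finsupp.single T0 1 - Finsupp.single S1 1 with hu'def
    have hudecomp : u = u' + Finsupp.single T0 1 + Finsupp.single S1 1 := by
      ext T
      simp only [hu'def, Finsupp.add_apply, Finsupp.tsub_apply, Finsupp.single_apply]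
      by_cases h1 : T0 = T
      · subst h1
        rw [if_pos rfl, if_neg (show ¬ S1 = T0 from fun h => hT0S1 h.symm)]
        omega
      · by_cases h2 : S1 = T
        · subst h2
          rw [if_neg h1, if_pos rfl]
          omega
        · rw [if_neg h1, if_neg h2]
          omega
    set u2 := u' + Finsupp.single S0 1 + Finsupp.single T1 1 with hu2def
    have hq' : (X T0 * X S1 - X S0 * X T1 : MvPolynomial σ' K) ∈ I :=
      hq T0 S1 S0 T1 hbS0.symm hbS1 (by rw [hmT0, hmS1, hmS0, hmT1])
    have hmon : monomial u (1:K) - monomial u2 1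
        = monomial u' 1 * (X T0 * X S1 - X S0 * X T1) := by
      rw [X_mul_X, X_mul_X, mul_sub, monomial_mul, monomial_mul, one_mul]
      congr 2
      · rw [hudecomp, add_assoc]
      · rw [hu2def, add_assoc]
    have hstep : monomial u (1:K) - monomial u2 1 ∈ I := by
      rw [hmon]; exact Ideal.mul_mem_left I _ hq'
    have hkey : u2 + Finsupp.single T0 1 + Finsupp.single S1 1
        = u + Finsupp.single S0 1 + Finsupp.single T1 1 := by
      rw [hu2def, hudecomp]; abel
    have hcoord : ∀ T, u2 T + (Finsupp.single T0 1 + Finsupp.single S1 1 : σ' →₀ ℕ) T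
        = u T + (Finsupp.single S0 1 + Finsupp.single T1 1 : σ' →₀ ℕ) T := by
      intro T
      have := congrArg (fun w : σ' →₀ ℕ => w T) hkey
      simpa [Finsupp.add_apply, add_assoc] using this
    have hφ2 : Finsupp.mapDomain base u2 = Finsupp.mapDomain base u := by
      have h1 := congrArg (Finsupp.mapDomain base) hkey
      simp only [Finsupp.mapDomain_add, Finsupp.mapDomain_single] at h1
      rw [hbS0, hbS1] at h1
      exact add_right_cancel (add_right_cancel h1)
    have hk2 : kHom mark u2 = kHom mark u := by
      have h1 := congrArg (kHom mark) hkey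
      simp only [map_add, kHom_single, hmT0, hmT1, hmS0, hmS1] at h1
      omega
    -- dd decreases
    have hdd : dd u2 v < dd u v := by
      set s := (u.support ∪ v.support) ∪ u2.support with hsdef
      rw [dd_superset u2 v s (by
        intro x hx
        rcases Finset.mem_union.1 hx with h | h
        · exact Finset.mem_union_right _ h
        · exact Finset.mem_union_left _ (Finset.mem_union_right _ h)),
        dd_superset u v s (fun x hx => Finset.mem_union_left _ hx)]
      apply Finset.sum_lt_sum
      · intro T _
        have hc := hcoord T
        simp only [Finsupp.add_apply, Finsupp.single_apply] at hc
        by_cases h1 : T0 = T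
        · subst h1
          rw [if_pos rfl, if_neg (show ¬ S1 = T0 from fun h => hT0S1 h.symm),
            if_neg (show ¬ S0 = T0 from fun h => hT0S0 h.symm),
            if_neg (show ¬ T1 = T0 from fun h => hT0T1 h.symm)] at hc
          omega
        · by_cases h2 : S1 = T
          · subst h2
            rw [if_neg h1, if_pos rfl,
              if_neg (show ¬ S0 = S1 from hS0S1),
              if_neg (show ¬ T1 = S1 from hT1S1)] at hc
            omega
          · by_cases h3 : S0 = T
            · subst h3
              rw [if_neg h1, if_neg h2, if_pos rfl,
                if_neg (show ¬ T1 = S0 from hT1S0)] at hc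
              omega
            · by_cases h4 : T1 = T
              · subst h4
                rw [if_neg h1, if_neg h2, if_neg h3, if_pos rfl] at hc
                omega
              · rw [if_neg h1, if_neg h2, if_neg h3, if_neg h4] at hc
                omega
      · refine ⟨T0, ?_, ?_⟩
        · apply Finset.mem_union_left
          apply Finset.mem_union_left
          exact Finsupp.mem_support_iff.2 (by omega)
        · have hc := hcoord T0
          simp only [Finsupp.add_apply, Finsupp.single_apply] at hc
          rw [if_neg (show ¬ S1 = T0 from fun h => hT0S1 h.symm),
            if_neg (show ¬ S0 = T0 from fun h => hT0S0 h.symm),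
            if_neg (show ¬ T1 = T0 from fun h => hT0T1 h.symm)] at hc
          simp only [if_true] at hc
          have hgoal : u2 T0 + 1 = u T0 := by omega
          have h5 : v T0 < u T0 := hltT0
          omega
    have hrest : monomial u2 (1:K) - monomial v 1 ∈ I := by
      apply ih u2 v (by omega) (hφ2.trans hφ) (hk2.trans hk)
    have : monomial u (1:K) - monomial v 1
        = (monomial u (1:K) - monomial u2 1) + (monomial u2 1 - monomial v 1) := by
      ring
    rw [this]
    exact I.add_mem hstep hrest


lemma degSum_mapDomain (base : σ' → σ) (u : σ' →₀ ℕ) :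
    kHom (fun _ => (1:ℕ)) (Finsupp.mapDomain base u) = kHom (fun _ => (1:ℕ)) u := by
  classical
  induction u using Finsupp.induction with
  | zero => simp [Finsupp.mapDomain_zero]
  | single_add a n f haf hn ih =>
    rw [Finsupp.mapDomain_add, Finsupp.mapDomain_single, map_add, map_add,
      kHom_single, kHom_single, ih]

lemma degSum_eq_zero {u : σ →₀ ℕ} (h : kHom (fun _ => (1:ℕ)) u = 0) : u = 0 := by
  classical
  ext T
  by_cases hT : T ∈ u.support
  · rw [kHom_eq_sum (fun _ => 1) u u.support (subset_refl _)] at h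
    have := Finset.sum_eq_zero_iff.1 h T hT
    simpa using this
  · simpa using Finsupp.notMem_support_iff.1 hT

lemma exists_sub_single {u : σ →₀ ℕ} {S : σ} (hS : 1 ≤ u S) :
    u = Finsupp.single S 1 + (u - Finsupp.single S 1) := by
  classical
  ext T
  simp only [Finsupp.add_apply, Finsupp.tsub_apply, Finsupp.single_apply]
  by_cases h : S = T
  · subst h; rw [if_pos rfl]; omega
  · rw [if_neg h]; omega

lemma exists_single_of_degSum_one {u : σ →₀ ℕ} (h : kHom (fun _ => (1:ℕ)) u = 1) :
    ∃ S, u = Finsupp.single S 1 := by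
  classical
  have hne : u ≠ 0 := fun h0 => by rw [h0, map_zero] at h; omega
  obtain ⟨S, hS⟩ := Finsupp.ne_iff.1 hne
  have hS1 : 1 ≤ u S := by
    have : u S ≠ 0 := by simpa using hS
    omega
  have hdec := exists_sub_single hS1
  have hrest : kHom (fun _ => (1:ℕ)) (u - Finsupp.single S 1) = 0 := by
    have h2 := congrArg (kHom fun _ => (1:ℕ)) hdec
    rw [map_add, kHom_single, h] at h2
    omega
  exact ⟨S, by rw [hdec, degSum_eq_zero hrest, add_zero]⟩

lemma exists_pair_of_degSum_two {u : σ →₀ ℕ} (h : kHom (fun _ => (1:ℕ)) u = 2) :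
    ∃ S T, u = Finsupp.single S 1 + Finsupp.single T 1 := by
  classical
  have hne : u ≠ 0 := fun h0 => by rw [h0, map_zero] at h; omega
  obtain ⟨S, hS⟩ := Finsupp.ne_iff.1 hne
  have hS1 : 1 ≤ u S := by
    have : u S ≠ 0 := by simpa using hS
    omega
  have hdec := exists_sub_single hS1
  have hrest : kHom (fun _ => (1:ℕ)) (u - Finsupp.single S 1) = 1 := by
    have h2 := congrArg (kHom fun _ => (1:ℕ)) hdec
    rw [map_add, kHom_single, h] at h2
    omega
  obtain ⟨T, hT⟩ := exists_single_of_degSum_one hrest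
  exact ⟨S, T, by rw [hdec, hT]⟩

lemma monomial_eq_XX_of_degSum_two {u : σ →₀ ℕ} (h : kHom (fun _ => (1:ℕ)) u = 2) :
    ∃ S T, monomial u (1:K) = X S * X T := by
  obtain ⟨S, T, rfl⟩ := exists_pair_of_degSum_two h
  exact ⟨S, T, by rw [X_mul_X]⟩

lemma deg_two_of_quad {g : MvPolynomial σ K} (i j k l : σ)
    (hgq : g = X i * X j - X k * X l) {a b : σ →₀ ℕ}
    (hg : g = monomial a 1 - monomial b 1) (hne : a ≠ b) :
    kHom (fun _ => (1:ℕ)) a = 2 ∧ kHom (fun _ => (1:ℕ)) b = 2 := by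
  classical
  set p := Finsupp.single i 1 + Finsupp.single j 1 with hp
  set q := Finsupp.single k 1 + Finsupp.single l 1 with hq
  have hpq : monomial a (1:K) - monomial b 1 = monomial p 1 - monomial q 1 := by
    rw [← hg, hgq, X_mul_X, X_mul_X]
  have hdp : kHom (fun _ => (1:ℕ)) p = 2 := by
    rw [hp, map_add, kHom_single, kHom_single]
  have hdq : kHom (fun _ => (1:ℕ)) q = 2 := by
    rw [hq, map_add, kHom_single, kHom_single]
  have key : ∀ e : σ →₀ ℕ, coeff e (monomial a (1:K) - monomial b 1) ≠ 0 → (e = p ∨ e = q) := by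
    intro e he
    rw [hpq, coeff_sub, coeff_monomial, coeff_monomial] at he
    by_cases h1 : p = e
    · exact Or.inl h1.symm
    · by_cases h2 : q = e
      · exact Or.inr h2.symm
      · rw [if_neg h1, if_neg h2] at he
        simp at he
  constructor
  · have hca : coeff a (monomial a (1:K) - monomial b 1) ≠ 0 := by
      rw [coeff_sub, coeff_monomial, coeff_monomial, if_pos rfl,
        if_neg (fun h => hne h.symm)]
      simp
    rcases key a hca with h | h
    · rw [h]; exact hdp
    · rw [h]; exact hdq
  · have hcb : coeff b (monomial a (1:K) - monomial b 1) ≠ 0 := by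
      rw [coeff_sub, coeff_monomial, coeff_monomial, if_pos rfl, if_neg hne]
      simp
    rcases key b hcb with h | h
    · rw [h]; exact hdp
    · rw [h]; exact hdq

theorem master {σ σ' τ τ' : Type}
    (mm : σ → τ →₀ ℕ) (mm' : σ' → τ' →₀ ℕ)
    (base : σ' → σ) (mark : σ' → ℕ) (c : τ)
    (H1 : ∀ u v : σ' →₀ ℕ, expHom mm' u = expHom mm' v ↔
      (expHom mm (Finsupp.mapDomain base u) = expHom mm (Finsupp.mapDomain base v)
        ∧ kHom mark u = kHom mark v))
    (H2 : ∀ T, mark T ≤ 1)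
    (H4 : ∀ S T, base S = base T → mark S = mark T → S = T)
    (H3 : ∀ T, mark T = 1 → ∃ S, base S = base T ∧ mark S = 0)
    (H5c : ∀ b : σ, (mm b) c = 1 → ∃ T, base T = b ∧ mark T = 1)
    (H5d : ∀ b : σ, ∃ T, base T = b ∧ mark T = 0)
    (H6 : ∀ T, mark T ≤ (mm (base T)) c)
    (H7 : ∀ b, (mm b) c ≤ 1)
    (G : Set (MvPolynomial σ K)) (hGq : IsQuadBinomialSet G)
    (hGspan : Ideal.span G = RingHom.ker (monMap (K := K) mm).toRingHom) :
    GeneratedByQuadBinomials (RingHom.ker (monMap (K := K) mm').toRingHom) := by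
  classical
  set J' : Ideal (MvPolynomial σ' K) := RingHom.ker (monMap (K := K) mm').toRingHom with hJ'
  set G' : Set (MvPolynomial σ' K) :=
    {f | f ∈ J' ∧ ∃ i j k l : σ', f = X i * X j - X k * X l} with hG'
  have hbin : ∀ u v : σ' →₀ ℕ, expHom mm' u = expHom mm' v →
      (monomial u (1:K) - monomial v 1) ∈ J' := by
    intro u v h
    have h0 : monMap (K := K) mm' (monomial u 1 - monomial v 1) = 0 := by
      rw [map_sub, monMap_monomial, monMap_monomial, h, sub_self]
    exact RingHom.mem_ker.2 h0
  have hq : ∀ A B C D : σ', base A = base C → base B = base D →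
      mark A + mark B = mark C + mark D →
      (X A * X B - X C * X D : MvPolynomial σ' K) ∈ Ideal.span G' := by
    intro A B C D h1 h2 h3
    apply Ideal.subset_span
    refine ⟨?_, A, B, C, D, rfl⟩
    rw [X_mul_X, X_mul_X]
    apply hbin
    apply (H1 _ _).2
    constructor
    · rw [Finsupp.mapDomain_add, Finsupp.mapDomain_add, Finsupp.mapDomain_single,
        Finsupp.mapDomain_single, Finsupp.mapDomain_single, Finsupp.mapDomain_single,
        h1, h2]
    · rw [map_add, map_add, kHom_single, kHom_single, kHom_single, kHom_single]
      omega
  have KLE : ∀ u : σ' →₀ ℕ, kHom mark u ≤ expHom mm (Finsupp.mapDomain base u) c := by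
    intro u
    induction u using Finsupp.induction with
    | zero => simp [Finsupp.mapDomain_zero]
    | single_add T n f hTf hn ih =>
      rw [Finsupp.mapDomain_add, Finsupp.mapDomain_single, map_add, map_add, kHom_single,
        expHom_single, Finsupp.add_apply, Finsupp.smul_apply, smul_eq_mul]
      have h6 := H6 T
      have hmul : n * mark T ≤ n * (mm (base T)) c := Nat.mul_le_mul_left n h6
      omega
  have EXL : ∀ (n : σ →₀ ℕ) (k : ℕ), k ≤ expHom mm n c →
      ∃ u, Finsupp.mapDomain base u = n ∧ kHom mark u = k := by
    intro n
    induction n using Finsupp.induction with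
    | zero =>
      intro k hk
      rw [map_zero, Finsupp.coe_zero, Pi.zero_apply] at hk
      refine ⟨0, by rw [Finsupp.mapDomain_zero], by rw [map_zero]; omega⟩
    | single_add b m f hbf hm ih =>
      intro k hk
      have hsplit : expHom mm (Finsupp.single b m + f) c
          = m * (mm b) c + expHom mm f c := by
        rw [map_add, expHom_single, Finsupp.add_apply, Finsupp.smul_apply, smul_eq_mul]
      set k2 := min k (expHom mm f c) with hk2def
      have hk2 : k2 ≤ expHom mm f c := min_le_right _ _
      have hk2k : k2 ≤ k := min_le_left _ _
      have hk1 : k - k2 ≤ m * (mm b) c := by rw [hsplit] at hk; omega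
      obtain ⟨u2, hu2φ, hu2k⟩ := ih k2 hk2
      have hbc := H7 b
      interval_cases hbcc : (mm b) c
      · obtain ⟨T, hT, hmT⟩ := H5d b
        refine ⟨Finsupp.single T m + u2, ?_, ?_⟩
        · rw [Finsupp.mapDomain_add, Finsupp.mapDomain_single, hT, hu2φ]
        · rw [map_add, kHom_single, hmT, hu2k]; omega
      · obtain ⟨T1, hT1, hmT1⟩ := H5c b hbcc
        obtain ⟨T0, hT0, hmT0⟩ := H5d b
        have hk1m : k - k2 ≤ m := by omega
        refine ⟨Finsupp.single T1 (k - k2) + Finsupp.single T0 (m - (k - k2)) + u2, ?_, ?_⟩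
        · rw [Finsupp.mapDomain_add, Finsupp.mapDomain_add, Finsupp.mapDomain_single,
            Finsupp.mapDomain_single, hT1, hT0, hu2φ]
          have hmm : (k - k2) + (m - (k - k2)) = m := by omega
          rw [← Finsupp.single_add, hmm]
        · rw [map_add, map_add, kHom_single, kHom_single, hmT1, hmT0, hu2k]
          omega
  have hGbin : ∀ g ∈ G, ∃ a b : σ →₀ ℕ, g = monomial a 1 - monomial b 1 := by
    intro g hg
    obtain ⟨i, j, k, l, rfl⟩ := hGq g hg
    exact ⟨_, _, by rw [X_mul_X, X_mul_X]⟩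
  have hGker : ∀ g ∈ G, monMap (K := K) mm g = 0 := by
    intro g hg
    have hmem : g ∈ Ideal.span G := Ideal.subset_span hg
    rw [hGspan] at hmem
    exact RingHom.mem_ker.1 hmem
  have hrelE : ∀ a b : σ →₀ ℕ, relOf K G a b → expHom mm a = expHom mm b := by
    intro a b hab
    have h0 := hGker _ hab
    rw [map_sub, monMap_monomial, monMap_monomial, sub_eq_zero] at h0
    exact monomial_one_injective h0
  have inv : ∀ {n n' : σ →₀ ℕ}, AddConGen.Rel (relOf K G) n n' →
      expHom mm n = expHom mm n' := by
    intro n n' h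
    induction h with
    | of a b hab => exact hrelE a b hab
    | refl => rfl
    | symm _ ih => exact ih.symm
    | trans _ _ ih1 ih2 => exact ih1.trans ih2
    | add _ _ ih1 ih2 => rw [map_add, map_add, ih1, ih2]
  have hA : ∀ u v : σ' →₀ ℕ, Finsupp.mapDomain base u = Finsupp.mapDomain base v →
      kHom mark u = kHom mark v →
      (monomial u (1:K) - monomial v 1) ∈ Ideal.span G' :=
    fun u v h1 h2 => stepA base mark (fun b => (mm b) c) H2 H4 H3 H5c H6 H7 _ hq
      (dd u v) u v le_rfl h1 h2
  have hB : ∀ {n n' : σ →₀ ℕ}, AddConGen.Rel (relOf K G) n n' →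
      ∀ u v : σ' →₀ ℕ, Finsupp.mapDomain base u = n → Finsupp.mapDomain base v = n' →
      kHom mark u = kHom mark v →
      (monomial u (1:K) - monomial v 1) ∈ Ideal.span G' := by
    intro n n' h
    induction h with
    | of a b hab =>
      intro u v hu hv hk
      by_cases hab' : a = b
      · exact hA u v (by rw [hu, hv, hab']) hk
      · obtain ⟨i, j, kk, ll, hshape⟩ := hGq _ hab
        obtain ⟨hda, hdb⟩ := deg_two_of_quad i j kk ll hshape rfl hab'
        have hdu : kHom (fun _ => (1:ℕ)) u = 2 := by
          rw [← degSum_mapDomain base u, hu, hda]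
        have hdv : kHom (fun _ => (1:ℕ)) v = 2 := by
          rw [← degSum_mapDomain base v, hv, hdb]
        obtain ⟨S, T, hST⟩ := monomial_eq_XX_of_degSum_two (K := K) hdu
        obtain ⟨S', T', hST'⟩ := monomial_eq_XX_of_degSum_two (K := K) hdv
        apply Ideal.subset_span
        refine ⟨hbin u v ?_, S, T, S', T', by rw [hST, hST']⟩
        apply (H1 _ _).2
        exact ⟨by rw [hu, hv]; exact hrelE a b hab, hk⟩
    | refl n => intro u v hu hv hk; exact hA u v (hu.trans hv.symm) hk
    | symm _ ih =>
      intro u v hu hv hk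
      have hmem := ih v u hv hu hk.symm
      rw [show monomial u (1:K) - monomial v 1
        = -(monomial v 1 - monomial u 1) by ring]
      exact neg_mem hmem
    | trans h1 h2 ih1 ih2 =>
      rename_i x y z
      intro u v hu hv hk
      have hb1 : kHom mark u ≤ expHom mm y c := by
        have := KLE u
        rw [hu] at this
        rw [← inv h1]
        exact this
      obtain ⟨w, hwφ, hwk⟩ := EXL y (kHom mark u) hb1
      have p1 := ih1 u w hu hwφ (by rw [hwk])
      have p2 := ih2 w v hwφ hv (by rw [hwk, hk])
      rw [show monomial u (1:K) - monomial v 1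
        = (monomial u 1 - monomial w 1) + (monomial w 1 - monomial v 1) by ring]
      exact add_mem p1 p2
    | add h1 h2 ih1 ih2 =>
      rename_i w x y z
      intro u v hu hv hk
      have hkle : kHom mark u ≤ expHom mm w c + expHom mm y c := by
        have := KLE u
        rw [hu, map_add, Finsupp.add_apply] at this
        exact this
      set k1 := min (kHom mark u) (expHom mm w c) with hk1def
      have hk1w : k1 ≤ expHom mm w c := min_le_right _ _
      have hk1u : k1 ≤ kHom mark u := min_le_left _ _
      have hk2y : kHom mark u - k1 ≤ expHom mm y c := by omega
      obtain ⟨u1, hu1φ, hu1k⟩ := EXL w k1 hk1w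
      obtain ⟨u2, hu2φ, hu2k⟩ := EXL y (kHom mark u - k1) hk2y
      obtain ⟨v1, hv1φ, hv1k⟩ := EXL x k1 (by rw [← inv h1]; exact hk1w)
      obtain ⟨v2, hv2φ, hv2k⟩ := EXL z (kHom mark u - k1) (by rw [← inv h2]; exact hk2y)
      have c1 : monomial u (1:K) - monomial (u1 + u2) 1 ∈ Ideal.span G' := by
        apply hA
        · rw [hu, Finsupp.mapDomain_add, hu1φ, hu2φ]
        · rw [map_add, hu1k, hu2k]; omega
      have c2 : monomial (u1 + u2) (1:K) - monomial (v1 + u2) 1 ∈ Ideal.span G' := by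
        rw [show monomial (u1 + u2) (1:K) - monomial (v1 + u2) 1
          = (monomial u1 1 - monomial v1 1) * monomial u2 1 by
            rw [sub_mul, monomial_mul, monomial_mul, one_mul]]
        exact Ideal.mul_mem_right _ _ (ih1 u1 v1 hu1φ hv1φ (by rw [hu1k, hv1k]))
      have c3 : monomial (v1 + u2) (1:K) - monomial (v1 + v2) 1 ∈ Ideal.span G' := by
        rw [show monomial (v1 + u2) (1:K) - monomial (v1 + v2) 1
          = monomial v1 1 * (monomial u2 1 - monomial v2 1) by
            rw [mul_sub, monomial_mul, monomial_mul, one_mul]]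
        exact Ideal.mul_mem_left _ _ (ih2 u2 v2 hu2φ hv2φ (by rw [hu2k, hv2k]))
      have c4 : monomial (v1 + v2) (1:K) - monomial v 1 ∈ Ideal.span G' := by
        apply hA
        · rw [hv, Finsupp.mapDomain_add, hv1φ, hv2φ]
        · rw [map_add, hv1k, hv2k, ← hk]; omega
      rw [show monomial u (1:K) - monomial v 1
        = (monomial u 1 - monomial (u1 + u2) 1)
          + ((monomial (u1 + u2) 1 - monomial (v1 + u2) 1)
          + ((monomial (v1 + u2) 1 - monomial (v1 + v2) 1)
          + (monomial (v1 + v2) 1 - monomial v 1))) by ring]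
      exact add_mem c1 (add_mem c2 (add_mem c3 c4))
  refine ⟨G', ?_, ?_⟩
  · intro f hf
    exact hf.2
  · apply le_antisymm
    · exact Ideal.span_le.2 fun f hf => hf.1
    · intro f hf
      have hf0 : monMap (K := K) mm' f = 0 := RingHom.mem_ker.1 hf
      have hsp := mem_span_fiber mm' f hf0
      have hD : {p : MvPolynomial σ' K | ∃ u v : σ' →₀ ℕ,
          expHom mm' u = expHom mm' v ∧ p = monomial u 1 - monomial v 1}
          ⊆ (Ideal.span G' : Set (MvPolynomial σ' K)) := by
        rintro p ⟨u, v, heq, rfl⟩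
        obtain ⟨hφeq, hkeq⟩ := (H1 u v).1 heq
        by_cases hsame : Finsupp.mapDomain base u = Finsupp.mapDomain base v
        · exact hA u v hsame hkeq
        · have hker : (monomial (Finsupp.mapDomain base u) (1:K)
              - monomial (Finsupp.mapDomain base v) 1) ∈ Ideal.span G := by
            rw [hGspan]
            apply RingHom.mem_ker.2
            show monMap (K := K) mm _ = 0
            rw [map_sub, monMap_monomial, monMap_monomial, hφeq, sub_self]
          have hcon : AddConGen.Rel (relOf K G) (Finsupp.mapDomain base u)
              (Finsupp.mapDomain base v) := conn hGbin hker
          exact hB hcon u v rfl rfl hkeq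
      have hle : Submodule.span K {p : MvPolynomial σ' K | ∃ u v : σ' →₀ ℕ,
          expHom mm' u = expHom mm' v ∧ p = monomial u 1 - monomial v 1}
          ≤ (Ideal.span G').restrictScalars K := Submodule.span_le.2 hD
      exact hle hsp


lemma castSucc_ne_last {d : ℕ} (y : Fin d) : Fin.castSucc y ≠ Fin.last d :=
  (Fin.castSucc_lt_last y).ne

lemma compl_image_union_last {d : ℕ} (B : Set (Fin d)) :
    Set.univ \ (Fin.castSucc '' B ∪ {Fin.last d}) = Fin.castSucc '' (Set.univ \ B) := by
  ext x
  induction x using Fin.lastCases with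
  | last =>
    simp only [Set.mem_diff, Set.mem_univ, true_and, Set.mem_union, Set.mem_singleton_iff,
      Set.mem_image]
    constructor
    · intro h; exact absurd (Or.inr trivial) h
    · rintro ⟨y, -, hy⟩; exact absurd hy (castSucc_ne_last y)
  | cast y =>
    simp only [Set.mem_diff, Set.mem_univ, true_and, Set.mem_union, Set.mem_singleton_iff,
      Set.mem_image, not_or]
    constructor
    · rintro ⟨h1, -⟩
      exact ⟨y, fun hyB => h1 ⟨y, hyB, rfl⟩, rfl⟩
    · rintro ⟨y', hy', hyy⟩
      have hy : y' = y := Fin.castSucc_injective d hyy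
      subst hy
      refine ⟨?_, castSucc_ne_last y'⟩
      rintro ⟨z, hz, hzz⟩
      exact hy' (Fin.castSucc_injective d hzz ▸ hz)

lemma compl_image {d : ℕ} (B : Set (Fin d)) :
    Set.univ \ (Fin.castSucc '' B) = Fin.castSucc '' (Set.univ \ B) ∪ {Fin.last d} := by
  ext x
  induction x using Fin.lastCases with
  | last =>
    simp only [Set.mem_diff, Set.mem_univ, true_and, Set.mem_union, Set.mem_singleton_iff,
      Set.mem_image]
    constructor
    · intro _; exact Or.inr trivial
    · rintro -
      rintro ⟨y, -, hy⟩
      exact absurd hy (castSucc_ne_last y)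
  | cast y =>
    simp only [Set.mem_diff, Set.mem_univ, true_and, Set.mem_union, Set.mem_singleton_iff,
      Set.mem_image]
    constructor
    · intro h1
      exact Or.inl ⟨y, fun hyB => h1 ⟨y, hyB, rfl⟩, rfl⟩
    · rintro (⟨y', hy', hyy⟩ | hlast)
      · have hy : y' = y := Fin.castSucc_injective d hyy
        subst hy
        rintro ⟨z, hz, hzz⟩
        exact hy' (Fin.castSucc_injective d hzz ▸ hz)
      · exact absurd hlast (castSucc_ne_last y)

lemma compl_image_union_castSucc {d : ℕ} (B : Set (Fin d)) (c : Fin d) :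
    Set.univ \ (Fin.castSucc '' B ∪ {Fin.castSucc c})
      = Fin.castSucc '' (Set.univ \ (B ∪ {c})) ∪ {Fin.last d} := by
  have h1 : Fin.castSucc '' B ∪ {Fin.castSucc c} = Fin.castSucc '' (B ∪ {c}) := by
    rw [Set.image_union, Set.image_singleton]
  rw [h1, compl_image]



lemma classification {d : ℕ} (M : Matroid (Fin d)) (hE : M.E = Set.univ) (c : Fin d)
    (M' : Matroid (Fin (d + 1))) (hE' : M'.E = Set.univ)
    (hM' : ∀ S : Set (Fin (d + 1)), M'.IsBase S ↔
      ((∃ B : Set (Fin d), (M✶).IsBase B ∧ S = Fin.castSucc '' B ∪ {Fin.last d}) ∨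
       (∃ B : Set (Fin d), (M✶).IsBase B ∧ c ∉ B ∧
          S = Fin.castSucc '' B ∪ {Fin.castSucc c})))
    (T : Finset (Fin (d + 1))) :
    (M'✶).IsBase ↑T ↔
      ((∃ b : Finset (Fin d), M.IsBase ↑b ∧ T = b.image Fin.castSucc) ∨
       (∃ b : Finset (Fin d), M.IsBase ↑b ∧ c ∈ b ∧
          T = (b.erase c).image Fin.castSucc ∪ {Fin.last d})) := by
  classical
  have hdualM : ∀ B : Set (Fin d), (M✶).IsBase B ↔ M.IsBase (Set.univ \ B) := by
    intro B
    rw [Matroid.dual_isBase_iff (by rw [hE]; exact Set.subset_univ _), hE]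
  have hstep : (M'✶).IsBase ↑T ↔ M'.IsBase (Set.univ \ ↑T) := by
    rw [Matroid.dual_isBase_iff (by rw [hE']; exact Set.subset_univ _), hE']
  rw [hstep, hM']
  constructor
  · rintro (⟨B, hB, hTc⟩ | ⟨B, hB, hcB, hTc⟩)
    · left
      refine ⟨(Set.toFinite (Set.univ \ B)).toFinset, ?_, ?_⟩
      · rw [Set.Finite.coe_toFinset]
        exact (hdualM B).1 hB
      · apply Finset.coe_injective
        rw [Finset.coe_image, Set.Finite.coe_toFinset, ← compl_image_union_last, ← hTc,
          Set.diff_diff_cancel_left (Set.subset_univ _)]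
    · right
      refine ⟨(Set.toFinite (Set.univ \ B)).toFinset, ?_, ?_, ?_⟩
      · rw [Set.Finite.coe_toFinset]
        exact (hdualM B).1 hB
      · rw [Set.Finite.mem_toFinset]
        exact ⟨trivial, hcB⟩
      · apply Finset.coe_injective
        rw [Finset.coe_union, Finset.coe_image, Finset.coe_erase, Finset.coe_singleton,
          Set.Finite.coe_toFinset]
        have h1 : (Set.univ \ B) \ {c} = Set.univ \ (B ∪ {c}) := by
          rw [Set.diff_diff]
        rw [h1, ← compl_image_union_castSucc, ← hTc,
          Set.diff_diff_cancel_left (Set.subset_univ _)]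
  · rintro (⟨b, hb, rfl⟩ | ⟨b, hb, hcb, rfl⟩)
    · left
      refine ⟨Set.univ \ ↑b, ?_, ?_⟩
      · apply (hdualM _).2
        rw [Set.diff_diff_cancel_left (Set.subset_univ _)]
        exact hb
      · rw [Finset.coe_image, compl_image]
    · right
      refine ⟨Set.univ \ ↑b, ?_, ?_, ?_⟩
      · apply (hdualM _).2
        rw [Set.diff_diff_cancel_left (Set.subset_univ _)]
        exact hb
      · intro hc
        exact hc.2 hcb
      · rw [Finset.coe_union, Finset.coe_image, Finset.coe_erase, Finset.coe_singleton,
          compl_image_union_last]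
        have h1 : Set.univ \ (↑b \ {c}) = (Set.univ \ ↑b) ∪ {c} := by
          rw [Set.diff_diff_right]
          congr 1
          exact Set.univ_inter _
        rw [h1, Set.image_union, Set.image_singleton]

variable {K : Type} [Field K]

noncomputable def ind {α : Type} [DecidableEq α] (s : Finset α) : α →₀ ℕ :=
  ∑ l ∈ s, Finsupp.single l 1

lemma ind_apply {α : Type} [DecidableEq α] (s : Finset α) (x : α) :
    ind s x = if x ∈ s then 1 else 0 := by
  rw [ind]
  rw [Finset.sum_apply']
  rw [show (∑ l ∈ s, Finsupp.single l 1 x) = ∑ l ∈ s, if l = x then 1 else 0 from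
    Finset.sum_congr rfl fun l _ => Finsupp.single_apply]
  rw [Finset.sum_ite_eq' s x (fun _ => 1)]

lemma prod_monomialX {K : Type} [Field K] {ι τ : Type} (s : Finset ι) (g : ι → (τ →₀ ℕ)) :
    (∏ i ∈ s, (monomial (g i) (1:K))) = monomial (∑ i ∈ s, g i) 1 := by
  classical
  induction s using Finset.induction with
  | empty => simp [monomial_zero']
  | insert _ _ h ih => rw [Finset.prod_insert h, ih, monomial_mul, Finset.sum_insert h, one_mul]

lemma prodX_eq {α : Type} [DecidableEq α] (s : Finset α) :
    (∏ l ∈ s, (X l : MvPolynomial α K)) = monomial (ind s) 1 := by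
  rw [ind, ← prod_monomialX]
  apply Finset.prod_congr rfl
  intro l _
  rw [X]


end S7

/-- If the toric ideal of `M` is generated by quadratic binomials, then so is the toric
ideal of the parallel extension `(M✶ +_c (d+1))✶` of `M` at `c` by `d+1`; here `M'` is the
series extension `M✶ +_c (d+1)` of the dual matroid. -/
theorem statement7 (K : Type) [Field K] {d : ℕ}
    (M : Matroid (Fin d)) (hE : M.E = Set.univ) (c : Fin d)
    (M' : Matroid (Fin (d + 1))) (hE' : M'.E = Set.univ)
    (hM' : ∀ S : Set (Fin (d + 1)), M'.IsBase S ↔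
      ((∃ B : Set (Fin d), (M✶).IsBase B ∧ S = Fin.castSucc '' B ∪ {Fin.last d}) ∨
       (∃ B : Set (Fin d), (M✶).IsBase B ∧ c ∉ B ∧
          S = Fin.castSucc '' B ∪ {Fin.castSucc c})))
    (h : GeneratedByQuadBinomials (matroidToricIdeal K M)) :
    GeneratedByQuadBinomials (matroidToricIdeal K (M'✶)) := by
  classical
  have toric_eq : ∀ {α : Type} [Fintype α] [DecidableEq α] (N : Matroid α),
      matroidToricIdeal K N = RingHom.ker (S7.monMap (K := K)
        (fun b : {B : Finset α // N.IsBase ↑B} => S7.ind b.1)).toRingHom := by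
    intro α _ _ N
    have hfun : (fun b : {B : Finset α // N.IsBase ↑B} => ∏ l ∈ b.1, (X l : MvPolynomial α K))
        = fun b => monomial (S7.ind b.1) 1 := funext fun b => S7.prodX_eq b.1
    rw [matroidToricIdeal, matroidToricMap, S7.monMap, hfun]
  rw [toric_eq (M'✶)]
  rw [toric_eq M] at h
  obtain ⟨G, hGq, hGspan⟩ := h
  have CLS := S7.classification M hE c M' hE' hM'
  -- auxiliary finset facts
  have last_not_image : ∀ b : Finset (Fin d), Fin.last d ∉ b.image Fin.castSucc := by
    intro b hmem
    obtain ⟨y, -, hy⟩ := Finset.mem_image.1 hmem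
    exact S7.castSucc_ne_last y hy
  set pre : Finset (Fin (d+1)) → Finset (Fin d) :=
    fun T => Finset.univ.filter (fun l => Fin.castSucc l ∈ T) with hpre
  have pre_image : ∀ b : Finset (Fin d), pre (b.image Fin.castSucc) = b := by
    intro b
    ext l
    simp only [hpre, Finset.mem_filter, Finset.mem_univ, true_and, Finset.mem_image]
    constructor
    · rintro ⟨a, ha, haa⟩
      rwa [← Fin.castSucc_injective d haa]
    · intro hl
      exact ⟨l, hl, rfl⟩
  have pre_erase : ∀ b : Finset (Fin d),
      pre ((b.erase c).image Fin.castSucc ∪ {Fin.last d}) = b.erase c := by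
    intro b
    ext l
    simp only [hpre, Finset.mem_filter, Finset.mem_univ, true_and, Finset.mem_union,
      Finset.mem_image, Finset.mem_singleton]
    constructor
    · rintro (⟨a, ha, haa⟩ | hlast)
      · rwa [← Fin.castSucc_injective d haa]
      · exact absurd hlast (S7.castSucc_ne_last l)
    · intro hl
      exact Or.inl ⟨l, hl, rfl⟩
  -- base construction
  have baseprop : ∀ T : Finset (Fin (d+1)), (M'✶).IsBase ↑T →
      M.IsBase ↑(if Fin.last d ∈ T then insert c (pre T) else pre T) := by
    intro T hT
    rcases (CLS T).1 hT with ⟨b, hb, rfl⟩ | ⟨b, hb, hcb, rfl⟩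
    · rw [if_neg (last_not_image b), pre_image]
      exact hb
    · rw [if_pos (Finset.mem_union_right _ (Finset.mem_singleton_self _)), pre_erase,
        Finset.insert_erase hcb]
      exact hb
  let base : {T : Finset (Fin (d+1)) // (M'✶).IsBase ↑T} → {B : Finset (Fin d) // M.IsBase ↑B} :=
    fun T => ⟨_, baseprop T.1 T.2⟩
  let mark : {T : Finset (Fin (d+1)) // (M'✶).IsBase ↑T} → ℕ :=
    fun T => if Fin.last d ∈ T.1 then 1 else 0
  have base_val : ∀ T, (base T).1
      = if Fin.last d ∈ T.1 then insert c (pre T.1) else pre T.1 := fun T => rfl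
  have recon0 : ∀ T, Fin.last d ∉ T.1 → T.1 = (base T).1.image Fin.castSucc := by
    intro T hlast
    rcases (CLS T.1).1 T.2 with ⟨b, hb, hTb⟩ | ⟨b, hb, hcb, hTb⟩
    · have hbv : (base T).1 = b := by
        rw [base_val, hTb, if_neg (last_not_image b), pre_image]
      rw [hbv, ← hTb]
    · exfalso
      apply hlast
      rw [hTb]
      exact Finset.mem_union_right _ (Finset.mem_singleton_self _)
  have recon1 : ∀ T, Fin.last d ∈ T.1 → c ∈ (base T).1 ∧
      T.1 = ((base T).1.erase c).image Fin.castSucc ∪ {Fin.last d} := by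
    intro T hlast
    rcases (CLS T.1).1 T.2 with ⟨b, hb, hTb⟩ | ⟨b, hb, hcb, hTb⟩
    · exfalso
      rw [hTb] at hlast
      exact last_not_image b hlast
    · have hbv : (base T).1 = b := by
        rw [base_val, hTb, if_pos (Finset.mem_union_right _ (Finset.mem_singleton_self _)),
          pre_erase, Finset.insert_erase hcb]
      rw [hbv, ← hTb]
      exact ⟨hcb, rfl⟩
  have mark_le : ∀ T, mark T ≤ 1 := by
    intro T
    by_cases hl : Fin.last d ∈ T.1 <;> simp [mark, hl]
  have mark_eq_one : ∀ T, mark T = 1 ↔ Fin.last d ∈ T.1 := by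
    intro T
    by_cases hl : Fin.last d ∈ T.1 <;> simp [mark, hl]
  -- per-T identities
  have perT_iii : ∀ T, S7.ind T.1 (Fin.last d) = mark T := by
    intro T
    rw [S7.ind_apply]
  have perT_i : ∀ T, ∀ l : Fin d, l ≠ c →
      S7.ind T.1 (Fin.castSucc l) = S7.ind (base T).1 l := by
    intro T l hl
    rw [S7.ind_apply, S7.ind_apply]
    by_cases hlast : Fin.last d ∈ T.1
    · obtain ⟨hc, hT⟩ := recon1 T hlast
      have hiff : Fin.castSucc l ∈ T.1 ↔ l ∈ (base T).1 := by
        rw [hT]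
        simp only [Finset.mem_union, Finset.mem_image, Finset.mem_singleton, Finset.mem_erase]
        constructor
        · rintro (⟨a, ⟨-, ha⟩, haa⟩ | habs)
          · rwa [← Fin.castSucc_injective d haa]
          · exact absurd habs (S7.castSucc_ne_last l)
        · intro hmem
          exact Or.inl ⟨l, ⟨hl, hmem⟩, rfl⟩
      simp only [hiff]
    · have hT := recon0 T hlast
      have hiff : Fin.castSucc l ∈ T.1 ↔ l ∈ (base T).1 := by
        rw [hT]
        simp only [Finset.mem_image]
        constructor
        · rintro ⟨a, ha, haa⟩
          rwa [← Fin.castSucc_injective d haa]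
        · intro hmem
          exact ⟨l, hmem, rfl⟩
      simp only [hiff]
  have perT_ii : ∀ T, S7.ind T.1 (Fin.castSucc c) + mark T = S7.ind (base T).1 c := by
    intro T
    by_cases hlast : Fin.last d ∈ T.1
    · obtain ⟨hc, hT⟩ := recon1 T hlast
      have hnot : Fin.castSucc c ∉ T.1 := by
        rw [hT]
        intro hmem
        rcases Finset.mem_union.1 hmem with hm | hm
        · obtain ⟨a, ha, haa⟩ := Finset.mem_image.1 hm
          have := Fin.castSucc_injective d haa
          subst this
          exact (Finset.mem_erase.1 ha).1 rfl
        · exact S7.castSucc_ne_last c (Finset.mem_singleton.1 hm)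
      rw [S7.ind_apply, if_neg hnot, S7.ind_apply, if_pos hc]
      simp [mark, hlast]
    · have hT := recon0 T hlast
      have hiff : Fin.castSucc c ∈ T.1 ↔ c ∈ (base T).1 := by
        rw [hT]
        simp only [Finset.mem_image]
        constructor
        · rintro ⟨a, ha, haa⟩
          have hac : a = c := Fin.castSucc_injective d haa
          rwa [hac] at ha
        · intro hmem
          exact ⟨c, hmem, rfl⟩
      rw [S7.ind_apply, S7.ind_apply]
      simp only [hiff]
      simp [mark, hlast]
  -- summed identities
  have sumIII : ∀ u : {T : Finset (Fin (d+1)) // (M'✶).IsBase ↑T} →₀ ℕ,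
      S7.expHom (fun T => S7.ind T.1) u (Fin.last d) = S7.kHom mark u := by
    intro u
    induction u using Finsupp.induction with
    | zero => simp
    | single_add T n f hTf hn ih =>
      rw [map_add, map_add, S7.expHom_single, S7.kHom_single, Finsupp.add_apply,
        Finsupp.smul_apply, smul_eq_mul, ih, perT_iii T]
  have sumI : ∀ u : {T : Finset (Fin (d+1)) // (M'✶).IsBase ↑T} →₀ ℕ, ∀ l : Fin d, l ≠ c →
      S7.expHom (fun T => S7.ind T.1) u (Fin.castSucc l)
        = S7.expHom (fun b => S7.ind b.1) (Finsupp.mapDomain base u) l := by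
    intro u l hl
    induction u using Finsupp.induction with
    | zero => simp [Finsupp.mapDomain_zero]
    | single_add T n f hTf hn ih =>
      rw [Finsupp.mapDomain_add, Finsupp.mapDomain_single, map_add, map_add,
        S7.expHom_single, S7.expHom_single, Finsupp.add_apply, Finsupp.add_apply,
        Finsupp.smul_apply, Finsupp.smul_apply, smul_eq_mul, smul_eq_mul, ih, perT_i T l hl]
  have sumII : ∀ u : {T : Finset (Fin (d+1)) // (M'✶).IsBase ↑T} →₀ ℕ,
      S7.expHom (fun T => S7.ind T.1) u (Fin.castSucc c) + S7.kHom mark u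
        = S7.expHom (fun b => S7.ind b.1) (Finsupp.mapDomain base u) c := by
    intro u
    induction u using Finsupp.induction with
    | zero => simp [Finsupp.mapDomain_zero]
    | single_add T n f hTf hn ih =>
      rw [Finsupp.mapDomain_add, Finsupp.mapDomain_single, map_add, map_add, map_add,
        S7.expHom_single, S7.expHom_single, S7.kHom_single, Finsupp.add_apply,
        Finsupp.add_apply, Finsupp.smul_apply, Finsupp.smul_apply, smul_eq_mul, smul_eq_mul]
      have hmul : n * (S7.ind (base T).1 c)
          = n * (S7.ind T.1 (Fin.castSucc c)) + n * (mark T) := by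
        rw [← perT_ii T]
        ring
      omega
  -- apply master
  apply S7.master (fun b => S7.ind b.1) (fun T => S7.ind T.1) base mark c
  · -- H1
    intro u v
    constructor
    · intro hev
      have hk : S7.kHom mark u = S7.kHom mark v := by
        rw [← sumIII u, ← sumIII v, hev]
      refine ⟨?_, hk⟩
      ext l
      by_cases hl : l = c
      · subst hl
        have h1 := sumII u
        have h2 := sumII v
        have h3 : S7.expHom (fun T => S7.ind T.1) u (Fin.castSucc l)
            = S7.expHom (fun T => S7.ind T.1) v (Fin.castSucc l) := by rw [hev]
        omega
      · rw [← sumI u l hl, ← sumI v l hl, hev]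
    · rintro ⟨hφ, hk⟩
      ext x
      induction x using Fin.lastCases with
      | last => rw [sumIII u, sumIII v, hk]
      | cast l =>
        by_cases hl : l = c
        · subst hl
          have h1 := sumII u
          have h2 := sumII v
          have h3 : S7.expHom (fun b => S7.ind b.1) (Finsupp.mapDomain base u) l
              = S7.expHom (fun b => S7.ind b.1) (Finsupp.mapDomain base v) l := by rw [hφ]
          omega
        · rw [sumI u l hl, sumI v l hl, hφ]
  · -- H2
    exact mark_le
  · -- H4 injectivity
    intro S T hb hm
    apply Subtype.ext
    by_cases hlS : Fin.last d ∈ S.1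
    · have hlT : Fin.last d ∈ T.1 := by
        rw [← mark_eq_one] at hlS ⊢
        rw [← hm]; exact hlS
      obtain ⟨-, h1⟩ := recon1 S hlS
      obtain ⟨-, h2⟩ := recon1 T hlT
      rw [h1, h2, hb]
    · have hlT : Fin.last d ∉ T.1 := by
        intro hlT
        rw [← mark_eq_one] at hlT hlS
        rw [hm] at hlS
        exact hlS hlT
      rw [recon0 S hlS, recon0 T hlT, hb]
  · -- H3 mate
    intro T hmT
    have hlast := (mark_eq_one T).1 hmT
    refine ⟨⟨(base T).1.image Fin.castSucc,
      (CLS _).2 (Or.inl ⟨(base T).1, (base T).2, rfl⟩)⟩, ?_, ?_⟩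
    · apply Subtype.ext
      show (if Fin.last d ∈ (base T).1.image Fin.castSucc then _ else pre ((base T).1.image Fin.castSucc)) = (base T).1
      rw [if_neg (last_not_image _), pre_image]
    · show (if Fin.last d ∈ (base T).1.image Fin.castSucc then 1 else 0) = 0
      rw [if_neg (last_not_image _)]
  · -- H5c
    intro b hbc
    have hc : c ∈ b.1 := by
      rw [S7.ind_apply] at hbc
      by_cases h : c ∈ b.1
      · exact h
      · rw [if_neg h] at hbc; omega
    refine ⟨⟨(b.1.erase c).image Fin.castSucc ∪ {Fin.last d},
      (CLS _).2 (Or.inr ⟨b.1, b.2, hc, rfl⟩)⟩, ?_, ?_⟩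
    · apply Subtype.ext
      have hlast : Fin.last d ∈ (b.1.erase c).image Fin.castSucc ∪ {Fin.last d} :=
        Finset.mem_union_right _ (Finset.mem_singleton_self _)
      show (if Fin.last d ∈ _ then insert c (pre _) else pre _) = b.1
      rw [if_pos hlast, pre_erase, Finset.insert_erase hc]
    · show (if Fin.last d ∈ (b.1.erase c).image Fin.castSucc ∪ {Fin.last d} then 1 else 0) = 1
      rw [if_pos (Finset.mem_union_right _ (Finset.mem_singleton_self _))]
  · -- H5d
    intro b
    refine ⟨⟨b.1.image Fin.castSucc, (CLS _).2 (Or.inl ⟨b.1, b.2, rfl⟩)⟩, ?_, ?_⟩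
    · apply Subtype.ext
      show (if Fin.last d ∈ b.1.image Fin.castSucc then _ else pre (b.1.image Fin.castSucc)) = b.1
      rw [if_neg (last_not_image _), pre_image]
    · show (if Fin.last d ∈ b.1.image Fin.castSucc then 1 else 0) = 0
      rw [if_neg (last_not_image _)]
  · -- H6
    intro T
    by_cases hlast : Fin.last d ∈ T.1
    · obtain ⟨hc, -⟩ := recon1 T hlast
      have : S7.ind (base T).1 c = 1 := by rw [S7.ind_apply, if_pos hc]
      rw [this]
      exact mark_le T
    · have : mark T = 0 := by simp [mark, hlast]
      rw [this]
      exact Nat.zero_le _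
  · -- H7
    intro b
    rw [S7.ind_apply]
    by_cases h : c ∈ b.1 <;> simp [h]
  · exact hGq
  · exact hGspan
end
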